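/- arXiv:1811.01342 — 9 statements merged into one kernel-verified Lean document; each statement's English description precedes it below -/
import Mathlib

section
/- Fix α, β ∈ (0,1), positive reals a, b, μ, and θ ∈ (π/2, π/(1+α)). For every nonzero complex z with |arg z| < θ one has 1 + b·z^β ≠ 0, the value g(z) = (z + a·z^{1+α}) / (μ·(1 + b·z^β)) is nonzero, and |arg g(z)| ≤ (1+α)·|arg z| < (1+α)·θ. In particular g maps the sector Σ_θ into the sector Σ_{(1+α)θ}. -/
open Complex Set

namespace OldroydAux

open Real

/-- If `w` has positive real part and `|arg w| ≤ d < π/2`, then `|im w| ≤ tan d · re w`. -/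
lemma abs_im_le_tan_mul_re {d : ℝ} (hd : d < π / 2) {w : ℂ}
    (hre : 0 < w.re) (h : |w.arg| ≤ d) : |w.im| ≤ Real.tan d * w.re := by
  have h0d : (0 : ℝ) ≤ d := le_trans (abs_nonneg _) h
  have hπ := Real.pi_pos
  have hargmem : w.arg ∈ Set.Ioo (-(π / 2)) (π / 2) := by
    obtain ⟨h1, h2⟩ := abs_le.mp h
    exact ⟨by linarith, by linarith⟩
  have hdmem : d ∈ Set.Ioo (-(π / 2)) (π / 2) := ⟨by linarith, hd⟩
  have hndmem : -d ∈ Set.Ioo (-(π / 2)) (π / 2) := ⟨by linarith, by linarith⟩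
  have htanhi : Real.tan w.arg ≤ Real.tan d :=
    Real.strictMonoOn_tan.monotoneOn hargmem hdmem (abs_le.mp h).2
  have htanlo : -Real.tan d ≤ Real.tan w.arg := by
    have := Real.strictMonoOn_tan.monotoneOn hndmem hargmem (abs_le.mp h).1
    rwa [Real.tan_neg] at this
  have htan : |Real.tan w.arg| ≤ Real.tan d := abs_le.mpr ⟨htanlo, htanhi⟩
  rw [Complex.tan_arg, abs_div, abs_of_pos hre, div_le_iff₀ hre] at htan
  linarith [htan]

/-- Sum of two complex numbers with positive real part and arg in `[-d, d]`,
`d < π/2`, stays in the sector. -/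
lemma sector_add {d : ℝ} (hd : d < π / 2) {w₁ w₂ : ℂ}
    (h₁ : 0 < w₁.re) (h₂ : 0 < w₂.re)
    (a₁ : |w₁.arg| ≤ d) (a₂ : |w₂.arg| ≤ d) :
    0 < (w₁ + w₂).re ∧ |(w₁ + w₂).arg| ≤ d := by
  have hre : 0 < (w₁ + w₂).re := by
    simp only [Complex.add_re]; linarith
  refine ⟨hre, ?_⟩
  have hb₁ := abs_im_le_tan_mul_re hd h₁ a₁
  have hb₂ := abs_im_le_tan_mul_re hd h₂ a₂
  have him : |(w₁ + w₂).im| ≤ Real.tan d * (w₁ + w₂).re := by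
    simp only [Complex.add_im, Complex.add_re]
    calc |w₁.im + w₂.im| ≤ |w₁.im| + |w₂.im| := abs_add_le _ _
      _ ≤ Real.tan d * (w₁.re + w₂.re) := by ring_nf; linarith
  have h0d : (0 : ℝ) ≤ d := le_trans (abs_nonneg _) a₁
  have hπ := Real.pi_pos
  have hne : w₁ + w₂ ≠ 0 := fun h => by simp [h] at hre
  have hargs : |(w₁ + w₂).arg| < π / 2 :=
    Complex.abs_arg_lt_pi_div_two_iff.mpr (Or.inl hre)
  by_contra hcon
  push_neg at hcon
  have hmem1 : d ∈ Set.Ioo (-(π / 2)) (π / 2) := ⟨by linarith, hd⟩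
  have hmem2 : |(w₁ + w₂).arg| ∈ Set.Ioo (-(π / 2)) (π / 2) :=
    ⟨by linarith [abs_nonneg (w₁ + w₂).arg], hargs⟩
  have htanlt : Real.tan d < Real.tan |(w₁ + w₂).arg| :=
    Real.strictMonoOn_tan hmem1 hmem2 hcon
  have habs_tan : Real.tan |(w₁ + w₂).arg| = |Real.tan (w₁ + w₂).arg| := by
    rcases le_or_gt 0 (w₁ + w₂).arg with h | h
    · rw [_root_.abs_of_nonneg h, _root_.abs_of_nonneg (Real.tan_nonneg_of_nonneg_of_le_pi_div_two h
        (le_of_lt ((abs_lt.mp hargs).2)))]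
    · rw [_root_.abs_of_neg h, Real.tan_neg, abs_of_nonpos (Real.tan_nonpos_of_nonpos_of_neg_pi_div_two_le
        h.le (le_of_lt ((abs_lt.mp hargs).1)))]
  rw [habs_tan, Complex.tan_arg, abs_div, abs_of_pos hre, lt_div_iff₀ hre] at htanlt
  nlinarith [him, htanlt]

/-- Arg after rotation by `exp (c i)`. -/
lemma arg_exp_mul_I_mul {c : ℝ} {w : ℂ} (hw : w ≠ 0)
    (h : w.arg + c ∈ Set.Ioc (-π) π) :
    (Complex.exp (c * Complex.I) * w).arg = w.arg + c := by
  have key : Complex.exp (↑c * Complex.I) * w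
      = ↑‖w‖ * Complex.exp (↑(w.arg + c) * Complex.I) := by
    conv_lhs => rw [← Complex.norm_mul_exp_arg_mul_I w]
    have : (↑(w.arg + c) : ℂ) * Complex.I = ↑c * Complex.I + ↑w.arg * Complex.I := by
      push_cast; ring
    rw [this, Complex.exp_add]; ring
  rw [key, Complex.exp_mul_I]
  exact Complex.arg_mul_cos_add_sin_mul_I (norm_pos_iff.mpr hw) h

/-- Sum of two nonzero complex numbers with args in an interval of length `< π`
inside `(-π, π]` is nonzero with arg in the same interval. -/
lemma arg_add_mem {m M : ℝ} (hm : -π < m) (hM : M ≤ π) (hw : M - m < π)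
    {w₁ w₂ : ℂ} (h₁ : w₁ ≠ 0) (h₂ : w₂ ≠ 0)
    (a₁ : w₁.arg ∈ Set.Icc m M) (a₂ : w₂.arg ∈ Set.Icc m M) :
    w₁ + w₂ ≠ 0 ∧ (w₁ + w₂).arg ∈ Set.Icc m M := by
  have hπ := Real.pi_pos
  set c : ℝ := -((m + M) / 2) with hc
  set d : ℝ := (M - m) / 2 with hdd
  have hmM : m ≤ M := le_trans a₁.1 a₁.2
  have hd : d < π / 2 := by rw [hdd]; linarith
  have hrot : ∀ w : ℂ, w ≠ 0 → w.arg ∈ Set.Icc m M →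
      (Complex.exp (↑c * Complex.I) * w).arg = w.arg + c := by
    intro w hw haw
    exact arg_exp_mul_I_mul hw ⟨by simp only [hc]; linarith [haw.1], by simp only [hc]; linarith [haw.2]⟩
  have hre : ∀ w : ℂ, w ≠ 0 → w.arg ∈ Set.Icc m M →
      0 < (Complex.exp (↑c * Complex.I) * w).re ∧
      |(Complex.exp (↑c * Complex.I) * w).arg| ≤ d := by
    intro w hw haw
    have hne : Complex.exp (↑c * Complex.I) * w ≠ 0 :=
      mul_ne_zero (Complex.exp_ne_zero _) hw
    have harg := hrot w hw haw
    have habs : |(Complex.exp (↑c * Complex.I) * w).arg| ≤ d := by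
      rw [harg, abs_le]
      constructor <;> simp only [hc, hdd] <;> [linarith [haw.1]; linarith [haw.2]]
    have hlt : |(Complex.exp (↑c * Complex.I) * w).arg| < π / 2 := lt_of_le_of_lt habs hd
    exact ⟨(Complex.abs_arg_lt_pi_div_two_iff.mp hlt).resolve_right hne, habs⟩
  obtain ⟨hre₁, habs₁⟩ := hre w₁ h₁ a₁
  obtain ⟨hre₂, habs₂⟩ := hre w₂ h₂ a₂
  obtain ⟨hres, habss⟩ := sector_add hd hre₁ hre₂ habs₁ habs₂
  rw [← mul_add] at hres habss
  have hsum_ne : w₁ + w₂ ≠ 0 := by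
    intro h0
    rw [h0, mul_zero] at hres
    simp at hres
  refine ⟨hsum_ne, ?_⟩
  have hback : (Complex.exp (↑(-c) * Complex.I) *
      (Complex.exp (↑c * Complex.I) * (w₁ + w₂))).arg
      = (Complex.exp (↑c * Complex.I) * (w₁ + w₂)).arg + (-c) := by
    apply arg_exp_mul_I_mul (mul_ne_zero (Complex.exp_ne_zero _) hsum_ne)
    obtain ⟨hl, hr⟩ := abs_le.mp habss
    constructor <;> simp only [hc, hdd] at hl hr ⊢ <;> linarith
  have hid : Complex.exp (↑(-c) * Complex.I) *
      (Complex.exp (↑c * Complex.I) * (w₁ + w₂)) = w₁ + w₂ := by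
    rw [← mul_assoc, ← Complex.exp_add]
    have : (↑(-c) : ℂ) * Complex.I + ↑c * Complex.I = 0 := by push_cast; ring
    rw [this, Complex.exp_zero, one_mul]
  rw [hid] at hback
  rw [hback]
  obtain ⟨hl, hr⟩ := abs_le.mp habss
  constructor <;> simp only [hc, hdd] at hl hr ⊢ <;> linarith

/-- Arg of a real power of a nonzero complex number. -/
lemma arg_cpow_real {z : ℂ} (hz : z ≠ 0) {s : ℝ} (h : z.arg * s ∈ Set.Ioc (-π) π) :
    (z ^ (s : ℂ)).arg = z.arg * s := by
  rw [Complex.cpow_ofReal, Complex.ofReal_cos, Complex.ofReal_sin]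
  exact Complex.arg_mul_cos_add_sin_mul_I (Real.rpow_pos_of_pos (norm_pos_iff.mpr hz) s) h

lemma cpow_real_ne_zero {z : ℂ} (hz : z ≠ 0) (s : ℝ) : z ^ (s : ℂ) ≠ 0 := by
  rw [Complex.cpow_def_of_ne_zero hz]
  exact Complex.exp_ne_zero _

end OldroydAux

/-- The symbol `g(z) = (z + a z^{1+α}) / (μ (1 + b z^β))` of the fractional
Oldroyd-B problem. Powers are principal complex powers. -/
noncomputable def oldroydSymbol (a b μ α β : ℝ) (z : ℂ) : ℂ :=
  (z + (a : ℂ) * z ^ ((1 + α : ℝ) : ℂ)) / ((μ : ℂ) * (1 + (b : ℂ) * z ^ ((β : ℝ) : ℂ)))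

set_option maxHeartbeats 2000000 in
/-- Sector-mapping part of Lemma 2.1: for `θ ∈ (π/2, π/(1+α))` and `z` in the
open sector `Σ_θ`, the denominator `1 + b z^β` does not vanish, `g(z) ≠ 0`, and
`|arg g(z)| ≤ (1+α)|arg z| < (1+α)θ`, i.e. `g` maps `Σ_θ` into `Σ_{(1+α)θ}`. -/
theorem oldroydSymbol_sector_map (α β a b μ θ : ℝ)
    (hα : α ∈ Set.Ioo (0 : ℝ) 1) (hβ : β ∈ Set.Ioo (0 : ℝ) 1)
    (ha : 0 < a) (hb : 0 < b) (hμ : 0 < μ)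
    (hθ : Real.pi / 2 < θ) (hθ' : θ < Real.pi / (1 + α))
    (z : ℂ) (hz : z ≠ 0) (hargz : |Complex.arg z| < θ) :
    1 + (b : ℂ) * z ^ ((β : ℝ) : ℂ) ≠ 0 ∧
    oldroydSymbol a b μ α β z ≠ 0 ∧
    |Complex.arg (oldroydSymbol a b μ α β z)| ≤ (1 + α) * |Complex.arg z| ∧
    (1 + α) * |Complex.arg z| < (1 + α) * θ := by
  obtain ⟨hα0, hα1⟩ := hα
  obtain ⟨hβ0, hβ1⟩ := hβ
  have hπ := Real.pi_pos
  have h1α : (0 : ℝ) < 1 + α := by linarith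
  set φ := Complex.arg z with hφdef
  have hθα : (1 + α) * θ < Real.pi := by
    rw [lt_div_iff₀ h1α] at hθ'; linarith
  have hlast : (1 + α) * |φ| < (1 + α) * θ := by nlinarith [abs_nonneg φ]
  have hLπ : (1 + α) * |φ| < Real.pi := lt_trans hlast hθα
  have hφπ : |φ| < Real.pi := by nlinarith [abs_nonneg φ]
  -- arg of z^(1+α)
  have habsα : |φ * (1 + α)| = (1 + α) * |φ| := by
    rw [abs_mul, abs_of_pos h1α]; ring
  have hargα : (z ^ ((1 + α : ℝ) : ℂ)).arg = φ * (1 + α) := by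
    apply OldroydAux.arg_cpow_real hz
    rw [← hφdef]
    constructor
    · nlinarith [neg_abs_le (φ * (1 + α)), habsα]
    · nlinarith [le_abs_self (φ * (1 + α)), habsα]
  have hw₂ne : (a : ℂ) * z ^ ((1 + α : ℝ) : ℂ) ≠ 0 :=
    mul_ne_zero (Complex.ofReal_ne_zero.mpr ha.ne') (OldroydAux.cpow_real_ne_zero hz _)
  have hw₂arg : ((a : ℂ) * z ^ ((1 + α : ℝ) : ℂ)).arg = φ * (1 + α) := by
    rw [Complex.arg_real_mul _ ha, hargα]
  -- arg of z^β
  have habsβ : |φ * β| = β * |φ| := by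
    rw [abs_mul, abs_of_pos hβ0]; ring
  have hβφ : β * |φ| ≤ |φ| := by nlinarith [abs_nonneg φ]
  have hargβ : (z ^ ((β : ℝ) : ℂ)).arg = φ * β := by
    apply OldroydAux.arg_cpow_real hz
    rw [← hφdef]
    constructor
    · nlinarith [neg_abs_le (φ * β), habsβ]
    · nlinarith [le_abs_self (φ * β), habsβ]
  have hu₂ne : (b : ℂ) * z ^ ((β : ℝ) : ℂ) ≠ 0 :=
    mul_ne_zero (Complex.ofReal_ne_zero.mpr hb.ne') (OldroydAux.cpow_real_ne_zero hz _)
  have hu₂arg : ((b : ℂ) * z ^ ((β : ℝ) : ℂ)).arg = φ * β := by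
    rw [Complex.arg_real_mul _ hb, hargβ]
  -- numerator
  have hφle : -|φ| ≤ φ := neg_abs_le φ
  have hφle' : φ ≤ |φ| := le_abs_self φ
  have hN := OldroydAux.arg_add_mem (m := min φ (φ * (1 + α))) (M := max φ (φ * (1 + α)))
    (by rw [lt_min_iff]; constructor <;> nlinarith [abs_nonneg φ])
    (by rw [max_le_iff]; constructor <;> nlinarith [abs_nonneg φ])
    (by rw [max_sub_min_eq_abs]
        have h9 : |φ * (1 + α) - φ| = α * |φ| := by
          rw [show φ * (1 + α) - φ = α * φ by ring, abs_mul, abs_of_pos hα0]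
        rw [h9]; nlinarith [abs_nonneg φ])
    hz hw₂ne
    ⟨min_le_left _ _, le_max_left _ _⟩
    (by rw [hw₂arg]; exact ⟨min_le_right _ _, le_max_right _ _⟩)
  -- denominator
  have hD := OldroydAux.arg_add_mem (m := min 0 (φ * β)) (M := max 0 (φ * β))
    (by rw [lt_min_iff]; constructor <;> nlinarith [abs_nonneg φ])
    (by rw [max_le_iff]; constructor <;> nlinarith [abs_nonneg φ])
    (by rw [max_sub_min_eq_abs, sub_zero, habsβ]; nlinarith [abs_nonneg φ])
    one_ne_zero hu₂ne
    (by rw [Complex.arg_one]; exact ⟨min_le_left _ _, le_max_left _ _⟩)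
    (by rw [hu₂arg]; exact ⟨min_le_right _ _, le_max_right _ _⟩)
  obtain ⟨hDne, hDarg⟩ := hD
  obtain ⟨hNne, hNarg⟩ := hN
  refine ⟨hDne, ?_, ?_, hlast⟩
  · exact div_ne_zero hNne (mul_ne_zero (Complex.ofReal_ne_zero.mpr hμ.ne') hDne)
  -- arg of g
  set N := z + (a : ℂ) * z ^ ((1 + α : ℝ) : ℂ) with hNdef
  set D := 1 + (b : ℂ) * z ^ ((β : ℝ) : ℂ) with hDdef
  have hgeq : oldroydSymbol a b μ α β z = ((μ⁻¹ : ℝ) : ℂ) * (N * D⁻¹) := by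
    unfold oldroydSymbol
    rw [div_eq_mul_inv, mul_inv, Complex.ofReal_inv]
    ring
  have hDargπ : D.arg ≠ Real.pi := by
    intro hcon
    have h1 : D.arg ≤ max 0 (φ * β) := hDarg.2
    have h2 : max 0 (φ * β) < Real.pi := by
      rw [max_lt_iff]; constructor <;> nlinarith [neg_abs_le (φ * β), le_abs_self (φ * β), habsβ, abs_nonneg φ]
    linarith [hcon ▸ h1]
  have hDinv : (D⁻¹).arg = -D.arg := by
    rw [Complex.arg_inv, if_neg hDargπ]
  -- range facts, split on the sign of φ
  have hkey : -((1 + α) * |φ|) ≤ N.arg - D.arg ∧ N.arg - D.arg ≤ (1 + α) * |φ| := by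
    rcases le_or_gt 0 φ with hs | hs
    · have hφ : |φ| = φ := abs_of_nonneg hs
      rw [hφ]
      have hmin : min φ (φ * (1 + α)) = φ := min_eq_left (by nlinarith)
      have hmax : max φ (φ * (1 + α)) = φ * (1 + α) := max_eq_right (by nlinarith)
      have hmin' : min 0 (φ * β) = 0 := min_eq_left (by nlinarith)
      have hmax' : max 0 (φ * β) = φ * β := max_eq_right (by nlinarith)
      rw [hmin, hmax] at hNarg
      rw [hmin', hmax'] at hDarg
      obtain ⟨n1, n2⟩ := hNarg; obtain ⟨d1, d2⟩ := hDarg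
      refine ⟨?_, by linarith⟩
      nlinarith [mul_nonneg hs (show (0:ℝ) ≤ 2 + α - β by linarith)]
    · have hφ : |φ| = -φ := abs_of_neg hs
      rw [hφ]
      have hmin : min φ (φ * (1 + α)) = φ * (1 + α) := min_eq_right (by nlinarith)
      have hmax : max φ (φ * (1 + α)) = φ := max_eq_left (by nlinarith)
      have hmin' : min 0 (φ * β) = φ * β := min_eq_right (by nlinarith)
      have hmax' : max 0 (φ * β) = 0 := max_eq_left (by nlinarith)
      rw [hmin, hmax] at hNarg
      rw [hmin', hmax'] at hDarg
      obtain ⟨n1, n2⟩ := hNarg; obtain ⟨d1, d2⟩ := hDarg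
      refine ⟨by linarith, ?_⟩
      nlinarith [mul_nonneg (neg_nonneg.mpr hs.le) (show (0:ℝ) ≤ 2 + α - β by linarith)]
  have hmul : (N * D⁻¹).arg = N.arg + (D⁻¹).arg := by
    apply Complex.arg_mul hNne (inv_ne_zero hDne)
    rw [hDinv]
    constructor
    · have := hkey.1; linarith
    · have := hkey.2; linarith
  rw [hgeq, Complex.arg_real_mul _ (inv_pos.mpr hμ), hmul, hDinv]
  rw [abs_le]
  constructor
  · have := hkey.1; linarith
  · have := hkey.2; linarith
end

section
/- Fix α, β ∈ (0,1), positive reals a, b, μ, and θ ∈ (π/2, π/(1+α)). For every nonzero complex z with |arg z| < θ, the value g(z) = (z + a·z^{1+α}) / (μ·(1 + b·z^β)) satisfies |g(z)| ≤ M_θ · μ⁻¹ · (|z| + a·|z|^{1+α}) · min{1, b⁻¹·|z|^{−β}}, where M_θ = 1/sin(π − θ). -/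
private lemma oldroyd_aux (S C X c D2 : ℝ) (h : D2 = 1 + 2 * X * c + X ^ 2)
    (hc : C ≤ c) (hX : 0 < X) (hp : S ^ 2 + C ^ 2 = 1) :
    S ^ 2 ≤ D2 ∧ (S * X) ^ 2 ≤ D2 := by
  constructor
  · nlinarith [sq_nonneg (X + C), mul_le_mul_of_nonneg_left hc hX.le]
  · nlinarith [sq_nonneg (1 + X * C), mul_le_mul_of_nonneg_left hc hX.le]

/-- Estimate (g1) of Lemma 2.1: for `z` in the open sector `Σ_θ`,
`|g(z)| ≤ M_θ μ⁻¹ (|z| + a|z|^{1+α}) min{1, b⁻¹ |z|^{-β}}` with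
`M_θ = 1 / sin (π - θ)`. -/
theorem oldroydSymbol_upper_bound (α β a b μ θ : ℝ)
    (hα : α ∈ Set.Ioo (0 : ℝ) 1) (hβ : β ∈ Set.Ioo (0 : ℝ) 1)
    (ha : 0 < a) (hb : 0 < b) (hμ : 0 < μ)
    (hθ : Real.pi / 2 < θ) (hθ' : θ < Real.pi / (1 + α))
    (z : ℂ) (hz : z ≠ 0) (hargz : |Complex.arg z| < θ) :
    ‖oldroydSymbol a b μ α β z‖ ≤
      (1 / Real.sin (Real.pi - θ)) * μ⁻¹ *
        (‖z‖ + a * ‖z‖ ^ (1 + α)) *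
        min 1 (b⁻¹ * ‖z‖ ^ (-β)) := by
  obtain ⟨hα0, hα1⟩ := hα
  obtain ⟨hβ0, hβ1⟩ := hβ
  have hπpos := Real.pi_pos
  have hπ : θ < Real.pi := by
    refine lt_of_lt_of_le hθ' ?_
    rw [div_le_iff₀ (by linarith)]
    nlinarith
  have hθ0 : 0 < θ := lt_trans (by positivity) hθ
  have hsin : 0 < Real.sin θ := Real.sin_pos_of_pos_of_lt_pi hθ0 hπ
  set r := ‖z‖ with hr
  have hr0 : 0 < r := norm_pos_iff.mpr hz
  set s := r ^ β with hs
  have hs0 : 0 < s := Real.rpow_pos_of_pos hr0 β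
  set W := z ^ ((β : ℝ) : ℂ) with hW
  have hWabs : ‖W‖ = s := by
    rw [hW, Complex.norm_cpow_of_ne_zero hz]
    simp [hs, hr]
  have hWre : W.re = s * Real.cos (β * Complex.arg z) := by
    rw [hW, Complex.cpow_def_of_ne_zero hz, Complex.exp_re]
    simp only [Complex.mul_re, Complex.mul_im, Complex.ofReal_re, Complex.ofReal_im,
      Complex.log_re, Complex.log_im, mul_zero, sub_zero, zero_mul, add_zero, zero_add]
    rw [hs, Real.rpow_def_of_pos hr0]
    ring_nf
    rw [hr]
    ring
  have hc : Real.cos θ ≤ Real.cos (β * Complex.arg z) := by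
    rw [← Real.cos_abs (β * Complex.arg z)]
    apply Real.cos_le_cos_of_nonneg_of_le_pi (abs_nonneg _) (le_of_lt hπ)
    rw [abs_mul, abs_of_pos hβ0]
    nlinarith [abs_nonneg (Complex.arg z)]
  set D := ‖1 + (b : ℂ) * W‖ with hD
  have hD0 : 0 ≤ D := norm_nonneg _
  have hWsq : W.re ^ 2 + W.im ^ 2 = s ^ 2 := by
    have := Complex.sq_norm W
    rw [hWabs, Complex.normSq_apply] at this
    nlinarith
  have hD2 : D ^ 2 = 1 + 2 * b * W.re + b ^ 2 * s ^ 2 := by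
    have := Complex.sq_norm (1 + (b : ℂ) * W)
    rw [Complex.normSq_apply] at this
    simp only [Complex.add_re, Complex.add_im, Complex.one_re, Complex.one_im,
      Complex.mul_re, Complex.mul_im, Complex.ofReal_re, Complex.ofReal_im,
      zero_mul, mul_zero, sub_zero, zero_add] at this
    rw [← hD] at this
    nlinarith
  have hpyth := Real.sin_sq_add_cos_sq θ
  have hbs : 0 < b * s := mul_pos hb hs0
  have hD2' : D ^ 2 = 1 + 2 * (b * s) * Real.cos (β * Complex.arg z) + (b * s) ^ 2 := by
    rw [hD2, hWre]; ring
  obtain ⟨hq1, hq2⟩ := oldroyd_aux (Real.sin θ) (Real.cos θ) (b * s)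
    (Real.cos (β * Complex.arg z)) (D ^ 2) hD2' hc hbs hpyth
  have hD1 : Real.sin θ ≤ D :=
    (pow_le_pow_iff_left₀ hsin.le hD0 two_ne_zero).mp hq1
  have hD3 : Real.sin θ * (b * s) ≤ D :=
    (pow_le_pow_iff_left₀ (by positivity) hD0 two_ne_zero).mp hq2
  have hDpos : 0 < D := lt_of_lt_of_le hsin hD1
  have hXabs : ‖z ^ ((1 + α : ℝ) : ℂ)‖ = r ^ (1 + α) := by
    rw [Complex.norm_cpow_of_ne_zero hz]
    simp [hr]
  set N := r + a * r ^ (1 + α) with hN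
  have hN0 : 0 ≤ N := by positivity
  have hnum : ‖z + (a : ℂ) * z ^ ((1 + α : ℝ) : ℂ)‖ ≤ N := by
    refine le_trans (norm_add_le _ _) ?_
    rw [norm_mul, Complex.norm_real, Real.norm_eq_abs, abs_of_pos ha, hXabs, hN, hr]
  have habsg : ‖oldroydSymbol a b μ α β z‖
      = ‖z + (a : ℂ) * z ^ ((1 + α : ℝ) : ℂ)‖ / (μ * D) := by
    rw [oldroydSymbol, norm_div, norm_mul, Complex.norm_real, Real.norm_eq_abs, abs_of_pos hμ, hD]
  have hsin' : Real.sin (Real.pi - θ) = Real.sin θ := Real.sin_pi_sub θ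
  have hrneg : r ^ (-β) = s⁻¹ := by
    rw [Real.rpow_neg hr0.le, hs]
  clear_value r s W D N
  rw [habsg, hsin', hrneg]
  have hmin : (1 / Real.sin θ * μ⁻¹ * N) * min 1 (b⁻¹ * s⁻¹)
      = min ((1 / Real.sin θ * μ⁻¹ * N) * 1) ((1 / Real.sin θ * μ⁻¹ * N) * (b⁻¹ * s⁻¹)) := by
    rw [mul_min_of_nonneg]
    positivity
  rw [hmin]
  refine le_min ?_ ?_
  · have h1 : ‖z + (a : ℂ) * z ^ ((1 + α : ℝ) : ℂ)‖ / (μ * D)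
        ≤ N / (μ * Real.sin θ) := by
      apply div_le_div₀ hN0 hnum (by positivity)
      exact mul_le_mul_of_nonneg_left hD1 hμ.le
    refine h1.trans_eq ?_
    rw [mul_one, div_eq_mul_inv, mul_inv]
    ring
  · have h1 : ‖z + (a : ℂ) * z ^ ((1 + α : ℝ) : ℂ)‖ / (μ * D)
        ≤ N / (μ * (Real.sin θ * (b * s))) := by
      apply div_le_div₀ hN0 hnum (by positivity)
      exact mul_le_mul_of_nonneg_left hD3 hμ.le
    refine h1.trans_eq ?_
    rw [div_eq_mul_inv, mul_inv, mul_inv, mul_inv]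
    ring
end

section
/- Fix α, β ∈ (0,1), positive reals a, b, μ, and θ ∈ (π/2, π/(1+α)). For every nonzero complex z with |arg z| < θ and every real λ ≥ 0, one has g(z) + λ ≠ 0 and |g(z)| / |g(z) + λ| ≤ 1 / sin(π − (1+α)θ), where g(z) = (z + a·z^{1+α}) / (μ·(1 + b·z^β)). -/
/-- `|sin y| = sin |y|` for `|y| ≤ π`. -/
lemma abs_sin_eq_sin_abs {y : ℝ} (h : |y| ≤ Real.pi) : |Real.sin y| = Real.sin |y| := by
  rcases le_or_gt 0 y with hy | hy
  · rw [_root_.abs_of_nonneg hy] at h ⊢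
    rw [_root_.abs_of_nonneg (Real.sin_nonneg_of_nonneg_of_le_pi hy h)]
  · rw [abs_of_neg hy] at h ⊢
    rw [Real.sin_neg]
    rw [_root_.abs_of_nonpos (Real.sin_nonpos_of_nonpos_of_neg_pi_le hy.le (by linarith))]

set_option maxHeartbeats 1000000 in
/-- Sector lemma: a sum of four terms `cᵢ e^{i kᵢ t}` with nonnegative
coefficients, `kᵢ ∈ [0, K]`, `K |t| ≤ φ < π` and positive total mass is
nonzero and satisfies `cos φ · |w| ≤ Re w`. -/
lemma sector4 (c₁ c₂ c₃ c₄ k₁ k₂ k₃ k₄ t K φ : ℝ) (w : ℂ)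
    (hw : w = (c₁ : ℂ) * Complex.exp ((k₁ * t : ℝ) * Complex.I)
            + (c₂ : ℂ) * Complex.exp ((k₂ * t : ℝ) * Complex.I)
            + (c₃ : ℂ) * Complex.exp ((k₃ * t : ℝ) * Complex.I)
            + (c₄ : ℂ) * Complex.exp ((k₄ * t : ℝ) * Complex.I))
    (hc₁ : 0 ≤ c₁) (hc₂ : 0 ≤ c₂) (hc₃ : 0 ≤ c₃) (hc₄ : 0 ≤ c₄)
    (hk₁ : k₁ ∈ Set.Icc 0 K) (hk₂ : k₂ ∈ Set.Icc 0 K)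
    (hk₃ : k₃ ∈ Set.Icc 0 K) (hk₄ : k₄ ∈ Set.Icc 0 K)
    (hpos : 0 < c₁ + c₂ + c₃ + c₄)
    (hK : K * |t| ≤ φ) (hφ : φ < Real.pi) :
    w ≠ 0 ∧ Real.cos φ * ‖w‖ ≤ w.re := by
  have hK0 : 0 ≤ K := le_trans hk₁.1 hk₁.2
  obtain ⟨d, hd_def⟩ : ∃ d : ℝ, d = K * |t| / 2 := ⟨_, rfl⟩
  have hd0 : 0 ≤ d := by rw [hd_def]; positivity
  have hd2 : 2 * d ≤ φ := by rw [hd_def]; linarith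
  have hφ0 : 0 ≤ φ := by linarith
  have hdπ : d < Real.pi / 2 := by linarith
  have hcosd : 0 < Real.cos d := Real.cos_pos_of_mem_Ioo ⟨by linarith, hdπ⟩
  obtain ⟨m, hm_def⟩ : ∃ m : ℝ, m = K * t / 2 := ⟨_, rfl⟩
  have hmd : |m| = d := by
    rw [hm_def, hd_def, abs_div, abs_mul, _root_.abs_of_nonneg hK0]
    norm_num
  -- angle bounds
  have habs_y : ∀ k : ℝ, k ∈ Set.Icc 0 K → |k * t - m| ≤ d := by
    intro k hk
    have h1 : k * t - m = (k - K / 2) * t := by rw [hm_def]; ring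
    rw [h1, abs_mul]
    have h2 : |k - K / 2| ≤ K / 2 := abs_le.mpr ⟨by linarith [hk.1], by linarith [hk.2]⟩
    calc |k - K / 2| * |t| ≤ (K / 2) * |t| :=
          mul_le_mul_of_nonneg_right h2 (abs_nonneg t)
      _ = d := by rw [hd_def]; ring
  have hcos_y : ∀ y : ℝ, |y| ≤ d → Real.cos d ≤ Real.cos y := by
    intro y hy
    rw [← Real.cos_abs y]
    exact Real.cos_le_cos_of_nonneg_of_le_pi (abs_nonneg y) (by linarith [Real.pi_pos]) hy
  have hsin_y : ∀ y : ℝ, |y| ≤ d → |Real.sin y| * Real.cos d ≤ Real.sin d * Real.cos y := by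
    intro y hy
    have h1 : |Real.sin y| = Real.sin |y| := abs_sin_eq_sin_abs (by linarith [Real.pi_pos])
    have h2 : Real.sin (|y| - d) ≤ 0 :=
      Real.sin_nonpos_of_nonpos_of_neg_pi_le (by linarith) (by linarith [abs_nonneg y, Real.pi_pos])
    rw [Real.sin_sub] at h2
    rw [h1, ← Real.cos_abs y]
    nlinarith
  -- the rotated sum
  obtain ⟨w', hw'def⟩ : ∃ w' : ℂ, w' = w * Complex.exp ((-m : ℝ) * Complex.I) := ⟨_, rfl⟩
  have hE : ∀ x : ℝ, Complex.exp ((x : ℝ) * Complex.I) * Complex.exp ((-m : ℝ) * Complex.I)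
      = Complex.exp (((x - m : ℝ) : ℂ) * Complex.I) := by
    intro x
    rw [← Complex.exp_add]
    push_cast
    ring_nf
  have hw' : w' = (c₁ : ℂ) * Complex.exp ((k₁ * t - m : ℝ) * Complex.I)
      + (c₂ : ℂ) * Complex.exp ((k₂ * t - m : ℝ) * Complex.I)
      + (c₃ : ℂ) * Complex.exp ((k₃ * t - m : ℝ) * Complex.I)
      + (c₄ : ℂ) * Complex.exp ((k₄ * t - m : ℝ) * Complex.I) := by
    rw [hw'def, hw, add_mul, add_mul, add_mul, mul_assoc, mul_assoc, mul_assoc, mul_assoc,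
      hE, hE, hE, hE]
  have hre : w'.re = c₁ * Real.cos (k₁ * t - m) + c₂ * Real.cos (k₂ * t - m)
      + c₃ * Real.cos (k₃ * t - m) + c₄ * Real.cos (k₄ * t - m) := by
    rw [hw']
    simp only [Complex.add_re, Complex.re_ofReal_mul, Complex.exp_ofReal_mul_I_re]
  have him : w'.im = c₁ * Real.sin (k₁ * t - m) + c₂ * Real.sin (k₂ * t - m)
      + c₃ * Real.sin (k₃ * t - m) + c₄ * Real.sin (k₄ * t - m) := by
    rw [hw']
    simp only [Complex.add_im, Complex.im_ofReal_mul, Complex.exp_ofReal_mul_I_im]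
  have hb₁ := habs_y k₁ hk₁
  have hb₂ := habs_y k₂ hk₂
  have hb₃ := habs_y k₃ hk₃
  have hb₄ := habs_y k₄ hk₄
  have hR : (c₁ + c₂ + c₃ + c₄) * Real.cos d ≤ w'.re := by
    have t₁ := mul_le_mul_of_nonneg_left (hcos_y _ hb₁) hc₁
    have t₂ := mul_le_mul_of_nonneg_left (hcos_y _ hb₂) hc₂
    have t₃ := mul_le_mul_of_nonneg_left (hcos_y _ hb₃) hc₃
    have t₄ := mul_le_mul_of_nonneg_left (hcos_y _ hb₄) hc₄
    rw [hre]; nlinarith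
  have hRpos : 0 < w'.re := lt_of_lt_of_le (mul_pos hpos hcosd) hR
  have hIabs : |w'.im| ≤ c₁ * |Real.sin (k₁ * t - m)| + c₂ * |Real.sin (k₂ * t - m)|
      + c₃ * |Real.sin (k₃ * t - m)| + c₄ * |Real.sin (k₄ * t - m)| := by
    rw [him]
    calc |c₁ * Real.sin (k₁ * t - m) + c₂ * Real.sin (k₂ * t - m)
          + c₃ * Real.sin (k₃ * t - m) + c₄ * Real.sin (k₄ * t - m)|
        ≤ |c₁ * Real.sin (k₁ * t - m) + c₂ * Real.sin (k₂ * t - m)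
          + c₃ * Real.sin (k₃ * t - m)| + |c₄ * Real.sin (k₄ * t - m)| := abs_add_le _ _
      _ ≤ (|c₁ * Real.sin (k₁ * t - m) + c₂ * Real.sin (k₂ * t - m)|
          + |c₃ * Real.sin (k₃ * t - m)|) + |c₄ * Real.sin (k₄ * t - m)| :=
          add_le_add_left (abs_add_le _ _) _
      _ ≤ ((|c₁ * Real.sin (k₁ * t - m)| + |c₂ * Real.sin (k₂ * t - m)|)
          + |c₃ * Real.sin (k₃ * t - m)|) + |c₄ * Real.sin (k₄ * t - m)| :=
          add_le_add_left (add_le_add_left (abs_add_le _ _) _) _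
      _ = c₁ * |Real.sin (k₁ * t - m)| + c₂ * |Real.sin (k₂ * t - m)|
          + c₃ * |Real.sin (k₃ * t - m)| + c₄ * |Real.sin (k₄ * t - m)| := by
          rw [abs_mul, abs_mul, abs_mul, abs_mul, _root_.abs_of_nonneg hc₁,
            _root_.abs_of_nonneg hc₂, _root_.abs_of_nonneg hc₃, _root_.abs_of_nonneg hc₄]
  have hI : |w'.im| * Real.cos d ≤ Real.sin d * w'.re := by
    have s₁ := mul_le_mul_of_nonneg_left (hsin_y _ hb₁) hc₁
    have s₂ := mul_le_mul_of_nonneg_left (hsin_y _ hb₂) hc₂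
    have s₃ := mul_le_mul_of_nonneg_left (hsin_y _ hb₃) hc₃
    have s₄ := mul_le_mul_of_nonneg_left (hsin_y _ hb₄) hc₄
    have base := mul_le_mul_of_nonneg_right hIabs hcosd.le
    rw [hre]
    nlinarith
  constructor
  · intro h
    rw [h, zero_mul] at hw'def
    rw [hw'def] at hRpos
    simp at hRpos
  -- the main bound
  obtain ⟨x, hxdef⟩ : ∃ x : ℝ, x = |w'.im| / w'.re := ⟨_, rfl⟩
  have hx0 : 0 ≤ x := hxdef ▸ div_nonneg (abs_nonneg _) hRpos.le
  have hxt : x ≤ Real.tan d := by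
    rw [Real.tan_eq_sin_div_cos, hxdef]
    exact (div_le_div_iff₀ hRpos hcosd).mpr (by linarith)
  have hψd : Real.arctan x ≤ d := by
    have h1 : Real.arctan x ≤ Real.arctan (Real.tan d) :=
      Real.arctan_strictMono.monotone hxt
    rwa [Real.arctan_tan (by linarith) hdπ] at h1
  have hψ0 : 0 ≤ Real.arctan x := by
    have := Real.arctan_strictMono.monotone hx0
    rwa [Real.arctan_zero] at this
  have hs0 : 0 < Real.sqrt (1 + x ^ 2) := Real.sqrt_pos.mpr (by positivity)
  have hIx : |w'.im| = x * w'.re := by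
    rw [hxdef]; field_simp
  have habsw' : ‖w'‖ = w'.re * Real.sqrt (1 + x ^ 2) := by
    rw [Complex.norm_def, Complex.normSq_apply]
    have him2 : w'.im * w'.im = (x * w'.re) ^ 2 := by
      have h3 : w'.im ^ 2 = |w'.im| ^ 2 := (sq_abs _).symm
      rw [← sq, h3, hIx]
    rw [him2, show w'.re * w'.re + (x * w'.re) ^ 2 = (w'.re) ^ 2 * (1 + x ^ 2) by ring,
      Real.sqrt_mul (sq_nonneg _), Real.sqrt_sq hRpos.le]
  have key1 : Real.cos φ ≤ Real.cos (d + Real.arctan x) :=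
    Real.cos_le_cos_of_nonneg_of_le_pi (by linarith) hφ.le (by linarith)
  have key2 : Real.cos (d + Real.arctan x) * Real.sqrt (1 + x ^ 2)
      = Real.cos d - Real.sin d * x := by
    rw [Real.cos_add, Real.cos_arctan, Real.sin_arctan]
    field_simp
  have hww : w = w' * Complex.exp ((m : ℝ) * Complex.I) := by
    rw [hw'def, mul_assoc, ← Complex.exp_add]
    have : ((-m : ℝ) : ℂ) * Complex.I + (m : ℝ) * Complex.I = 0 := by
      push_cast; ring
    rw [this, Complex.exp_zero, mul_one]
  have habsw : ‖w‖ = ‖w'‖ := by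
    rw [hww, norm_mul, Complex.norm_exp_ofReal_mul_I, mul_one]
  have hwre : w.re = w'.re * Real.cos m - w'.im * Real.sin m := by
    rw [hww, Complex.mul_re, Complex.exp_ofReal_mul_I_re, Complex.exp_ofReal_mul_I_im]
  have hcosm : Real.cos m = Real.cos d := by rw [← Real.cos_abs, hmd]
  have hsinmI : w'.im * Real.sin m ≤ Real.sin d * |w'.im| := by
    have h1 : w'.im * Real.sin m ≤ |w'.im * Real.sin m| := le_abs_self _
    have h2 : |Real.sin m| = Real.sin d := by
      rw [abs_sin_eq_sin_abs (by rw [hmd]; linarith [Real.pi_pos]), hmd]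
    rw [abs_mul, h2] at h1
    linarith [h1]
  calc Real.cos φ * ‖w‖ = Real.cos φ * (w'.re * Real.sqrt (1 + x ^ 2)) := by
        rw [habsw, habsw']
    _ ≤ Real.cos (d + Real.arctan x) * (w'.re * Real.sqrt (1 + x ^ 2)) :=
        mul_le_mul_of_nonneg_right key1 (by positivity)
    _ = (Real.cos (d + Real.arctan x) * Real.sqrt (1 + x ^ 2)) * w'.re := by ring
    _ = (Real.cos d - Real.sin d * x) * w'.re := by rw [key2]
    _ = Real.cos d * w'.re - Real.sin d * (x * w'.re) := by ring
    _ = Real.cos d * w'.re - Real.sin d * |w'.im| := by rw [← hIx]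
    _ ≤ Real.cos d * w'.re - w'.im * Real.sin m := by linarith [hsinmI]
    _ = w.re := by rw [hwre, hcosm]; ring

/-- Scalar form of the uniform bound `‖G(z)‖ ≤ M_θ̄` on
`G(z) = g(z) (g(z)I + A)⁻¹`: for `z ∈ Σ_θ` and `λ ≥ 0`, `g(z) + λ ≠ 0` and
`|g(z)| / |g(z) + λ| ≤ 1 / sin (π - (1+α)θ)`. -/
theorem oldroydSymbol_resolvent_bound (α β a b μ θ : ℝ)
    (hα : α ∈ Set.Ioo (0 : ℝ) 1) (hβ : β ∈ Set.Ioo (0 : ℝ) 1)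
    (ha : 0 < a) (hb : 0 < b) (hμ : 0 < μ)
    (hθ : Real.pi / 2 < θ) (hθ' : θ < Real.pi / (1 + α))
    (z : ℂ) (hz : z ≠ 0) (hargz : |Complex.arg z| < θ)
    (lam : ℝ) (hlam : 0 ≤ lam) :
    oldroydSymbol a b μ α β z + (lam : ℂ) ≠ 0 ∧
    ‖oldroydSymbol a b μ α β z‖ /
        ‖oldroydSymbol a b μ α β z + (lam : ℂ)‖ ≤
      1 / Real.sin (Real.pi - (1 + α) * θ) := by
  obtain ⟨hα0, hα1⟩ := hα
  obtain ⟨hβ0, hβ1⟩ := hβ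
  have hα1' : (0 : ℝ) < 1 + α := by linarith
  obtain ⟨r, hrdef⟩ : ∃ r : ℝ, r = ‖z‖ := ⟨_, rfl⟩
  have hr : 0 < r := hrdef ▸ norm_pos_iff.mpr hz
  obtain ⟨t, htdef⟩ : ∃ t : ℝ, t = Complex.arg z := ⟨_, rfl⟩
  obtain ⟨φ, hφdef⟩ : ∃ φ : ℝ, φ = (1 + α) * θ := ⟨_, rfl⟩
  have hφπ : φ < Real.pi := by
    rw [lt_div_iff₀ hα1'] at hθ'
    rw [hφdef]; linarith
  have hθ0 : 0 < θ := by linarith [Real.pi_pos]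
  have hφ2 : Real.pi / 2 < φ := by rw [hφdef]; nlinarith
  have hsinφ : 0 < Real.sin φ :=
    Real.sin_pos_of_pos_of_lt_pi (by linarith [Real.pi_pos]) hφπ
  have hK : (1 + α) * |t| ≤ φ := by
    rw [hφdef, htdef]
    exact mul_le_mul_of_nonneg_left hargz.le hα1'.le
  -- polar form of real powers
  have hpow : ∀ s : ℝ, z ^ (s : ℂ)
      = ((r ^ s : ℝ) : ℂ) * Complex.exp (((s * t : ℝ) : ℂ) * Complex.I) := by
    intro s
    rw [Complex.cpow_ofReal, Complex.exp_mul_I, mul_comm (Complex.arg z) s, hrdef, htdef]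
    push_cast [Complex.ofReal_cos, Complex.ofReal_sin]
    rfl
  have hzpolar : z = ((r ^ (1 : ℝ) : ℝ) : ℂ) * Complex.exp (((1 * t : ℝ) : ℂ) * Complex.I) := by
    have h1 := hpow 1
    rwa [show ((1 : ℝ) : ℂ) = (1 : ℂ) by norm_num, Complex.cpow_one] at h1
  have hr1 : (r ^ (1 : ℝ) : ℝ) = r := Real.rpow_one r
  obtain ⟨N, hNdef⟩ : ∃ N : ℂ, N = z + (a : ℂ) * z ^ ((1 + α : ℝ) : ℂ) := ⟨_, rfl⟩
  obtain ⟨D, hDdef⟩ : ∃ D : ℂ, D = 1 + (b : ℂ) * z ^ ((β : ℝ) : ℂ) := ⟨_, rfl⟩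
  have hN2 : N = ((r : ℝ) : ℂ) * Complex.exp (((1 * t : ℝ) : ℂ) * Complex.I)
      + ((a * r ^ ((1 : ℝ) + α) : ℝ) : ℂ) * Complex.exp ((((1 + α) * t : ℝ) : ℂ) * Complex.I) := by
    rw [hNdef, hpow (1 + α), ← hr1]
    nth_rewrite 1 [hzpolar]
    push_cast
    ring
  have hD2 : D = 1 + ((b * r ^ (β : ℝ) : ℝ) : ℂ) * Complex.exp (((β * t : ℝ) : ℂ) * Complex.I) := by
    rw [hDdef, hpow β]
    push_cast
    ring
  -- conjugation
  have hconjE : ∀ x : ℝ, (starRingEnd ℂ) (Complex.exp ((x : ℝ) * Complex.I))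
      = Complex.exp (((-x : ℝ) : ℂ) * Complex.I) := by
    intro x
    rw [← Complex.exp_conj]
    congr 1
    simp only [map_mul, Complex.conj_ofReal, Complex.conj_I]
    push_cast
    ring
  have hDconj : (starRingEnd ℂ) D
      = 1 + ((b * r ^ (β : ℝ) : ℝ) : ℂ) * Complex.exp (((-(β * t) : ℝ) : ℂ) * Complex.I) := by
    rw [hD2, map_add, map_one, map_mul, Complex.conj_ofReal, hconjE]
  -- product of two terms in polar form
  have hterm : ∀ c₁ c₂ x₁ x₂ : ℝ,
      ((c₁ : ℂ) * Complex.exp ((x₁ : ℝ) * Complex.I))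
        * ((c₂ : ℂ) * Complex.exp ((x₂ : ℝ) * Complex.I))
      = ((c₁ * c₂ : ℝ) : ℂ) * Complex.exp (((x₁ + x₂ : ℝ) : ℂ) * Complex.I) := by
    intro c₁ c₂ x₁ x₂
    rw [mul_mul_mul_comm, ← Complex.ofReal_mul, ← Complex.exp_add]
    congr 2
    push_cast
    ring
  obtain ⟨P, hPdef⟩ : ∃ P : ℂ, P = N * (starRingEnd ℂ) D := ⟨_, rfl⟩
  have hP4 : P = ((r : ℝ) : ℂ) * Complex.exp (((1 * t : ℝ) : ℂ) * Complex.I)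
      + ((a * r ^ ((1 : ℝ) + α) : ℝ) : ℂ) * Complex.exp ((((1 + α) * t : ℝ) : ℂ) * Complex.I)
      + ((r * (b * r ^ (β : ℝ)) : ℝ) : ℂ) * Complex.exp ((((1 - β) * t : ℝ) : ℂ) * Complex.I)
      + ((a * r ^ ((1 : ℝ) + α) * (b * r ^ (β : ℝ)) : ℝ) : ℂ)
          * Complex.exp ((((1 + α - β) * t : ℝ) : ℂ) * Complex.I) := by
    rw [hPdef, hN2, hDconj]
    rw [show ∀ A B C : ℂ, (A + B) * (1 + C) = A + B + A * C + B * C from fun A B C => by ring]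
    rw [hterm, hterm]
    rw [show (1 * t + -(β * t) : ℝ) = (1 - β) * t by ring,
      show ((1 + α) * t + -(β * t) : ℝ) = (1 + α - β) * t by ring]
  have hPfacts := sector4 r (a * r ^ ((1 : ℝ) + α)) (r * (b * r ^ (β : ℝ)))
    (a * r ^ ((1 : ℝ) + α) * (b * r ^ (β : ℝ))) 1 (1 + α) (1 - β) (1 + α - β) t (1 + α) φ P hP4
    hr.le (by positivity) (by positivity) (by positivity)
    ⟨by norm_num, by linarith⟩ ⟨by linarith, le_rfl⟩
    ⟨by linarith, by linarith⟩ ⟨by linarith, by linarith⟩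
    (by positivity) hK hφπ
  obtain ⟨hPne, hPre⟩ := hPfacts
  -- D is nonzero
  have hDfacts := sector4 1 (b * r ^ (β : ℝ)) 0 0 0 β 0 0 t (1 + α) φ D
    (by rw [hD2]; push_cast; simp)
    zero_le_one (by positivity) le_rfl le_rfl
    ⟨le_rfl, hα1'.le⟩ ⟨hβ0.le, by linarith⟩ ⟨le_rfl, hα1'.le⟩ ⟨le_rfl, hα1'.le⟩
    (by positivity) hK hφπ
  have hDne : D ≠ 0 := hDfacts.1
  have hnormDpos : 0 < Complex.normSq D := Complex.normSq_pos.mpr hDne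
  have hc : 0 < μ * Complex.normSq D := mul_pos hμ hnormDpos
  -- express g in terms of P
  obtain ⟨g, hg⟩ : ∃ g : ℂ, g = oldroydSymbol a b μ α β z := ⟨_, rfl⟩
  have hDconj_ne : (starRingEnd ℂ) D ≠ 0 := by
    simpa using hDne
  have hgP : g = P / (((μ * Complex.normSq D : ℝ)) : ℂ) := by
    rw [hg, oldroydSymbol, ← hNdef, ← hDdef]
    calc N / ((μ : ℂ) * D) = (N * (starRingEnd ℂ) D) / (((μ : ℂ) * D) * (starRingEnd ℂ) D) :=
          (mul_div_mul_right _ _ hDconj_ne).symm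
      _ = P / (((μ * Complex.normSq D : ℝ)) : ℂ) := by
          rw [← hPdef, mul_assoc, Complex.mul_conj]
          norm_cast
  have hgre : g.re = P.re / (μ * Complex.normSq D) := by
    rw [hgP, Complex.div_ofReal_re]
  have hgabs : ‖g‖ = ‖P‖ / (μ * Complex.normSq D) := by
    rw [hgP, norm_div, Complex.norm_real, Real.norm_eq_abs, _root_.abs_of_pos hc]
  have hg_ne : g ≠ 0 := by
    rw [hgP]
    exact div_ne_zero hPne (Complex.ofReal_ne_zero.mpr (ne_of_gt hc))
  have hg_re : Real.cos φ * ‖g‖ ≤ g.re := by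
    rw [hgre, hgabs, ← mul_div_assoc]
    exact (div_le_div_iff_of_pos_right hc).mpr hPre
  -- the quadratic estimate
  have hA : 0 < ‖g‖ := norm_pos_iff.mpr hg_ne
  have hnq : Complex.normSq (g + (lam : ℂ)) = (g.re + lam) ^ 2 + g.im ^ 2 := by
    simp only [Complex.normSq_apply, Complex.add_re, Complex.add_im, Complex.ofReal_re,
      Complex.ofReal_im, add_zero]
    ring
  have hA2 : (‖g‖) ^ 2 = g.re ^ 2 + g.im ^ 2 := by
    rw [Complex.sq_norm, Complex.normSq_apply]
    ring
  have hsq : (Real.sin φ * ‖g‖) ^ 2 ≤ (‖g + (lam : ℂ)‖) ^ 2 := by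
    rw [Complex.sq_norm, hnq]
    have hpyth := Real.sin_sq_add_cos_sq φ
    have hlg := mul_le_mul_of_nonneg_left hg_re hlam
    nlinarith [sq_nonneg (lam + Real.cos φ * ‖g‖), hA.le]
  have hkey : Real.sin φ * ‖g‖ ≤ ‖g + (lam : ℂ)‖ := by
    have h1 : 0 ≤ Real.sin φ * ‖g‖ := by positivity
    have h2 := Real.sqrt_le_sqrt hsq
    rwa [Real.sqrt_sq h1, Real.sqrt_sq (norm_nonneg _)] at h2
  have habs_pos : 0 < ‖g + (lam : ℂ)‖ :=
    lt_of_lt_of_le (by positivity) hkey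
  rw [← hg]
  constructor
  · intro h
    rw [h] at habs_pos
    simp at habs_pos
  · rw [Real.sin_pi_sub, ← hφdef, div_le_div_iff₀ habs_pos hsinφ, one_mul]
    linarith [mul_comm (‖g‖) (Real.sin φ) ▸ hkey]
end

section
/- Fix α, β ∈ (0,1), positive reals a, b, μ, and θ ∈ (π/2, π/(1+α)). For every nonzero complex z with |arg z| < θ, the value g(z) = (z + a·z^{1+α}) / (μ·(1 + b·z^β)) is nonzero and satisfies |1/g(z)| ≤ M_θ · μ · (|z|^{−1} + b·|z|^{β−1}) · min{1, |z|^{−α}/a}, where M_θ = 1/sin(π − θ). -/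
open Complex Real

/-- Polar form of a principal complex power with real exponent. -/
lemma cpow_real_polar (z : ℂ) (hz : z ≠ 0) (s : ℝ) :
    z ^ (s : ℂ) = ((‖z‖ ^ s : ℝ) : ℂ) *
      Complex.exp (((s * Complex.arg z : ℝ) : ℂ) * Complex.I) := by
  rw [Complex.cpow_def_of_ne_zero hz, Complex.log]
  rw [show (↑(Real.log (‖z‖)) + ↑(Complex.arg z) * Complex.I) * (s : ℂ)
      = ((Real.log (‖z‖) * s : ℝ) : ℂ) + ((s * Complex.arg z : ℝ) : ℂ) * Complex.I by
    push_cast; ring]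
  rw [Complex.exp_add, ← Complex.ofReal_exp]
  congr 1
  rw [Real.rpow_def_of_pos ((norm_pos_iff.mpr hz))]

/-- Geometric lemma: if `w` is either in the right half plane or has
`|Im w| ≥ |w| sin δ`, then `|1 + w| ≥ max 1 |w| · sin δ`. -/
lemma sector_lb (w : ℂ) (δ : ℝ) (hδ0 : 0 < Real.sin δ) (hδ1 : Real.sin δ ≤ 1)
    (h : 0 ≤ w.re ∨ ‖w‖ * Real.sin δ ≤ |w.im|) :
    max 1 (‖w‖) * Real.sin δ ≤ ‖1 + w‖ := by
  have hre : (1 + w).re = 1 + w.re := by simp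
  have him : (1 + w).im = w.im := by simp
  have hnsq : ‖1 + w‖ ^ 2 = (1 + w.re) ^ 2 + w.im ^ 2 := by
    rw [Complex.sq_norm, Complex.normSq_apply, hre, him]; ring
  have habs : ‖w‖ ^ 2 = w.re ^ 2 + w.im ^ 2 := by
    rw [Complex.sq_norm, Complex.normSq_apply]; ring
  have h0 : (0:ℝ) ≤ ‖w‖ := norm_nonneg w
  have hL : 0 ≤ max 1 (‖w‖) * Real.sin δ :=
    mul_nonneg (le_trans zero_le_one (le_max_left _ _)) hδ0.le
  rw [← Real.sqrt_sq (norm_nonneg (1 + w)), ← Real.sqrt_sq hL]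
  apply Real.sqrt_le_sqrt
  rw [hnsq]
  rcases h with h | h
  · -- right half plane
    have : max 1 (‖w‖) ^ 2 ≤ 1 + w.re ^ 2 + w.im ^ 2 := by
      rcases max_cases 1 (‖w‖) with ⟨he, _⟩ | ⟨he, _⟩ <;> rw [he] <;> nlinarith
    have hs2 : Real.sin δ ^ 2 ≤ 1 := by nlinarith
    nlinarith [sq_nonneg (max 1 (‖w‖)), mul_le_mul_of_nonneg_left hs2
      (sq_nonneg (max 1 (‖w‖)))]
  · rcases eq_or_lt_of_le h0 with h0' | h0'
    · have hw0 : w = 0 := by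
        rwa [eq_comm, norm_eq_zero] at h0'
      subst hw0
      simp only [norm_zero, Complex.zero_re, Complex.zero_im, max_eq_left zero_le_one]
      nlinarith
    · -- |Im w| ≥ |w| sin δ
      have h1 : ‖w‖ ^ 2 * Real.sin δ ^ 2 ≤ w.im ^ 2 := by
        have := mul_le_mul h h (by positivity) (abs_nonneg _)
        calc ‖w‖ ^ 2 * Real.sin δ ^ 2
            = (‖w‖ * Real.sin δ) * (‖w‖ * Real.sin δ) := by ring
          _ ≤ |w.im| * |w.im| := this
          _ = w.im ^ 2 := by rw [← _root_.sq_abs]; ring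
      rcases max_cases 1 (‖w‖) with ⟨he, hge⟩ | ⟨he, _⟩ <;> rw [he]
      · -- need sin² δ ≤ (1+re)² + im², use (re/|w| + |w|)² ≥ 0 trick
        have key : Real.sin δ ^ 2 ≤ (1 + w.re)^2 + w.im ^ 2 := by
          have h2 : Real.sin δ ^ 2 ≤ w.im ^ 2 / ‖w‖ ^ 2 := by
            rw [le_div_iff₀ (by positivity)]
            linarith [h1]
          have h3 : w.im ^ 2 / ‖w‖ ^ 2 ≤ (1 + w.re)^2 + w.im ^ 2 := by
            rw [div_le_iff₀ (by positivity)]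
            nlinarith [sq_nonneg (w.re / ‖w‖ + ‖w‖), sq_nonneg w.im,
              sq_nonneg (w.re + ‖w‖ ^ 2),
              mul_div_cancel₀ (w.re ^ 2) (by positivity : (‖w‖ ^ 2) ≠ 0)]
          linarith
        nlinarith
      · nlinarith

/-- Lower bound `|1 + c z^s| ≥ max 1 (c|z|^s) sin δ` for `z` in a sector. -/
lemma cpow_sector_lb (c s δ : ℝ) (hc : 0 < c) (z : ℂ) (hz : z ≠ 0)
    (hδ0 : 0 < δ) (hδ2 : δ ≤ Real.pi / 2) (hs : 0 ≤ s)
    (hψ : s * |Complex.arg z| < Real.pi - δ) :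
    max 1 (c * ‖z‖ ^ s) * Real.sin δ ≤
      ‖1 + (c : ℂ) * z ^ (s : ℂ)‖ := by
  have hpi := Real.pi_pos
  have hsin0 : 0 < Real.sin δ :=
    Real.sin_pos_of_pos_of_lt_pi hδ0 (by linarith)
  set ψ : ℝ := s * Complex.arg z with hψdef
  set R : ℝ := c * ‖z‖ ^ s with hRdef
  have hR : 0 < R := mul_pos hc (Real.rpow_pos_of_pos ((norm_pos_iff.mpr hz)) s)
  have hw : (c : ℂ) * z ^ (s : ℂ) = ((R : ℝ) : ℂ) * Complex.exp ((ψ : ℝ) * Complex.I) := by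
    rw [cpow_real_polar z hz s, hRdef]
    push_cast
    ring_nf
    rw [mul_comm Complex.I ((s * z.arg : ℝ) : ℂ), Complex.ofReal_mul]
  have hre : ((c : ℂ) * z ^ (s : ℂ)).re = R * Real.cos ψ := by
    rw [hw]
    simp [Complex.mul_re, Complex.exp_ofReal_mul_I_re, Complex.exp_ofReal_mul_I_im]
  have him : ((c : ℂ) * z ^ (s : ℂ)).im = R * Real.sin ψ := by
    rw [hw]
    simp [Complex.mul_im, Complex.exp_ofReal_mul_I_re, Complex.exp_ofReal_mul_I_im]
  have habs : ‖(c : ℂ) * z ^ (s : ℂ)‖ = R := by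
    rw [hw, norm_mul, Complex.norm_exp_ofReal_mul_I, Complex.norm_real, Real.norm_eq_abs,
      abs_of_pos hR, mul_one]
  have hψabs : |ψ| < Real.pi - δ := by
    rw [hψdef, abs_mul, _root_.abs_of_nonneg hs]
    exact hψ
  have key := sector_lb ((c : ℂ) * z ^ (s : ℂ)) δ hsin0 (Real.sin_le_one δ) ?_
  · rwa [habs] at key
  · rcases le_or_gt 0 (Real.cos ψ) with hcos | hcos
    · left
      rw [hre]
      exact mul_nonneg hR.le hcos
    · right
      rw [him, habs, abs_mul, abs_of_pos hR]
      apply mul_le_mul_of_nonneg_left _ hR.le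
      -- cos ψ < 0 forces π/2 < |ψ|
      have h2 : Real.pi / 2 < |ψ| := by
        by_contra hle
        push_neg at hle
        have hmem := abs_le.mp hle
        exact absurd (Real.cos_nonneg_of_mem_Icc ⟨hmem.1, hmem.2⟩) (not_le.mpr hcos)
      have habs_sin : |Real.sin ψ| = Real.sin |ψ| := by
        rcases abs_cases ψ with ⟨h, hpos⟩ | ⟨h, hneg⟩
        · rw [h, _root_.abs_of_nonneg
            (Real.sin_nonneg_of_nonneg_of_le_pi hpos (by linarith [le_abs_self ψ]))]
        · rw [h, Real.sin_neg, _root_.abs_of_nonpos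
            (Real.sin_nonpos_of_nonpos_of_neg_pi_le hneg.le (by linarith [neg_abs_le ψ]))]
      rw [habs_sin, ← Real.sin_pi_sub |ψ|]
      exact Real.sin_le_sin_of_le_of_le_pi_div_two (by linarith) (by linarith) (by linarith)

lemma abs_cpow_real' (z : ℂ) (hz : z ≠ 0) (s : ℝ) :
    ‖z ^ (s : ℂ)‖ = ‖z‖ ^ s := by
  rw [cpow_real_polar z hz s, norm_mul, Complex.norm_exp_ofReal_mul_I, Complex.norm_real, Real.norm_eq_abs,
    mul_one, _root_.abs_of_nonneg (Real.rpow_nonneg (norm_nonneg z) s)]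

/-- Lower bound on `|g|` (equivalently upper bound on `|1/g|`) used in the
error analysis of the backward Euler scheme:
`|1/g(z)| ≤ M_θ μ (|z|⁻¹ + b|z|^{β-1}) min{1, |z|^{-α}/a}` with
`M_θ = 1 / sin (π - θ)`. -/
theorem oldroydSymbol_inv_bound (α β a b μ θ : ℝ)
    (hα : α ∈ Set.Ioo (0 : ℝ) 1) (hβ : β ∈ Set.Ioo (0 : ℝ) 1)
    (ha : 0 < a) (hb : 0 < b) (hμ : 0 < μ)
    (hθ : Real.pi / 2 < θ) (hθ' : θ < Real.pi / (1 + α))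
    (z : ℂ) (hz : z ≠ 0) (hargz : |Complex.arg z| < θ) :
    oldroydSymbol a b μ α β z ≠ 0 ∧
    ‖1 / oldroydSymbol a b μ α β z‖ ≤
      (1 / Real.sin (Real.pi - θ)) * μ *
        (‖z‖⁻¹ + b * ‖z‖ ^ (β - 1)) *
        min 1 (‖z‖ ^ (-α) / a) := by
  obtain ⟨hα0, hα1⟩ := hα
  obtain ⟨hβ0, hβ1⟩ := hβ
  have hpi := Real.pi_pos
  set r : ℝ := ‖z‖ with hrdef
  have hr : 0 < r := (norm_pos_iff.mpr hz)
  have hθπ : θ < Real.pi := lt_trans hθ' (div_lt_self hpi (by linarith))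
  have hδ0 : 0 < Real.pi - θ := by linarith
  have hδ2 : Real.pi - θ ≤ Real.pi / 2 := by linarith
  have hsin : 0 < Real.sin (Real.pi - θ) :=
    Real.sin_pos_of_pos_of_lt_pi hδ0 (by linarith)
  have hargnn : 0 ≤ |Complex.arg z| := abs_nonneg _
  have hA := cpow_sector_lb a α (Real.pi - θ) ha z hz hδ0 hδ2 hα0.le
    (by nlinarith)
  have hB := cpow_sector_lb b β (Real.pi - θ) hb z hz hδ0 hδ2 hβ0.le
    (by nlinarith)
  set A : ℂ := 1 + (a : ℂ) * z ^ ((α : ℝ) : ℂ) with hAdef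
  set B : ℂ := 1 + (b : ℂ) * z ^ ((β : ℝ) : ℂ) with hBdef
  have hApos : 0 < ‖A‖ :=
    lt_of_lt_of_le (by positivity) hA
  have hBpos : 0 < ‖B‖ :=
    lt_of_lt_of_le (by positivity) hB
  have hA0 : A ≠ 0 := fun h => by simp [h] at hApos
  have hB0 : B ≠ 0 := fun h => by simp [h] at hBpos
  -- factorization of the numerator
  have hfac : z + (a : ℂ) * z ^ ((1 + α : ℝ) : ℂ) = z * A := by
    have h1 : ((1 + α : ℝ) : ℂ) = 1 + (α : ℂ) := by push_cast; ring
    rw [h1, Complex.cpow_add _ _ hz, Complex.cpow_one, hAdef]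
    ring
  have hg : oldroydSymbol a b μ α β z = (z * A) / ((μ : ℂ) * B) := by
    rw [oldroydSymbol, hfac]
  have hμ0 : (μ : ℂ) ≠ 0 := by exact_mod_cast hμ.ne'
  have hgne : oldroydSymbol a b μ α β z ≠ 0 := by
    rw [hg]
    exact div_ne_zero (mul_ne_zero hz hA0) (mul_ne_zero hμ0 hB0)
  refine ⟨hgne, ?_⟩
  -- compute |1/g|
  have habs : ‖1 / oldroydSymbol a b μ α β z‖
      = (μ * ‖B‖) / (r * ‖A‖) := by
    rw [hg, one_div, norm_inv, norm_div, norm_mul, norm_mul, Complex.norm_real, Real.norm_eq_abs,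
      _root_.abs_of_pos hμ, ← hrdef, inv_div]
  rw [habs]
  -- bound on |B|
  have hBub : ‖B‖ ≤ 1 + b * r ^ β := by
    rw [hBdef]
    calc ‖1 + (b : ℂ) * z ^ ((β : ℝ) : ℂ)‖
        ≤ ‖1‖ + ‖(b : ℂ) * z ^ ((β : ℝ) : ℂ)‖ := norm_add_le _ _
      _ = 1 + b * r ^ β := by
          rw [norm_one, norm_mul, Complex.norm_real, Real.norm_eq_abs, _root_.abs_of_pos hb,
            abs_cpow_real' z hz β, ← hrdef]
  -- rewrite the RHS
  have e1 : r⁻¹ + b * r ^ (β - 1) = (1 + b * r ^ β) / r := by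
    rw [Real.rpow_sub hr, Real.rpow_one]
    field_simp
  have e2 : min 1 (r ^ (-α) / a) = (max 1 (a * r ^ α))⁻¹ := by
    have hx : 0 < a * r ^ α := by positivity
    have hxe : r ^ (-α) / a = (a * r ^ α)⁻¹ := by
      rw [Real.rpow_neg hr.le, mul_inv, div_eq_mul_inv, mul_comm]
    rw [hxe]
    rcases le_total 1 (a * r ^ α) with h | h
    · rw [max_eq_right h, min_eq_right (inv_le_one_of_one_le₀ h)]
    · rw [max_eq_left h, inv_one, min_eq_left ((one_le_inv₀ hx).mpr h)]
  rw [e1, e2]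
  have hRHS : (1 / Real.sin (Real.pi - θ)) * μ * ((1 + b * r ^ β) / r) *
      (max 1 (a * r ^ α))⁻¹
      = (μ * (1 + b * r ^ β)) / (r * (max 1 (a * r ^ α) * Real.sin (Real.pi - θ))) := by
    have hm : (0:ℝ) < max 1 (a * r ^ α) := lt_of_lt_of_le one_pos (le_max_left _ _)
    field_simp
  rw [hRHS]
  apply div_le_div₀ (by positivity)
    (mul_le_mul_of_nonneg_left hBub hμ.le)
    (by positivity)
    (mul_le_mul_of_nonneg_left hA hr.le)
end

section
/- Fix α, β ∈ (0,1), positive reals a, b, μ, and θ ∈ (π/2, π/(1+α)). For every nonzero complex z with |arg z| < θ and every real λ ≥ 0, one has |g(z)| / (|z| · |g(z) + λ|) ≤ (1/sin(π − (1+α)θ)) · |z|^{−1}, where g(z) = (z + a·z^{1+α}) / (μ·(1 + b·z^β)). -/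
open Complex Real


/-- arg of a real power. -/
lemma arg_cpow_ofReal {z : ℂ} (hz : z ≠ 0) {y : ℝ} (h1 : -π < y * z.arg)
    (h2 : y * z.arg ≤ π) : (z ^ (y : ℂ)).arg = y * z.arg := by
  have hre := Complex.cpow_ofReal_re z y
  have him := Complex.cpow_ofReal_im z y
  have hpos : (0:ℝ) < ‖z‖ ^ y := Real.rpow_pos_of_pos (norm_pos_iff.mpr hz) y
  have hzy : z ^ (y : ℂ) =
      ((‖z‖ ^ y : ℝ) : ℂ) *
        (Complex.cos ((z.arg * y : ℝ) : ℂ) + Complex.sin ((z.arg * y : ℝ) : ℂ) * I) := by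
    apply Complex.ext <;>
      · simp only [Complex.mul_re, Complex.mul_im, Complex.add_re, Complex.add_im,
          Complex.I_re, Complex.I_im, Complex.ofReal_re, Complex.ofReal_im,
          Complex.cos_ofReal_re, Complex.cos_ofReal_im, Complex.sin_ofReal_re,
          Complex.sin_ofReal_im, hre, him]
        ring
  rw [hzy, Complex.arg_real_mul _ hpos,
    Complex.arg_cos_add_sin_mul_I ⟨by rw [mul_comm] at h1; exact h1,
      by rw [mul_comm] at h2; exact h2⟩, mul_comm]

/-- If `Im u ≥ 0` then `arg (1+u) ≤ arg u`. -/
lemma arg_one_add_le {u : ℂ} (h : 0 ≤ u.im) : (1 + u).arg ≤ u.arg := by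
  rcases eq_or_lt_of_le h with h0 | h0
  · rcases le_or_gt 0 u.re with hre | hre
    · have hu : u = ((u.re : ℝ) : ℂ) := by apply Complex.ext <;> simp [h0.symm]
      have : (1 + u).arg = 0 := by
        rw [hu, ← Complex.ofReal_one, ← Complex.ofReal_add]
        exact Complex.arg_ofReal_of_nonneg (by linarith)
      rw [this]
      exact Complex.arg_nonneg_iff.2 h
    · have : u.arg = π := Complex.arg_eq_pi_iff.2 ⟨hre, h0.symm⟩
      rw [this]; exact Complex.arg_le_pi _
  · have hu : u ≠ 0 := by intro h'; rw [h'] at h0; simp at h0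
    have h1u : (1 + u) ≠ 0 := by
      intro h'
      have : (1 + u).im = 0 := by rw [h']; simp
      simp at this; rw [this] at h0; simp at h0
    have him1 : (1 + u).im = u.im := by simp
    have hq : 0 ≤ (u / (1 + u)).im := by
      rw [Complex.div_im, div_sub_div_same]
      apply div_nonneg _ (Complex.normSq_nonneg _)
      have : u.im * (1 + u).re - u.re * (1 + u).im = u.im := by
        simp [Complex.add_re, Complex.add_im]; ring
      rw [this]; exact h
    have harg1 : u.arg < π := by
      rcases lt_or_eq_of_le (Complex.arg_le_pi u) with h' | h'
      · exact h'
      · exact absurd (Complex.arg_eq_pi_iff.1 h').2 (by linarith)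
    have harg1' : (1 + u).arg < π := by
      rcases lt_or_eq_of_le (Complex.arg_le_pi (1 + u)) with h' | h'
      · exact h'
      · have := (Complex.arg_eq_pi_iff.1 h').2
        rw [him1] at this; linarith
    have hunn : 0 ≤ u.arg := Complex.arg_nonneg_iff.2 h
    have h1unn : 0 ≤ (1 + u).arg := Complex.arg_nonneg_iff.2 (by rw [him1]; exact h)
    have hang : ((u / (1 + u)).arg : Real.Angle) = ((u.arg - (1 + u).arg : ℝ) : Real.Angle) := by
      rw [Complex.arg_div_coe_angle hu h1u]
      exact (Real.Angle.coe_sub _ _).symm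
    have hmem : (u.arg - (1 + u).arg : ℝ) ∈ Set.Ioc (-π) π := by
      constructor
      · linarith
      · linarith [Complex.neg_pi_lt_arg (1 + u), Complex.arg_le_pi u]
    have heq : (u / (1 + u)).arg = u.arg - (1 + u).arg := by
      rw [Complex.arg_coe_angle_eq_iff_eq_toReal] at hang
      rw [hang, Real.Angle.toReal_coe_eq_self_iff_mem_Ioc.2 hmem]
    have hnn : 0 ≤ (u / (1 + u)).arg := Complex.arg_nonneg_iff.2 hq
    rw [heq] at hnn; linarith

/-- If `Im u ≤ 0` and `arg u ≠ π` then `arg u ≤ arg (1+u)`. -/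
lemma arg_one_add_ge {u : ℂ} (h : u.im ≤ 0) (h' : u.arg ≠ π) : u.arg ≤ (1 + u).arg := by
  have hv : 0 ≤ ((starRingEnd ℂ) u).im := by simp [Complex.conj_im]; exact h
  have h1 := arg_one_add_le hv
  have hconj : (1 : ℂ) + (starRingEnd ℂ) u = (starRingEnd ℂ) (1 + u) := by
    rw [map_add, map_one]
  rw [hconj, Complex.arg_conj, Complex.arg_conj u, if_neg h'] at h1
  by_cases hp : (1 + u).arg = π
  · rw [if_pos hp] at h1
    linarith [Complex.neg_pi_lt_arg u]
  · rw [if_neg hp] at h1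
    linarith

lemma quad_bound {r i R lam c : ℝ} (hR : 0 ≤ R) (hR2 : R ^ 2 = r ^ 2 + i ^ 2)
    (hlam : 0 ≤ lam) (hre : c * R ≤ r) :
    (1 - c ^ 2) * R ^ 2 ≤ (r + lam) ^ 2 + i ^ 2 := by
  nlinarith [sq_nonneg (lam + c * R), mul_le_mul_of_nonneg_left hre hlam]

set_option maxHeartbeats 1000000 in
/-- Scalar form of estimate (2.8), `‖Ê(z)‖ ≤ M_θ̄ |z|⁻¹` with `θ̄ = (1+α)θ`:
for `z ∈ Σ_θ` and `λ ≥ 0`,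
`|g(z)| / (|z| |g(z) + λ|) ≤ (1/sin(π - (1+α)θ)) |z|⁻¹`. -/
theorem oldroydSymbol_Ehat_bound (α β a b μ θ : ℝ)
    (hα : α ∈ Set.Ioo (0 : ℝ) 1) (hβ : β ∈ Set.Ioo (0 : ℝ) 1)
    (ha : 0 < a) (hb : 0 < b) (hμ : 0 < μ)
    (hθ : Real.pi / 2 < θ) (hθ' : θ < Real.pi / (1 + α))
    (z : ℂ) (hz : z ≠ 0) (hargz : |Complex.arg z| < θ)
    (lam : ℝ) (hlam : 0 ≤ lam) :
    ‖oldroydSymbol a b μ α β z‖ /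
        (‖z‖ * ‖oldroydSymbol a b μ α β z + (lam : ℂ)‖) ≤
      (1 / Real.sin (Real.pi - (1 + α) * θ)) * ‖z‖⁻¹ := by
  obtain ⟨hα0, hα1⟩ := hα
  obtain ⟨hβ0, hβ1⟩ := hβ
  have hπ : (0:ℝ) < π := Real.pi_pos
  have h1α : (0:ℝ) < 1 + α := by linarith
  have hθb : (1 + α) * θ < π := by
    have := (lt_div_iff₀ h1α).mp hθ'
    linarith [this]
  have hθ0 : 0 < θ := by linarith
  have hθb2 : π / 2 < (1 + α) * θ := by nlinarith
  have hθπ : θ < π := by nlinarith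
  set φ := z.arg with hφdef
  have hφ : |φ| < θ := hargz
  have hφ1 : -θ < φ := neg_lt_of_abs_lt hφ
  have hφ2 : φ < θ := lt_of_abs_lt hφ
  -- args of the powers
  have hargα : (z ^ ((α:ℝ) : ℂ)).arg = α * φ := by
    apply arg_cpow_ofReal hz <;> nlinarith
  have hargβ : (z ^ ((β:ℝ) : ℂ)).arg = β * φ := by
    apply arg_cpow_ofReal hz <;> nlinarith
  set u : ℂ := (a : ℂ) * z ^ ((α:ℝ) : ℂ) with hudef
  set v : ℂ := (b : ℂ) * z ^ ((β:ℝ) : ℂ) with hvdef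
  have hargu : u.arg = α * φ := by rw [hudef, Complex.arg_real_mul _ ha, hargα]
  have hargv : v.arg = β * φ := by rw [hvdef, Complex.arg_real_mul _ hb, hargβ]
  have hαφπ : |α * φ| < π := by rw [abs_mul, abs_of_pos hα0]; nlinarith [abs_nonneg φ]
  have hβφπ : |β * φ| < π := by rw [abs_mul, abs_of_pos hβ0]; nlinarith [abs_nonneg φ]
  have h1u : (1 : ℂ) + u ≠ 0 := by
    intro h
    have hu1 : u = -1 := by linear_combination h
    rw [hu1, Complex.arg_neg_one] at hargu
    rw [← hargu] at hαφπ
    simp [abs_of_pos hπ] at hαφπ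
  have h1v : (1 : ℂ) + v ≠ 0 := by
    intro h
    have hv1 : v = -1 := by linear_combination h
    rw [hv1, Complex.arg_neg_one] at hargv
    rw [← hargv] at hβφπ
    simp [abs_of_pos hπ] at hβφπ
  -- rewrite g
  have hcpadd : z ^ ((1 + α : ℝ) : ℂ) = z * z ^ ((α:ℝ) : ℂ) := by
    have : ((1 + α : ℝ) : ℂ) = (1 : ℂ) + ((α:ℝ) : ℂ) := by push_cast; ring
    rw [this, Complex.cpow_add _ _ hz, Complex.cpow_one]
  have hg : oldroydSymbol a b μ α β z = (z * (1 + u)) / ((μ : ℂ) * (1 + v)) := by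
    rw [oldroydSymbol, hcpadd, hudef, hvdef]; ring_nf
  set g : ℂ := oldroydSymbol a b μ α β z with hgdef
  have hDne : ((μ:ℂ) * (1 + v)) ≠ 0 :=
    mul_ne_zero (by exact_mod_cast hμ.ne') h1v
  have hNne : z * (1 + u) ≠ 0 := mul_ne_zero hz h1u
  have hgne : g ≠ 0 := by rw [hg]; exact div_ne_zero hNne hDne
  -- arg of g as angle
  have hang : (g.arg : Real.Angle) = ((φ + (1+u).arg - (1+v).arg : ℝ) : Real.Angle) := by
    rw [hg, Complex.arg_div_coe_angle hNne hDne, Complex.arg_mul_coe_angle hz h1u,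
      Complex.arg_real_mul _ hμ, ← hφdef, Real.Angle.coe_sub, Real.Angle.coe_add]
  set t : ℝ := φ + (1+u).arg - (1+v).arg with htdef
  -- bounds on t
  have hbounds : -π < t ∧ t ≤ π ∧ |t| ≤ (1 + α) * θ := by
    rcases le_or_gt 0 φ with hs | hs
    · have hiu : 0 ≤ u.im := Complex.arg_nonneg_iff.1 (by rw [hargu]; positivity)
      have hiv : 0 ≤ v.im := Complex.arg_nonneg_iff.1 (by rw [hargv]; positivity)
      have hA1 : (1+u).arg ≤ α * φ := hargu ▸ arg_one_add_le hiu
      have hA2 : (1+v).arg ≤ β * φ := hargv ▸ arg_one_add_le hiv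
      have hA1' : 0 ≤ (1+u).arg := Complex.arg_nonneg_iff.2 (by simpa using hiu)
      have hA2' : 0 ≤ (1+v).arg := Complex.arg_nonneg_iff.2 (by simpa using hiv)
      have hp1 : β * φ ≤ φ := mul_le_of_le_one_left hs hβ1.le
      have hp2 : (1 + α) * φ ≤ (1 + α) * θ := mul_le_mul_of_nonneg_left hφ2.le h1α.le
      have ht1 : 0 ≤ t := by rw [htdef]; linarith
      have ht2 : t ≤ (1 + α) * φ := by rw [htdef]; linarith
      refine ⟨by linarith, by linarith, ?_⟩
      rw [_root_.abs_of_nonneg ht1]; linarith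
    · have hargun : u.arg < 0 := by rw [hargu]; exact mul_neg_of_pos_of_neg hα0 hs
      have hargvn : v.arg < 0 := by rw [hargv]; exact mul_neg_of_pos_of_neg hβ0 hs
      have hiu : u.im ≤ 0 := le_of_lt (Complex.arg_neg_iff.1 hargun)
      have hiv : v.im ≤ 0 := le_of_lt (Complex.arg_neg_iff.1 hargvn)
      have hαne : u.arg ≠ π := by intro h; rw [h] at hargun; linarith
      have hβne : v.arg ≠ π := by intro h; rw [h] at hargvn; linarith
      have hA1 : α * φ ≤ (1+u).arg := hargu ▸ arg_one_add_ge hiu hαne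
      have hA2 : β * φ ≤ (1+v).arg := hargv ▸ arg_one_add_ge hiv hβne
      have hA1' : (1+u).arg ≤ 0 :=
        le_of_lt (Complex.arg_neg_iff.2 (by simpa using (Complex.arg_neg_iff.1 hargun : u.im < 0)))
      have hA2' : (1+v).arg ≤ 0 :=
        le_of_lt (Complex.arg_neg_iff.2 (by simpa using (Complex.arg_neg_iff.1 hargvn : v.im < 0)))
      have hp1 : φ ≤ β * φ := by
        have := mul_nonneg (show (0:ℝ) ≤ 1 - β by linarith) (show (0:ℝ) ≤ -φ by linarith)
        nlinarith
      have hp2 : (1 + α) * (-θ) ≤ (1 + α) * φ := mul_le_mul_of_nonneg_left hφ1.le h1α.le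
      have ht1 : (1 + α) * φ ≤ t := by rw [htdef]; linarith
      have ht2 : t ≤ 0 := by rw [htdef]; linarith
      refine ⟨by nlinarith, by linarith, ?_⟩
      rw [_root_.abs_of_nonpos ht2]; nlinarith
  obtain ⟨htl, htu, htb⟩ := hbounds
  have hargg : g.arg = t := by
    rw [Complex.arg_coe_angle_eq_iff_eq_toReal] at hang
    rw [hang, Real.Angle.toReal_coe_eq_self_iff_mem_Ioc.2 ⟨htl, htu⟩]
  have harggb : |g.arg| ≤ (1 + α) * θ := by rw [hargg]; exact htb
  -- cos bound
  set θb : ℝ := (1 + α) * θ with hθbdef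
  have hcos : Real.cos θb ≤ Real.cos g.arg := by
    rw [← Real.cos_abs g.arg]
    exact Real.cos_le_cos_of_nonneg_of_le_pi (abs_nonneg _) hθb.le harggb
  have hcosneg : Real.cos θb ≤ 0 :=
    Real.cos_nonpos_of_pi_div_two_le_of_le hθb2.le (by linarith)
  have hre : Real.cos θb * ‖g‖ ≤ g.re := by
    rw [← Complex.norm_mul_cos_arg g, mul_comm]
    exact mul_le_mul_of_nonneg_left hcos (norm_nonneg g)
  -- sin bound
  set s : ℝ := Real.sin θb with hsdef
  have hspos : 0 < s := Real.sin_pos_of_pos_of_lt_pi (by linarith) hθb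
  have hssq : s ^ 2 = 1 - Real.cos θb ^ 2 := Real.sin_sq θb
  -- |g + lam| ≥ s * |g|
  have habs2 : ‖g‖ ^ 2 = g.re ^ 2 + g.im ^ 2 := by
    rw [Complex.sq_norm, Complex.normSq_apply]; ring
  have habs3 : ‖g + (lam:ℂ)‖ ^ 2 = (g.re + lam) ^ 2 + g.im ^ 2 := by
    rw [Complex.sq_norm, Complex.normSq_apply]; simp; ring
  have hkey2 : (s * ‖g‖) ^ 2 ≤ ‖g + (lam:ℂ)‖ ^ 2 := by
    rw [habs3, mul_pow, hssq]
    exact quad_bound (norm_nonneg g) habs2 hlam hre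
  have hkey : s * ‖g‖ ≤ ‖g + (lam:ℂ)‖ :=
    le_of_pow_le_pow_left₀ two_ne_zero (norm_nonneg _) hkey2
  -- conclude
  have hgpos : 0 < ‖g‖ := norm_pos_iff.mpr hgne
  have hzpos : 0 < ‖z‖ := norm_pos_iff.mpr hz
  have hgl : 0 < ‖g + (lam:ℂ)‖ := lt_of_lt_of_le (by positivity) hkey
  rw [Real.sin_pi_sub, ← hsdef]
  calc ‖g‖ / (‖z‖ * ‖g + (lam:ℂ)‖)
      ≤ ‖g‖ / (‖z‖ * (s * ‖g‖)) := by
        apply div_le_div_of_nonneg_left (norm_nonneg g) (by positivity)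
        exact mul_le_mul_of_nonneg_left hkey hzpos.le
    _ = (1 / s) * ‖z‖⁻¹ := by field_simp
end

section
/- Fix α, β ∈ (0,1), positive reals a, b, μ, and θ ∈ (π/2, π/(1+α)). For every nonzero complex z with |arg z| < θ and every real λ > 0, one has 1 / (|z| · |g(z) + λ|) ≤ (μ / (sin(π−θ) · sin(π − (1+α)θ))) · (|z|^{−2} + b·|z|^{β−2}) · min{1, |z|^{−α}/a}, where g(z) = (z + a·z^{1+α}) / (μ·(1 + b·z^β)). -/
noncomputable def cexpI (x : ℝ) : ℂ := Complex.exp ((x : ℂ) * Complex.I)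

lemma cexpI_re (x : ℝ) : (cexpI x).re = Real.cos x := Complex.exp_ofReal_mul_I_re x
lemma cexpI_im (x : ℝ) : (cexpI x).im = Real.sin x := Complex.exp_ofReal_mul_I_im x
lemma cexpI_mul (x y : ℝ) : cexpI x * cexpI y = cexpI (x + y) := by
  rw [cexpI, cexpI, cexpI, ← Complex.exp_add]; congr 1; push_cast; ring
lemma conj_cexpI (x : ℝ) : (starRingEnd ℂ) (cexpI x) = cexpI (-x) := by
  rw [cexpI, ← Complex.exp_conj]
  congr 1
  simp [Complex.conj_I]
lemma abs_cexpI (x : ℝ) : ‖cexpI x‖ = 1 := Complex.norm_exp_ofReal_mul_I x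

lemma mul_cexpI_re (c x : ℝ) : ((c : ℂ) * cexpI x).re = c * Real.cos x := by
  simp [Complex.mul_re, cexpI_re, cexpI_im]
lemma mul_cexpI_im (c x : ℝ) : ((c : ℂ) * cexpI x).im = c * Real.sin x := by
  simp [Complex.mul_re, Complex.mul_im, cexpI_re, cexpI_im]

lemma pointing {p q C S : ℝ} (hC : C ≤ 0) (hS : 0 ≤ S) (hSC : S ^ 2 + C ^ 2 = 1)
    (hq : 0 ≤ q) (h : q * C ≤ p * S) : C * Real.sqrt (p ^ 2 + q ^ 2) ≤ p := by
  have hs0 : (0:ℝ) ≤ p ^ 2 + q ^ 2 := by positivity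
  have hs := Real.sq_sqrt hs0
  have hsn := Real.sqrt_nonneg (p ^ 2 + q ^ 2)
  rcases le_or_gt 0 p with hp | hp
  · nlinarith
  · have h1 : (-p) * S ≤ q * (-C) := by nlinarith
    have h2 : p ^ 2 * S ^ 2 ≤ q ^ 2 * C ^ 2 := by
      nlinarith [mul_nonneg (neg_nonneg.2 hp.le) hS, mul_nonneg hq (neg_nonneg.2 hC)]
    have h3 : p ^ 2 ≤ C ^ 2 * (p ^ 2 + q ^ 2) := by nlinarith
    nlinarith [mul_nonneg (neg_nonneg.2 hC) hsn]

lemma term_pos {x Ψ : ℝ} (h0 : 0 ≤ x) (h1 : x < Ψ) (hΨ : Ψ < Real.pi) :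
    0 ≤ Real.sin x ∧ Real.sin x * Real.cos Ψ ≤ Real.cos x * Real.sin Ψ := by
  refine ⟨Real.sin_nonneg_of_nonneg_of_le_pi h0 (by linarith), ?_⟩
  have h : Real.sin (x - Ψ) ≤ 0 :=
    Real.sin_nonpos_of_nonpos_of_neg_pi_le (by linarith) (by linarith)
  rw [Real.sin_sub] at h; linarith

lemma term_neg {x Ψ : ℝ} (h0 : x ≤ 0) (h1 : -Ψ < x) (hΨ : Ψ < Real.pi) :
    Real.sin x ≤ 0 ∧ (-Real.sin x) * Real.cos Ψ ≤ Real.cos x * Real.sin Ψ := by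
  have hΨ0 : 0 ≤ Ψ := by linarith
  refine ⟨Real.sin_nonpos_of_nonpos_of_neg_pi_le h0 (by linarith), ?_⟩
  have h : 0 ≤ Real.sin (x + Ψ) :=
    Real.sin_nonneg_of_nonneg_of_le_pi (by linarith) (by linarith)
  rw [Real.sin_add] at h; linarith

set_option maxHeartbeats 1000000 in
lemma sector_key (α β θ Ψ φ r A B : ℝ)
    (hα0 : 0 < α) (hα1 : α < 1) (hβ0 : 0 < β) (hβ1 : β < 1)
    (hθ0 : 0 < θ) (hφl : -θ < φ) (hφu : φ < θ)
    (hΨ_def : Ψ = (1 + α) * θ) (hΨπ : Ψ < Real.pi)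
    (hC : Real.cos Ψ ≤ 0) (hS : 0 ≤ Real.sin Ψ)
    (hr : 0 < r) (hA : 0 < A) (hB : 0 < B) :
    Real.cos Ψ * Real.sqrt
      ((r * Real.cos φ + A * Real.cos ((1 + α) * φ)
        + r * B * Real.cos (φ + -(β * φ))
        + A * B * Real.cos ((1 + α) * φ + -(β * φ))) ^ 2 +
       (r * Real.sin φ + A * Real.sin ((1 + α) * φ)
        + r * B * Real.sin (φ + -(β * φ))
        + A * B * Real.sin ((1 + α) * φ + -(β * φ))) ^ 2) ≤
      r * Real.cos φ + A * Real.cos ((1 + α) * φ)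
        + r * B * Real.cos (φ + -(β * φ))
        + A * B * Real.cos ((1 + α) * φ + -(β * φ)) := by
  have hsc : Real.sin Ψ ^ 2 + Real.cos Ψ ^ 2 = 1 := Real.sin_sq_add_cos_sq Ψ
  set P : ℝ := r * Real.cos φ + A * Real.cos ((1 + α) * φ)
      + r * B * Real.cos (φ + -(β * φ))
      + A * B * Real.cos ((1 + α) * φ + -(β * φ)) with hP_def
  set Q : ℝ := r * Real.sin φ + A * Real.sin ((1 + α) * φ)
      + r * B * Real.sin (φ + -(β * φ))
      + A * B * Real.sin ((1 + α) * φ + -(β * φ)) with hQ_def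
  rcases le_or_gt 0 φ with hφ0 | hφ0
  · have p1 : (0:ℝ) ≤ α * φ := mul_nonneg hα0.le hφ0
    have p2 : (0:ℝ) ≤ β * φ := mul_nonneg hβ0.le hφ0
    have p3 : β * φ ≤ φ := mul_le_of_le_one_left hφ0 hβ1.le
    have p4 : (0:ℝ) ≤ α * θ := mul_nonneg hα0.le hθ0.le
    have p5 : α * φ ≤ α * θ := mul_le_mul_of_nonneg_left hφu.le hα0.le
    have e2 : φ < Ψ := by rw [hΨ_def]; linarith
    have c1 := term_pos (x := φ) hφ0 e2 hΨπ
    have c2 := term_pos (x := (1 + α) * φ)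
      (by linarith) (by rw [hΨ_def]; linarith) hΨπ
    have c3 := term_pos (x := φ + -(β * φ)) (by linarith) (by linarith) hΨπ
    have c4 := term_pos (x := (1 + α) * φ + -(β * φ))
      (by linarith) (by rw [hΨ_def]; linarith) hΨπ
    have hq0 : 0 ≤ Q := by
      rw [hQ_def]
      have i1 := mul_nonneg hr.le c1.1
      have i2 := mul_nonneg hA.le c2.1
      have i3 := mul_nonneg (mul_nonneg hr.le hB.le) c3.1
      have i4 := mul_nonneg (mul_nonneg hA.le hB.le) c4.1
      linarith
    apply pointing hC hS hsc hq0
    have k1 := mul_le_mul_of_nonneg_left c1.2 hr.le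
    have k2 := mul_le_mul_of_nonneg_left c2.2 hA.le
    have k3 := mul_le_mul_of_nonneg_left c3.2 (mul_nonneg hr.le hB.le)
    have k4 := mul_le_mul_of_nonneg_left c4.2 (mul_nonneg hA.le hB.le)
    rw [hP_def, hQ_def]
    linarith [k1, k2, k3, k4]
  · have p1 : α * φ ≤ 0 := mul_nonpos_of_nonneg_of_nonpos hα0.le hφ0.le
    have p2 : β * φ ≤ 0 := mul_nonpos_of_nonneg_of_nonpos hβ0.le hφ0.le
    have p3 : φ ≤ β * φ := le_mul_of_le_one_left hφ0.le hβ1.le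
    have p4 : (0:ℝ) ≤ α * θ := mul_nonneg hα0.le hθ0.le
    have p5' : α * -θ ≤ α * φ := mul_le_mul_of_nonneg_left hφl.le hα0.le
    have p5 : -(α * θ) ≤ α * φ := by linarith [p5', mul_neg α θ]
    have e2 : -Ψ < φ := by rw [hΨ_def]; linarith
    have c1 := term_neg (x := φ) hφ0.le e2 hΨπ
    have c2 := term_neg (x := (1 + α) * φ)
      (by linarith) (by rw [hΨ_def]; linarith) hΨπ
    have c3 := term_neg (x := φ + -(β * φ)) (by linarith) (by linarith) hΨπ
    have c4 := term_neg (x := (1 + α) * φ + -(β * φ))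
      (by linarith) (by rw [hΨ_def]; linarith) hΨπ
    have hq0 : 0 ≤ -Q := by
      rw [hQ_def]
      have i1 := mul_nonpos_of_nonneg_of_nonpos hr.le c1.1
      have i2 := mul_nonpos_of_nonneg_of_nonpos hA.le c2.1
      have i3 := mul_nonpos_of_nonneg_of_nonpos (mul_nonneg hr.le hB.le) c3.1
      have i4 := mul_nonpos_of_nonneg_of_nonpos (mul_nonneg hA.le hB.le) c4.1
      linarith
    have hcombo : (-Q) * Real.cos Ψ ≤ P * Real.sin Ψ := by
      have k1 := mul_le_mul_of_nonneg_left c1.2 hr.le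
      have k2 := mul_le_mul_of_nonneg_left c2.2 hA.le
      have k3 := mul_le_mul_of_nonneg_left c3.2 (mul_nonneg hr.le hB.le)
      have k4 := mul_le_mul_of_nonneg_left c4.2 (mul_nonneg hA.le hB.le)
      rw [hP_def, hQ_def]
      linarith [k1, k2, k3, k4]
    have hpt := pointing hC hS hsc hq0 hcombo
    rwa [neg_sq] at hpt

lemma sq_max_le {A m T : ℝ} (h0 : 0 ≤ A) (hm : 0 ≤ m) (hT : 0 ≤ T)
    (hn : A ^ 2 = 1 + 2 * T + m ^ 2) : max 1 m ≤ A := by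
  apply max_le <;> nlinarith

set_option maxHeartbeats 4000000 in
/-- Scalar form of the bound on `‖g(z)⁻¹ Ê(z)‖` from the proof of Theorem 2.1:
for `z ∈ Σ_θ` and `λ > 0`,
`1/(|z| |g(z)+λ|) ≤ (μ/(sin(π-θ) sin(π-(1+α)θ))) (|z|^{-2} + b|z|^{β-2}) min{1, |z|^{-α}/a}`. -/
theorem oldroydSymbol_smooth_bound (α β a b μ θ : ℝ)
    (hα : α ∈ Set.Ioo (0 : ℝ) 1) (hβ : β ∈ Set.Ioo (0 : ℝ) 1)
    (ha : 0 < a) (hb : 0 < b) (hμ : 0 < μ)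
    (hθ : Real.pi / 2 < θ) (hθ' : θ < Real.pi / (1 + α))
    (z : ℂ) (hz : z ≠ 0) (hargz : |Complex.arg z| < θ)
    (lam : ℝ) (hlam : 0 < lam) :
    1 / (‖z‖ * ‖oldroydSymbol a b μ α β z + (lam : ℂ)‖) ≤
      (μ / (Real.sin (Real.pi - θ) * Real.sin (Real.pi - (1 + α) * θ))) *
        (‖z‖ ^ (-2 : ℝ) + b * ‖z‖ ^ (β - 2)) *
        min 1 (‖z‖ ^ (-α) / a) := by
  obtain ⟨hα0, hα1⟩ := hα
  obtain ⟨hβ0, hβ1⟩ := hβ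
  have hπ := Real.pi_pos
  have h1α : (0:ℝ) < 1 + α := by linarith
  have hθ0 : 0 < θ := by linarith
  have hθπ' : θ * (1 + α) < Real.pi := (lt_div_iff₀ h1α).1 hθ'
  set r : ℝ := ‖z‖ with hr_def
  have hr : 0 < r := norm_pos_iff.mpr hz
  set φ : ℝ := Complex.arg z with hφ_def
  obtain ⟨hφl, hφu⟩ := abs_lt.1 hargz
  set Ψ : ℝ := (1 + α) * θ with hΨ_def
  -- polar form of powers (needs the definitions of r, φ)
  have hpow : ∀ s : ℝ, z ^ ((s : ℝ) : ℂ) = ((r ^ s : ℝ) : ℂ) * cexpI (s * φ) := by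
    intro s
    have hlog : Complex.log z = ((Real.log r : ℝ) : ℂ) + (φ : ℂ) * Complex.I := by
      apply Complex.ext <;> simp [Complex.log_re, Complex.log_im, hr_def, hφ_def]
    rw [Complex.cpow_def_of_ne_zero hz, hlog, add_mul, Complex.exp_add, cexpI]
    congr 1
    · rw [← Complex.ofReal_mul, ← Complex.ofReal_exp, Real.rpow_def_of_pos hr]
    · congr 1; push_cast; ring
  have hzE : z = ((r : ℝ) : ℂ) * cexpI φ := by
    rw [cexpI]; exact (Complex.norm_mul_exp_arg_mul_I z).symm
  clear_value r φ Ψ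
  clear hargz
  have hΨπ : Ψ < Real.pi := by rw [hΨ_def]; linarith [hθπ']
  have hΨhalf : Real.pi / 2 < Ψ := by rw [hΨ_def]; nlinarith
  have hΨ0 : 0 < Ψ := lt_trans (by positivity) hΨhalf
  have hC : Real.cos Ψ ≤ 0 :=
    Real.cos_nonpos_of_pi_div_two_le_of_le hΨhalf.le (by linarith)
  have hS : 0 < Real.sin Ψ := Real.sin_pos_of_pos_of_lt_pi hΨ0 hΨπ
  have hθltπ : θ < Real.pi := by nlinarith
  have hs1 : 0 < Real.sin θ := Real.sin_pos_of_pos_of_lt_pi hθ0 hθltπ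
  have hs1' : Real.sin θ ≤ 1 := Real.sin_le_one θ
  set N : ℂ := z + (a : ℂ) * z ^ ((1 + α : ℝ) : ℂ) with hN_def
  set D : ℂ := 1 + (b : ℂ) * z ^ ((β : ℝ) : ℂ) with hD_def
  set t : ℝ := lam * μ with ht_def
  have ht : 0 < t := by rw [ht_def]; positivity
  have hm2 : 0 < a * r ^ (1 + α : ℝ) := mul_pos ha (Real.rpow_pos_of_pos hr _)
  have hm3 : 0 < b * r ^ (β : ℝ) := mul_pos hb (Real.rpow_pos_of_pos hr _)
  have hNE : N = ((r : ℝ) : ℂ) * cexpI φ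
      + ((a * r ^ (1 + α : ℝ) : ℝ) : ℂ) * cexpI ((1 + α) * φ) := by
    rw [hN_def, hpow (1 + α)]
    nth_rewrite 1 [hzE]
    push_cast
    ring
  have hDE : D = 1 + ((b * r ^ (β : ℝ) : ℝ) : ℂ) * cexpI (β * φ) := by
    rw [hD_def, hpow β]; push_cast; ring
  have hcpow1 : z ^ ((1 + α : ℝ) : ℂ) = z * z ^ ((α : ℝ) : ℂ) := by
    have hcast : ((1 + α : ℝ) : ℂ) = (1 : ℂ) + ((α : ℝ) : ℂ) := by push_cast; ring
    rw [hcast, Complex.cpow_add _ _ hz, Complex.cpow_one]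
  have hNz : N = z * (1 + (a : ℂ) * z ^ ((α : ℝ) : ℂ)) := by
    rw [hN_def, hcpow1]; ring
  clear_value N D t
  have hconjD : (starRingEnd ℂ) D = 1 + ((b * r ^ (β : ℝ) : ℝ) : ℂ) * cexpI (-(β * φ)) := by
    rw [hDE]; simp [conj_cexpI, Complex.conj_ofReal]
  have hw : N * (starRingEnd ℂ) D =
      ((r : ℝ) : ℂ) * cexpI φ + ((a * r ^ (1 + α : ℝ) : ℝ) : ℂ) * cexpI ((1 + α) * φ)
        + ((r * (b * r ^ (β : ℝ)) : ℝ) : ℂ) * cexpI (φ + -(β * φ))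
        + ((a * r ^ (1 + α : ℝ) * (b * r ^ (β : ℝ)) : ℝ) : ℂ) *
            cexpI ((1 + α) * φ + -(β * φ)) := by
    rw [hNE, hconjD, ← cexpI_mul φ (-(β * φ)), ← cexpI_mul ((1 + α) * φ) (-(β * φ))]
    push_cast
    ring
  have hPre : (N * (starRingEnd ℂ) D).re =
      r * Real.cos φ + a * r ^ (1 + α : ℝ) * Real.cos ((1 + α) * φ)
        + r * (b * r ^ (β : ℝ)) * Real.cos (φ + -(β * φ))
        + a * r ^ (1 + α : ℝ) * (b * r ^ (β : ℝ)) * Real.cos ((1 + α) * φ + -(β * φ)) := by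
    rw [hw]; simp [mul_cexpI_re, cexpI_re, cexpI_im]
  have hQim : (N * (starRingEnd ℂ) D).im =
      r * Real.sin φ + a * r ^ (1 + α : ℝ) * Real.sin ((1 + α) * φ)
        + r * (b * r ^ (β : ℝ)) * Real.sin (φ + -(β * φ))
        + a * r ^ (1 + α : ℝ) * (b * r ^ (β : ℝ)) * Real.sin ((1 + α) * φ + -(β * φ)) := by
    rw [hw]; simp [mul_cexpI_im, cexpI_re, cexpI_im]
  -- the pointing bound
  have hkey : Real.cos Ψ *
      (‖N‖ * ‖D‖) ≤ (N * (starRingEnd ℂ) D).re := by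
    have habsw : ‖N‖ * ‖D‖ =
        Real.sqrt (((N * (starRingEnd ℂ) D).re) ^ 2 + ((N * (starRingEnd ℂ) D).im) ^ 2) := by
      rw [← Complex.norm_conj D, ← norm_mul, Complex.norm_def, Complex.normSq_apply]
      congr 1
      ring
    rw [habsw, hPre, hQim]
    exact sector_key α β θ Ψ φ r _ _ hα0 hα1 hβ0 hβ1 hθ0 hφl hφu hΨ_def hΨπ hC hS.le
      hr hm2 hm3
  clear hw hconjD hPre hQim
  -- quadratic lower bound : |N + tD| ≥ sin Ψ |N|
  have hNorm : (‖N + (t : ℂ) * D‖) ^ 2 =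
      (‖N‖) ^ 2 + 2 * t * (N * (starRingEnd ℂ) D).re
        + t ^ 2 * (‖D‖) ^ 2 := by
    rw [Complex.sq_norm, Complex.sq_norm, Complex.sq_norm, Complex.normSq_add]
    have h1 : N * (starRingEnd ℂ) ((t : ℂ) * D) = (t : ℂ) * (N * (starRingEnd ℂ) D) := by
      rw [map_mul, Complex.conj_ofReal]; ring
    rw [h1, Complex.normSq_mul, Complex.normSq_ofReal]
    have h2 : ((t : ℂ) * (N * (starRingEnd ℂ) D)).re = t * (N * (starRingEnd ℂ) D).re := by
      simp [Complex.mul_re]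
    rw [h2]; ring
  have hquad : Real.sin Ψ * ‖N‖ ≤ ‖N + (t : ℂ) * D‖ := by
    have hsc : Real.sin Ψ ^ 2 + Real.cos Ψ ^ 2 = 1 := Real.sin_sq_add_cos_sq Ψ
    have h2tP : 2 * t * (Real.cos Ψ * (‖N‖ * ‖D‖)) ≤
        2 * t * (N * (starRingEnd ℂ) D).re :=
      mul_le_mul_of_nonneg_left hkey (by linarith)
    have hX2 : (Real.sin Ψ * ‖N‖) ^ 2 ≤ (‖N + (t : ℂ) * D‖) ^ 2 := by
      nlinarith [sq_nonneg (Real.cos Ψ * ‖N‖ + t * ‖D‖),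
        sq_nonneg (‖N‖), hNorm, h2tP, hsc]
    nlinarith [hX2, norm_nonneg (N + (t : ℂ) * D),
      mul_nonneg hS.le (norm_nonneg N)]
  -- lower bound for |N|
  have hure : ((a : ℂ) * z ^ ((α : ℝ) : ℂ)).re = a * r ^ (α : ℝ) * Real.cos (α * φ) := by
    rw [hpow α]
    rw [show (a : ℂ) * (((r ^ (α:ℝ) : ℝ)) * cexpI (α * φ)) =
      ((a * r ^ (α:ℝ) : ℝ) : ℂ) * cexpI (α * φ) by push_cast; ring, mul_cexpI_re]
  have habsu : ‖(a : ℂ) * z ^ ((α : ℝ) : ℂ)‖ = a * r ^ (α : ℝ) := by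
    rw [norm_mul, Complex.norm_real, Real.norm_eq_abs, Complex.norm_cpow_real, abs_of_pos ha, ← hr_def]
  have hαθ2 : α * θ < Real.pi / 2 := by
    have hax : α * θ < θ := mul_lt_of_lt_one_left hθ0 hα1
    linarith [hθπ']
  have hcosα : 0 ≤ Real.cos (α * φ) := by
    have j1 : α * φ ≤ α * θ := mul_le_mul_of_nonneg_left hφu.le hα0.le
    have j2 : α * -θ ≤ α * φ := mul_le_mul_of_nonneg_left hφl.le hα0.le
    rw [mul_neg] at j2
    apply Real.cos_nonneg_of_mem_Icc
    constructor <;> [linarith; linarith]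
  have hm1 : 0 < a * r ^ (α : ℝ) := mul_pos ha (Real.rpow_pos_of_pos hr α)
  have h1u : max 1 (a * r ^ (α : ℝ)) ≤ ‖1 + (a : ℂ) * z ^ ((α : ℝ) : ℂ)‖ := by
    have hn : (‖1 + (a : ℂ) * z ^ ((α : ℝ) : ℂ)‖) ^ 2 =
        1 + 2 * (a * r ^ (α : ℝ) * Real.cos (α * φ)) + (a * r ^ (α : ℝ)) ^ 2 := by
      rw [Complex.sq_norm, Complex.normSq_add, ← Complex.sq_norm ((a : ℂ) * z ^ ((α : ℝ) : ℂ)),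
        habsu, one_mul, Complex.normSq_one, Complex.conj_re, hure]
      ring
    have h0 := norm_nonneg (1 + (a : ℂ) * z ^ ((α : ℝ) : ℂ))
    have hterm : 0 ≤ a * r ^ (α : ℝ) * Real.cos (α * φ) := mul_nonneg hm1.le hcosα
    exact sq_max_le h0 hm1.le hterm hn
  have hNlow : r * max 1 (a * r ^ (α : ℝ)) ≤ ‖N‖ := by
    rw [hNz, norm_mul, ← hr_def]
    exact mul_le_mul_of_nonneg_left h1u hr.le
  have hDle : ‖D‖ ≤ 1 + b * r ^ (β : ℝ) := by
    rw [hDE]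
    refine le_trans (norm_add_le _ _) (le_of_eq ?_)
    rw [norm_one, norm_mul, Complex.norm_real, Real.norm_eq_abs, abs_cexpI, mul_one, abs_of_pos hm3]
  have hDne : D ≠ 0 := by
    intro h0
    have h1 : D.im = 0 := by rw [h0]; simp
    have h2 : D.im = b * r ^ (β : ℝ) * Real.sin (β * φ) := by
      rw [hDE]; simp [mul_cexpI_im, cexpI_im]
    have hsin0 : Real.sin (β * φ) = 0 := by
      rcases mul_eq_zero.1 (h1 ▸ h2).symm with h | h
      · exact absurd h hm3.ne'
      · exact h
    have hβφ : β * φ = 0 := by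
      refine (Real.sin_eq_zero_iff_of_lt_of_lt ?_ ?_).1 hsin0
      · have j1 := mul_lt_mul_of_pos_left hφl hβ0
        rw [mul_neg] at j1
        have j2 := mul_nonneg (by linarith : (0:ℝ) ≤ 1 - β) hθ0.le
        rw [sub_mul, one_mul] at j2
        linarith [hθltπ]
      · have j1 := mul_lt_mul_of_pos_left hφu hβ0
        have j2 := mul_nonneg (by linarith : (0:ℝ) ≤ 1 - β) hθ0.le
        rw [sub_mul, one_mul] at j2
        linarith [hθltπ]
    have hre : D.re = 1 + b * r ^ (β : ℝ) := by
      rw [hDE, hβφ]; simp [mul_cexpI_re, cexpI_re]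
    rw [h0] at hre
    simp at hre
    linarith [hm3]
  have hμc : (μ : ℂ) ≠ 0 := Complex.ofReal_ne_zero.2 hμ.ne'
  have hgl : oldroydSymbol a b μ α β z + (lam : ℂ) = (N + (t : ℂ) * D) / ((μ : ℂ) * D) := by
    have hsym : oldroydSymbol a b μ α β z = N / ((μ : ℂ) * D) := by
      simp only [oldroydSymbol]
      rw [← hN_def, ← hD_def]
    rw [hsym]
    rw [div_add' _ _ _ (mul_ne_zero hμc hDne)]
    congr 1
    rw [ht_def]
    push_cast
    ring
  have habsgl : ‖oldroydSymbol a b μ α β z + (lam : ℂ)‖ =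
      ‖N + (t : ℂ) * D‖ / (μ * ‖D‖) := by
    rw [hgl, norm_div, norm_mul, Complex.norm_real, Real.norm_eq_abs, abs_of_pos hμ]
  have hM1 : (1 : ℝ) ≤ max 1 (a * r ^ (α : ℝ)) := le_max_left _ _
  have hM0 : (0 : ℝ) < max 1 (a * r ^ (α : ℝ)) := lt_of_lt_of_le one_pos hM1
  have hD0 : 0 < ‖D‖ := norm_pos_iff.mpr hDne
  have hN0 : 0 < ‖N‖ := lt_of_lt_of_le (mul_pos hr hM0) hNlow
  have hA0 : 0 < ‖N + (t : ℂ) * D‖ := lt_of_lt_of_le (mul_pos hS hN0) hquad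
  have hmin : min 1 (r ^ (-α) / a) = 1 / max 1 (a * r ^ (α : ℝ)) := by
    have hx : r ^ (-α) / a = 1 / (a * r ^ (α : ℝ)) := by
      rw [Real.rpow_neg hr.le]
      field_simp
    rw [hx]
    rcases le_total 1 (a * r ^ (α : ℝ)) with h | h
    · rw [max_eq_right h, min_eq_right]
      rw [div_le_one hm1]
      linarith
    · have h1 : (1 : ℝ) ≤ 1 / (a * r ^ (α : ℝ)) := by
        rw [le_div_iff₀ hm1]
        linarith
      rw [max_eq_left h, min_eq_left h1]
      norm_num
  have h2r : r ^ (-2 : ℝ) = 1 / r ^ 2 := by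
    rw [Real.rpow_neg hr.le, show ((2:ℝ)) = ((2:ℕ):ℝ) by norm_num, Real.rpow_natCast,
      one_div]
  have h3r : r ^ (β - 2 : ℝ) = r ^ (β : ℝ) / r ^ 2 := by
    rw [show (β - 2 : ℝ) = β + (-2) by ring, Real.rpow_add hr, h2r]
    ring
  rw [habsgl, Real.sin_pi_sub, Real.sin_pi_sub, hmin, h2r, h3r]
  have hLHS : r * (‖N + (t : ℂ) * D‖ / (μ * ‖D‖)) =
      r * ‖N + (t : ℂ) * D‖ / (μ * ‖D‖) := by ring
  rw [hLHS, one_div_div]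
  have hRHS : μ / (Real.sin θ * Real.sin Ψ) * (1 / r ^ 2 + b * (r ^ (β : ℝ) / r ^ 2)) *
        (1 / max 1 (a * r ^ (α : ℝ))) =
      μ * (1 + b * r ^ (β : ℝ)) /
        (Real.sin θ * Real.sin Ψ * r ^ 2 * max 1 (a * r ^ (α : ℝ))) := by
    field_simp
  rw [hRHS]
  have hstep1 : Real.sin θ * (Real.sin Ψ * (r * max 1 (a * r ^ (α : ℝ)))) ≤
      ‖N + (t : ℂ) * D‖ := by
    have h1 : Real.sin Ψ * (r * max 1 (a * r ^ (α : ℝ))) ≤ ‖N + (t : ℂ) * D‖ :=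
      le_trans (mul_le_mul_of_nonneg_left hNlow hS.le) hquad
    have h2 : Real.sin θ * (Real.sin Ψ * (r * max 1 (a * r ^ (α : ℝ)))) ≤
        Real.sin Ψ * (r * max 1 (a * r ^ (α : ℝ))) :=
      mul_le_of_le_one_left (mul_pos hS (mul_pos hr hM0)).le hs1'
    linarith
  have hnum : μ * ‖D‖ ≤ μ * (1 + b * r ^ (β : ℝ)) :=
    mul_le_mul_of_nonneg_left hDle hμ.le
  refine div_le_div₀
    (mul_nonneg hμ.le (by linarith [hm3] : (0:ℝ) ≤ 1 + b * r ^ (β : ℝ))) hnum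
    (mul_pos (mul_pos (mul_pos hs1 hS) (pow_pos hr 2)) hM0) ?_
  have heq : Real.sin θ * Real.sin Ψ * r ^ 2 * max 1 (a * r ^ (α : ℝ)) =
      r * (Real.sin θ * (Real.sin Ψ * (r * max 1 (a * r ^ (α : ℝ))))) := by ring
  rw [heq]
  exact mul_le_mul_of_nonneg_left hstep1 hr.le
end

section
/- Fix α, β ∈ (0,1), positive reals a, b, T, θ ∈ (π/2, π), and a nonnegative integer m. There exists a constant C > 0 such that for all t ∈ (0, T]: 2·∫_{1/t}^∞ ρ^{m−1} (ρ + a ρ^{1+α}) · min{1, ρ^{−β}/b} · e^{t ρ cos θ} dρ + t^{−m} · ((1/t) + a (1/t)^{1+α}) · min{1, t^{β}/b} · ∫_{−θ}^{θ} e^{cos ψ} dψ ≤ C · t^{−m−1−α+β}. -/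
open MeasureTheory intervalIntegral

lemma auxInt {s r : ℝ} (hs : 0 < s) (hr : 0 < r) :
    IntegrableOn (fun x : ℝ => x ^ (s - 1) * Real.exp (-(r * x))) (Set.Ioi 0) := by
  have h := integrableOn_rpow_mul_exp_neg_mul_rpow (s := s - 1) (p := 1) (b := r)
    (by linarith) one_pos hr
  refine h.congr_fun (fun x hx => ?_) measurableSet_Ioi
  simp only [Real.rpow_one]
  ring_nf

lemma auxLe {s r u : ℝ} (hs : 0 < s) (hr : 0 < r) (hu : 0 ≤ u) :
    ∫ x in Set.Ioi u, x ^ (s - 1) * Real.exp (-(r * x)) ≤ (1 / r) ^ s * Real.Gamma s := by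
  rw [← Real.integral_rpow_mul_exp_neg_mul_Ioi hs hr]
  refine setIntegral_mono_set (auxInt hs hr) ?_ ?_
  · refine (ae_restrict_iff' measurableSet_Ioi).2 (Filter.Eventually.of_forall fun x hx => ?_)
    have : (0:ℝ) < x := hx
    positivity
  · exact (Set.Ioi_subset_Ioi hu).eventuallyLE

/-- The arclength integral over `Γ_{θ,1/t}` of
`|z|^{m-1} (|z| + a|z|^{1+α}) min{1, |z|^{-β}/b} e^{t Re z}`, written out over
the two rays and the arc, is bounded by `C t^{-m-1-α+β}` uniformly for
`t ∈ (0, T]`: this yields the `ν = 1` smoothing bound of Theorem 2.1. -/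
theorem contour_integral_bound_nu_one (α β a b T θ : ℝ)
    (hα : α ∈ Set.Ioo (0 : ℝ) 1) (hβ : β ∈ Set.Ioo (0 : ℝ) 1)
    (ha : 0 < a) (hb : 0 < b) (hT : 0 < T)
    (hθ : Real.pi / 2 < θ) (hθπ : θ < Real.pi) (m : ℕ) :
    ∃ C > 0, ∀ t ∈ Set.Ioc (0 : ℝ) T,
      2 * (∫ ρ in Set.Ioi (1 / t),
            ρ ^ ((m : ℝ) - 1) * (ρ + a * ρ ^ (1 + α)) * min 1 (ρ ^ (-β) / b) *
              Real.exp (t * ρ * Real.cos θ)) +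
          t ^ (-(m : ℝ)) * (1 / t + a * (1 / t) ^ (1 + α)) * min 1 (t ^ β / b) *
            ∫ ψ in (-θ)..θ, Real.exp (Real.cos ψ) ≤
        C * t ^ (-(m : ℝ) - 1 - α + β) := by
  obtain ⟨hα0, hα1⟩ := hα
  obtain ⟨hβ0, hβ1⟩ := hβ
  have hm : (0:ℝ) ≤ (m:ℝ) := Nat.cast_nonneg m
  set c : ℝ := -Real.cos θ with hc_def
  have hc : 0 < c := by
    have h := Real.cos_neg_of_pi_div_two_lt_of_lt hθ (by linarith [Real.pi_pos])
    simp only [hc_def]; linarith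
  set s₁ : ℝ := (m:ℝ) + 1 - β with hs₁_def
  set s₂ : ℝ := (m:ℝ) + 1 + α - β with hs₂_def
  have hs₁ : 0 < s₁ := by simp only [hs₁_def]; linarith
  have hs₂ : 0 < s₂ := by simp only [hs₂_def]; linarith
  set K : ℝ := ∫ ψ in (-θ)..θ, Real.exp (Real.cos ψ) with hK_def
  have hK : 0 ≤ K := by
    refine intervalIntegral.integral_nonneg (by linarith [Real.pi_pos]) fun x _ => ?_
    exact (Real.exp_pos _).le
  set C₁ : ℝ := (1/b) * ((1/c) ^ s₁ * Real.Gamma s₁ * T ^ α + a * ((1/c) ^ s₂ * Real.Gamma s₂))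
    with hC₁_def
  have hC₁ : 0 ≤ C₁ := by positivity
  refine ⟨2*C₁ + (1/b)*(T^α + a)*K + 1, by positivity, fun t ht => ?_⟩
  obtain ⟨ht0, htT⟩ := ht
  set E : ℝ := -(m:ℝ) - 1 - α + β with hE_def
  have htE : 0 < t ^ E := Real.rpow_pos_of_pos ht0 _
  have htα : t ^ α ≤ T ^ α := Real.rpow_le_rpow ht0.le htT hα0.le
  have hu : (0:ℝ) < 1 / t := by positivity
  have hr : 0 < c * t := by positivity
  have htmul : ∀ x y : ℝ, t ^ x * t ^ y = t ^ (x + y) := fun x y => (Real.rpow_add ht0 x y).symm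
  -- ray part
  set g : ℝ → ℝ := fun ρ =>
    (1/b) * (ρ ^ (s₁ - 1) * Real.exp (-(c*t*ρ)) + a * (ρ ^ (s₂ - 1) * Real.exp (-(c*t*ρ))))
    with hg_def
  have hint1 := auxInt hs₁ hr
  have hint2 := auxInt hs₂ hr
  have hg_int : IntegrableOn g (Set.Ioi (0:ℝ)) :=
    (hint1.add (hint2.const_mul a)).const_mul (1/b)
  have hg_nonneg : ∀ ρ ∈ Set.Ioi (0:ℝ), 0 ≤ g ρ := by
    intro ρ hρ
    have hρ0 : (0:ℝ) < ρ := hρ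
    simp only [hg_def]
    positivity
  set f : ℝ → ℝ := fun ρ =>
    ρ ^ ((m : ℝ) - 1) * (ρ + a * ρ ^ (1 + α)) * min 1 (ρ ^ (-β) / b) *
      Real.exp (t * ρ * Real.cos θ) with hf_def
  have hf_nonneg : ∀ ρ ∈ Set.Ioi (1/t), 0 ≤ f ρ := by
    intro ρ hρ
    have hρ0 : (0:ℝ) < ρ := lt_trans hu hρ
    have h1 : 0 ≤ ρ ^ ((m:ℝ)-1) := Real.rpow_nonneg hρ0.le _
    have h2 : 0 ≤ ρ + a * ρ ^ (1+α) :=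
      add_nonneg hρ0.le (mul_nonneg ha.le (Real.rpow_nonneg hρ0.le _))
    have h3 : 0 ≤ min 1 (ρ ^ (-β) / b) :=
      le_min zero_le_one (div_nonneg (Real.rpow_nonneg hρ0.le _) hb.le)
    exact mul_nonneg (mul_nonneg (mul_nonneg h1 h2) h3) (Real.exp_pos _).le
  have hfg : ∀ ρ ∈ Set.Ioi (1/t), f ρ ≤ g ρ := by
    intro ρ hρ
    have hρ0 : (0:ℝ) < ρ := lt_trans hu hρ
    have hmul : ∀ x y : ℝ, ρ ^ x * ρ ^ y = ρ ^ (x + y) := fun x y => (Real.rpow_add hρ0 x y).symm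
    have hexp : Real.exp (t * ρ * Real.cos θ) = Real.exp (-(c*t*ρ)) := by
      congr 1; simp only [hc_def]; ring
    have hminle : min 1 (ρ ^ (-β) / b) ≤ ρ ^ (-β) / b := min_le_right _ _
    have hA : 0 ≤ ρ ^ ((m : ℝ) - 1) * (ρ + a * ρ ^ (1 + α)) := by
      have h1 : 0 ≤ ρ ^ ((m:ℝ)-1) := Real.rpow_nonneg hρ0.le _
      have h2 : 0 ≤ ρ + a * ρ ^ (1+α) :=
        add_nonneg hρ0.le (mul_nonneg ha.le (Real.rpow_nonneg hρ0.le _))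
      exact mul_nonneg h1 h2
    have h1 : f ρ ≤ ρ ^ ((m : ℝ) - 1) * (ρ + a * ρ ^ (1 + α)) * (ρ ^ (-β) / b) *
        Real.exp (t * ρ * Real.cos θ) := by
      simp only [hf_def]
      exact mul_le_mul_of_nonneg_right (mul_le_mul_of_nonneg_left hminle hA) (Real.exp_pos _).le
    refine h1.trans_eq ?_
    have e1 : ρ ^ ((m:ℝ)-1) * ρ ^ (1:ℝ) * ρ ^ (-β) = ρ ^ (s₁ - 1) := by
      rw [hmul, hmul]; congr 1; simp only [hs₁_def]; ring
    have e2 : ρ ^ ((m:ℝ)-1) * ρ ^ (1+α) * ρ ^ (-β) = ρ ^ (s₂ - 1) := by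
      rw [hmul, hmul]; congr 1; simp only [hs₂_def]; ring
    simp only [hg_def]
    rw [hexp, ← e1, ← e2, Real.rpow_one]
    ring
  have hf_meas : AEStronglyMeasurable f (volume.restrict (Set.Ioi (1/t))) := by
    apply Measurable.aestronglyMeasurable
    simp only [hf_def]
    fun_prop
  have hf_int : IntegrableOn f (Set.Ioi (1/t)) := by
    refine Integrable.mono' (hg_int.mono_set (Set.Ioi_subset_Ioi hu.le)) hf_meas ?_
    refine (ae_restrict_iff' measurableSet_Ioi).2 (Filter.Eventually.of_forall fun ρ hρ => ?_)
    rw [Real.norm_eq_abs, abs_of_nonneg (hf_nonneg ρ hρ)]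
    exact hfg ρ hρ
  have hI1 : ∫ ρ in Set.Ioi (1/t), f ρ ≤ ∫ ρ in Set.Ioi (1/t), g ρ :=
    setIntegral_mono_on hf_int (hg_int.mono_set (Set.Ioi_subset_Ioi hu.le))
      measurableSet_Ioi hfg
  have hI2 : ∫ ρ in Set.Ioi (1/t), g ρ ≤ ∫ ρ in Set.Ioi (0:ℝ), g ρ :=
    setIntegral_mono_set hg_int
      ((ae_restrict_iff' measurableSet_Ioi).2 (Filter.Eventually.of_forall hg_nonneg))
      (Set.Ioi_subset_Ioi hu.le).eventuallyLE
  have hI3 : ∫ ρ in Set.Ioi (0:ℝ), g ρ ≤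
      (1/b) * ((1/(c*t)) ^ s₁ * Real.Gamma s₁ + a * ((1/(c*t)) ^ s₂ * Real.Gamma s₂)) := by
    simp only [hg_def]
    rw [MeasureTheory.integral_const_mul, MeasureTheory.integral_add hint1 (hint2.const_mul a), MeasureTheory.integral_const_mul]
    have A1 := auxLe hs₁ hr (le_refl (0:ℝ))
    have A2 := auxLe hs₂ hr (le_refl (0:ℝ))
    gcongr
  have hray : ∫ ρ in Set.Ioi (1/t), f ρ ≤ C₁ * t ^ E := by
    refine (hI1.trans (hI2.trans hI3)).trans ?_
    have hct : (1/(c*t) : ℝ) = (1/c) * (1/t) := by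
      rw [div_mul_div_comm, one_mul]
    have hpow : ∀ s : ℝ, (1/(c*t) : ℝ) ^ s = (1/c) ^ s * (1/t) ^ s := fun s => by
      rw [hct, Real.mul_rpow (by positivity) (by positivity)]
    have h1t : (1/t : ℝ) ^ s₁ = t ^ E * t ^ α := by
      rw [one_div, ← Real.rpow_neg_one t, ← Real.rpow_mul ht0.le, htmul]
      congr 1; simp only [hE_def, hs₁_def]; ring
    have h1t2 : (1/t : ℝ) ^ s₂ = t ^ E := by
      rw [one_div, ← Real.rpow_neg_one t, ← Real.rpow_mul ht0.le]
      congr 1; simp only [hE_def, hs₂_def]; ring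
    rw [hpow, hpow, h1t, h1t2]
    have heq : (1/b) * ((1/c) ^ s₁ * (t ^ E * t ^ α) * Real.Gamma s₁ +
        a * ((1/c) ^ s₂ * t ^ E * Real.Gamma s₂)) =
        (1/b) * ((1/c) ^ s₁ * Real.Gamma s₁ * t ^ α + a * ((1/c) ^ s₂ * Real.Gamma s₂)) * t ^ E := by
      ring
    rw [heq, hC₁_def]
    gcongr
  -- arc part
  have hmin2 : min 1 (t ^ β / b) ≤ t ^ β / b := min_le_right _ _
  have harc : t ^ (-(m:ℝ)) * (1/t + a*(1/t)^(1+α)) * min 1 (t^β/b) * K ≤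
      (1/b)*(T^α + a)*K * t ^ E := by
    have h0 : 0 ≤ t ^ (-(m:ℝ)) * (1/t + a*(1/t)^(1+α)) := by positivity
    have hP : t ^ (-(m:ℝ)) * (1/t + a*(1/t)^(1+α)) * min 1 (t^β/b) ≤ (1/b)*(T^α + a)*t ^ E := by
      calc t ^ (-(m:ℝ)) * (1/t + a*(1/t)^(1+α)) * min 1 (t^β/b)
          ≤ t ^ (-(m:ℝ)) * (1/t + a*(1/t)^(1+α)) * (t^β/b) :=
            mul_le_mul_of_nonneg_left hmin2 h0
        _ = (1/b) * (t ^ (-(m:ℝ)) * t ^ (-1:ℝ) * t^β +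
              a * (t ^ (-(m:ℝ)) * t ^ (-(1+α)) * t^β)) := by
            rw [show (1/t : ℝ) = t ^ (-1:ℝ) by rw [Real.rpow_neg_one, one_div],
              show (t ^ (-1:ℝ)) ^ (1+α) = t ^ (-(1+α)) by
                rw [← Real.rpow_mul ht0.le]; congr 1; ring]
            ring
        _ = (1/b) * (t ^ E * t ^ α + a * t ^ E) := by
            have e1 : t ^ (-(m:ℝ)) * t ^ (-1:ℝ) * t^β = t ^ E * t ^ α := by
              rw [htmul, htmul, htmul]; congr 1; simp only [hE_def]; ring
            have e2 : t ^ (-(m:ℝ)) * t ^ (-(1+α)) * t^β = t ^ E := by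
              rw [htmul, htmul]; congr 1; simp only [hE_def]; ring
            rw [e1, e2]
        _ ≤ (1/b) * (t ^ E * T ^ α + a * t ^ E) := by gcongr
        _ = (1/b)*(T^α + a)*t ^ E := by ring
    calc t ^ (-(m:ℝ)) * (1/t + a*(1/t)^(1+α)) * min 1 (t^β/b) * K
        ≤ ((1/b)*(T^α + a)*t ^ E) * K := mul_le_mul_of_nonneg_right hP hK
      _ = (1/b)*(T^α + a)*K * t ^ E := by ring
  have hfinal : 2 * (∫ ρ in Set.Ioi (1/t), f ρ) +
      t ^ (-(m:ℝ)) * (1/t + a*(1/t)^(1+α)) * min 1 (t^β/b) * K ≤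
      (2*C₁ + (1/b)*(T^α + a)*K + 1) * t ^ E := by
    nlinarith [hray, harc, htE.le]
  exact hfinal
end

section
/- Fix α, β ∈ (0,1), positive reals a, b, μ, θ ∈ (π/2, π/(1+α)), and a nonnegative integer m. There exists a constant C > 0 such that for every real λ > 0 and every t > 0, the contour integral F_{m,λ}(t) (defined in the context) is well defined (all three integrals converge absolutely) and satisfies |F_{m,λ}(t)| ≤ C · t^{−m}. -/
open MeasureTheory intervalIntegral

/-- `h_λ(z) = g(z) / (z (g(z) + λ))`, the eigenvalue-wise symbol of the
Laplace-transformed solution operator `Ê(z)`. -/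
noncomputable def oldroydKernel (a b μ α β lam : ℝ) (z : ℂ) : ℂ :=
  oldroydSymbol a b μ α β z / (z * (oldroydSymbol a b μ α β z + (lam : ℂ)))

/-- Integrand on the ray `{ρ e^{iθ'} : ρ ≥ 1/t}` of the contour `Γ_{θ,1/t}`. -/
noncomputable def rayIntegrand (a b μ α β lam : ℝ) (m : ℕ) (t θ' : ℝ) (ρ : ℝ) : ℂ :=
  ((ρ : ℂ) * Complex.exp ((θ' : ℂ) * Complex.I)) ^ m *
    Complex.exp ((t : ℂ) * (ρ : ℂ) * Complex.exp ((θ' : ℂ) * Complex.I)) *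
    oldroydKernel a b μ α β lam ((ρ : ℂ) * Complex.exp ((θ' : ℂ) * Complex.I))

/-- Integrand on the arc `{(1/t) e^{iψ} : |ψ| ≤ θ}` of the contour `Γ_{θ,1/t}`. -/
noncomputable def arcIntegrand (a b μ α β lam : ℝ) (m : ℕ) (t : ℝ) (ψ : ℝ) : ℂ :=
  Complex.exp ((ψ : ℂ) * Complex.I) *
    (((1 / t : ℝ) : ℂ) * Complex.exp ((ψ : ℂ) * Complex.I)) ^ m *
    Complex.exp (Complex.exp ((ψ : ℂ) * Complex.I)) *
    oldroydKernel a b μ α β lam (((1 / t : ℝ) : ℂ) * Complex.exp ((ψ : ℂ) * Complex.I))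

/-- The contour integral
`F_{m,λ}(t) = (1/2πi) ∫_{Γ_{θ,1/t}} e^{zt} z^m h_λ(z) dz`,
written out over the two rays and the arc of `Γ_{θ,1/t}`. -/
noncomputable def contourF (a b μ α β lam θ : ℝ) (m : ℕ) (t : ℝ) : ℂ :=
  (1 / (2 * (Real.pi : ℂ) * Complex.I)) *
    (Complex.exp ((θ : ℂ) * Complex.I) *
        (∫ ρ in Set.Ioi (1 / t), rayIntegrand a b μ α β lam m t θ ρ) -
      Complex.exp ((-θ : ℂ) * Complex.I) *
        (∫ ρ in Set.Ioi (1 / t), rayIntegrand a b μ α β lam m t (-θ) ρ) +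
      (Complex.I / (t : ℂ)) * ∫ ψ in (-θ)..θ, arcIntegrand a b μ α β lam m t ψ)

namespace Complex

noncomputable def abs : AbsoluteValue ℂ ℝ := IsAbsoluteValue.toAbsoluteValue (norm : ℂ → ℝ)

theorem abs_def' (z : ℂ) : Complex.abs z = ‖z‖ := rfl

theorem norm_eq_abs (z : ℂ) : ‖z‖ = Complex.abs z := rfl

theorem abs_apply (z : ℂ) : Complex.abs z = Real.sqrt (Complex.normSq z) := by
  rw [abs_def']; exact Complex.norm_def z

theorem abs_exp (z : ℂ) : Complex.abs (Complex.exp z) = Real.exp z.re := by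
  rw [abs_def']; exact Complex.norm_exp z

theorem sq_abs (z : ℂ) : Complex.abs z ^ 2 = Complex.normSq z := by
  rw [abs_def']; exact Complex.sq_norm z

theorem abs_ofReal (r : ℝ) : Complex.abs (r : ℂ) = |r| := by
  rw [abs_def']; exact Complex.norm_real r

theorem abs_I : Complex.abs Complex.I = 1 := by
  rw [abs_def']; exact Complex.norm_I

theorem abs_two : Complex.abs (2 : ℂ) = 2 := by
  rw [abs_def']; exact Complex.norm_two

theorem abs_conj (z : ℂ) : Complex.abs ((starRingEnd ℂ) z) = Complex.abs z := by
  rw [abs_def', abs_def']; exact Complex.norm_conj z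

end Complex

namespace OldroydAux
open Set



noncomputable def E (φ : ℝ) : ℂ := Complex.exp ((φ:ℂ) * Complex.I)

lemma E_mul (s t : ℝ) : E s * E t = E (s + t) := by
  rw [E, E, E, ← Complex.exp_add]; push_cast; ring_nf

lemma E_re (φ : ℝ) : (E φ).re = Real.cos φ := by
  simp [E, Complex.exp_mul_I, Complex.cos_ofReal_re]

lemma E_im (φ : ℝ) : (E φ).im = Real.sin φ := by
  simp [E, Complex.exp_mul_I, Complex.sin_ofReal_re]

lemma E_abs (φ : ℝ) : Complex.abs (E φ) = 1 := by simp [E, Complex.abs_exp]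

lemma conj_E (φ : ℝ) : (starRingEnd ℂ) (E φ) = E (-φ) := by
  rw [E, E, ← Complex.exp_conj]; congr 1; simp

lemma half_plane_sector {γ x y : ℝ} (hs : 0 < Real.sin γ) (hc : Real.cos γ ≤ 0)
    (hy : 0 ≤ y) (h2 : y * Real.cos γ ≤ x * Real.sin γ) :
    Real.cos γ * Real.sqrt (x ^ 2 + y ^ 2) ≤ x := by
  set R := Real.sqrt (x ^ 2 + y ^ 2) with hR
  have hR0 : 0 ≤ R := Real.sqrt_nonneg _
  have hR2 : R ^ 2 = x ^ 2 + y ^ 2 := Real.sq_sqrt (by positivity)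
  rcases le_or_gt 0 x with hx | hx
  · calc Real.cos γ * R ≤ 0 := mul_nonpos_of_nonpos_of_nonneg hc hR0
    _ ≤ x := hx
  · have hxs : x * Real.sin γ ≤ 0 := (mul_neg_of_neg_of_pos hx hs).le
    have h3 : x ^ 2 * Real.sin γ ^ 2 ≤ y ^ 2 * Real.cos γ ^ 2 := by
      nlinarith [mul_nonneg (neg_nonneg.2 (h2.trans hxs)) (neg_nonneg.2 hxs)]
    have h4 : x ^ 2 ≤ Real.cos γ ^ 2 * R ^ 2 := by
      nlinarith [Real.sin_sq_add_cos_sq γ]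
    nlinarith [mul_nonpos_of_nonpos_of_nonneg hc hR0]

/-- Sum of four sector terms, angles in `[0, γ]`, stays in the sector. -/
lemma sum4_core {γ : ℝ} (hγ : γ ≤ Real.pi) (hs : 0 < Real.sin γ) (hc : Real.cos γ ≤ 0)
    {r1 r2 r3 r4 φ1 φ2 φ3 φ4 : ℝ}
    (h1 : 0 ≤ r1) (h2 : 0 ≤ r2) (h3 : 0 ≤ r3) (h4 : 0 ≤ r4)
    (a1 : φ1 ∈ Set.Icc 0 γ) (a2 : φ2 ∈ Set.Icc 0 γ)
    (a3 : φ3 ∈ Set.Icc 0 γ) (a4 : φ4 ∈ Set.Icc 0 γ) :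
    Real.cos γ * Complex.abs ((r1:ℂ) * E φ1 + (r2:ℂ) * E φ2 + (r3:ℂ) * E φ3 + (r4:ℂ) * E φ4)
      ≤ ((r1:ℂ) * E φ1 + (r2:ℂ) * E φ2 + (r3:ℂ) * E φ3 + (r4:ℂ) * E φ4).re := by
  set w := (r1:ℂ) * E φ1 + (r2:ℂ) * E φ2 + (r3:ℂ) * E φ3 + (r4:ℂ) * E φ4 with hw
  have hsin : ∀ r φ : ℝ, 0 ≤ r → φ ∈ Set.Icc 0 γ → 0 ≤ r * Real.sin φ := by
    intro r φ hr hφ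
    exact mul_nonneg hr (Real.sin_nonneg_of_nonneg_of_le_pi hφ.1 (hφ.2.trans hγ))
  have hsin' : ∀ r φ : ℝ, 0 ≤ r →
      φ ∈ Set.Icc 0 γ → r * Real.sin (φ - γ) ≤ 0 := by
    intro r φ hr hφ
    apply mul_nonpos_of_nonneg_of_nonpos hr
    apply Real.sin_nonpos_of_nonpos_of_neg_pi_le (by linarith [hφ.2])
    linarith [hφ.1, hγ, Real.pi_pos]
  have him : w.im = r1 * Real.sin φ1 + r2 * Real.sin φ2 + r3 * Real.sin φ3
      + r4 * Real.sin φ4 := by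
    simp [hw, Complex.add_im, Complex.mul_im, E_im, E_re]
  have hre : w.re = r1 * Real.cos φ1 + r2 * Real.cos φ2 + r3 * Real.cos φ3
      + r4 * Real.cos φ4 := by
    simp [hw, Complex.add_re, Complex.mul_re, E_im, E_re]
  have habsw : Complex.abs w = Real.sqrt (w.re ^ 2 + w.im ^ 2) := by
    rw [Complex.abs_apply, Complex.normSq_apply]; ring_nf
  have hy : 0 ≤ w.im := by
    rw [him]
    have := hsin r1 φ1 h1 a1; have := hsin r2 φ2 h2 a2
    have := hsin r3 φ3 h3 a3; have := hsin r4 φ4 h4 a4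
    linarith
  have hkey : w.im * Real.cos γ ≤ w.re * Real.sin γ := by
    rw [him, hre]
    have e1 := hsin' r1 φ1 h1 a1; have e2 := hsin' r2 φ2 h2 a2
    have e3 := hsin' r3 φ3 h3 a3; have e4 := hsin' r4 φ4 h4 a4
    rw [Real.sin_sub] at e1 e2 e3 e4
    nlinarith
  rw [habsw]
  exact half_plane_sector hs hc hy hkey


lemma im_termE (r φ : ℝ) : ((r:ℂ) * E φ).im = r * Real.sin φ := by
  simp [Complex.mul_im, E_im, E_re]

lemma re_termE (r φ : ℝ) : ((r:ℂ) * E φ).re = r * Real.cos φ := by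
  simp [Complex.mul_re, E_im, E_re]

lemma sum4_signed {γ : ℝ} (hγ : γ ≤ Real.pi) (hs : 0 < Real.sin γ) (hc : Real.cos γ ≤ 0)
    {r1 r2 r3 r4 c1 c2 c3 c4 ψ : ℝ}
    (h1 : 0 ≤ r1) (h2 : 0 ≤ r2) (h3 : 0 ≤ r3) (h4 : 0 ≤ r4)
    (b1 : 0 ≤ c1) (b2 : 0 ≤ c2) (b3 : 0 ≤ c3) (b4 : 0 ≤ c4)
    (g1 : c1 * |ψ| ≤ γ) (g2 : c2 * |ψ| ≤ γ) (g3 : c3 * |ψ| ≤ γ) (g4 : c4 * |ψ| ≤ γ) :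
    Real.cos γ * Complex.abs ((r1:ℂ) * E (c1*ψ) + (r2:ℂ) * E (c2*ψ)
        + (r3:ℂ) * E (c3*ψ) + (r4:ℂ) * E (c4*ψ))
      ≤ ((r1:ℂ) * E (c1*ψ) + (r2:ℂ) * E (c2*ψ) + (r3:ℂ) * E (c3*ψ) + (r4:ℂ) * E (c4*ψ)).re := by
  rcases le_or_gt 0 ψ with hψ | hψ
  · have habs : |ψ| = ψ := abs_of_nonneg hψ
    exact sum4_core hγ hs hc h1 h2 h3 h4
      ⟨mul_nonneg b1 hψ, habs ▸ g1⟩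
      ⟨mul_nonneg b2 hψ, habs ▸ g2⟩
      ⟨mul_nonneg b3 hψ, habs ▸ g3⟩
      ⟨mul_nonneg b4 hψ, habs ▸ g4⟩
  · have habs : |ψ| = -ψ := abs_of_neg hψ
    have hcore := sum4_core hγ hs hc h1 h2 h3 h4
      (φ1 := c1 * (-ψ)) (φ2 := c2 * (-ψ)) (φ3 := c3 * (-ψ)) (φ4 := c4 * (-ψ))
      ⟨mul_nonneg b1 (by linarith), habs ▸ g1⟩
      ⟨mul_nonneg b2 (by linarith), habs ▸ g2⟩
      ⟨mul_nonneg b3 (by linarith), habs ▸ g3⟩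
      ⟨mul_nonneg b4 (by linarith), habs ▸ g4⟩
    have key : ∀ c : ℝ, (starRingEnd ℂ) (E (c * (-ψ))) = E (c * ψ) := by
      intro c; rw [conj_E]; congr 1; ring
    have hconj : (r1:ℂ) * E (c1*ψ) + (r2:ℂ) * E (c2*ψ) + (r3:ℂ) * E (c3*ψ) + (r4:ℂ) * E (c4*ψ)
        = (starRingEnd ℂ) ((r1:ℂ) * E (c1*(-ψ)) + (r2:ℂ) * E (c2*(-ψ))
            + (r3:ℂ) * E (c3*(-ψ)) + (r4:ℂ) * E (c4*(-ψ))) := by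
      rw [map_add, map_add, map_add, map_mul, map_mul, map_mul, map_mul,
        key, key, key, key, Complex.conj_ofReal, Complex.conj_ofReal,
        Complex.conj_ofReal, Complex.conj_ofReal]
    rw [hconj, Complex.abs_conj, Complex.conj_re]
    exact hcore

lemma sector_div {K : ℝ} {n d : ℂ} (hd : d ≠ 0)
    (h : K * Complex.abs (n * (starRingEnd ℂ) d) ≤ (n * (starRingEnd ℂ) d).re) :
    K * Complex.abs (n / d) ≤ (n / d).re := by
  have hns : 0 < Complex.normSq d := Complex.normSq_pos.mpr hd
  have hre' : ∀ (w : ℂ) (s : ℝ), (w * (s:ℂ)).re = w.re * s := fun w s => by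
    simp [Complex.mul_re]
  have hdiv : n / d = (n * (starRingEnd ℂ) d) * ((((Complex.normSq d)⁻¹ : ℝ)) : ℂ) := by
    rw [div_eq_mul_inv, Complex.inv_def]; push_cast; ring
  rw [hdiv, map_mul, Complex.abs_ofReal, abs_of_nonneg (inv_nonneg.2 hns.le), hre']
  nlinarith [mul_le_mul_of_nonneg_right h (inv_nonneg.2 hns.le)]

lemma sector_resolvent {K : ℝ} (hK0 : -1 < K) (hK1 : K ≤ 0) {u : ℂ}
    (hu : K * Complex.abs u ≤ u.re) {lam : ℝ} (hlam : 0 < lam) :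
    u + (lam:ℂ) ≠ 0 ∧
    Complex.abs u ≤ Real.sqrt (1/(1+K)) * Complex.abs (u + (lam:ℂ)) := by
  have hK : 0 < 1 + K := by linarith
  have hexp : Complex.abs (u + (lam:ℂ)) ^ 2
      = Complex.abs u ^ 2 + 2 * lam * u.re + lam ^ 2 := by
    rw [Complex.sq_abs, Complex.sq_abs, Complex.normSq_apply, Complex.normSq_apply]
    simp [Complex.add_re, Complex.add_im]
    ring
  have hkey : (1 + K) * (Complex.abs u ^ 2 + lam ^ 2) ≤ Complex.abs (u + (lam:ℂ)) ^ 2 := by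
    rw [hexp]
    nlinarith [sq_nonneg (Complex.abs u - lam), Complex.abs.nonneg u,
      mul_le_mul_of_nonneg_left hu (le_of_lt hlam)]
  constructor
  · intro h0
    rw [h0] at hkey
    simp only [map_zero] at hkey
    nlinarith [Complex.abs.nonneg u, sq_nonneg (Complex.abs u), mul_pos hlam hlam]
  · have h1 : Complex.abs u ^ 2 ≤ (1/(1+K)) * Complex.abs (u + (lam:ℂ)) ^ 2 := by
      rw [div_mul_eq_mul_div, one_mul, le_div_iff₀ hK]
      nlinarith [sq_nonneg lam]
    calc Complex.abs u = Real.sqrt (Complex.abs u ^ 2) := by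
          rw [Real.sqrt_sq (Complex.abs.nonneg u)]
      _ ≤ Real.sqrt ((1/(1+K)) * Complex.abs (u + (lam:ℂ)) ^ 2) := Real.sqrt_le_sqrt h1
      _ = Real.sqrt (1/(1+K)) * Complex.abs (u + (lam:ℂ)) := by
          rw [Real.sqrt_mul (by positivity), Real.sqrt_sq (Complex.abs.nonneg _)]


lemma E_ne_zero (φ : ℝ) : E φ ≠ 0 := Complex.exp_ne_zero _

lemma ray_ne_zero {ρ : ℝ} (hρ : 0 < ρ) (ψ : ℝ) : ((ρ:ℂ) * E ψ) ≠ 0 :=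
  mul_ne_zero (by exact_mod_cast hρ.ne') (E_ne_zero ψ)

lemma abs_ray {ρ : ℝ} (hρ : 0 < ρ) (ψ : ℝ) : Complex.abs ((ρ:ℂ) * E ψ) = ρ := by
  rw [map_mul, E_abs, Complex.abs_ofReal, abs_of_pos hρ, mul_one]

lemma arg_ray {ρ : ℝ} (hρ : 0 < ρ) {ψ : ℝ} (hψ : |ψ| < Real.pi) :
    ((ρ:ℂ) * E ψ).arg = ψ := by
  rw [E, Complex.exp_mul_I, ← Complex.ofReal_cos, ← Complex.ofReal_sin]
  exact_mod_cast Complex.arg_mul_cos_add_sin_mul_I hρ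
    ⟨(abs_lt.mp hψ).1, ((abs_lt.mp hψ).2).le⟩

lemma log_ray {ρ : ℝ} (hρ : 0 < ρ) {ψ : ℝ} (hψ : |ψ| < Real.pi) :
    Complex.log ((ρ:ℂ) * E ψ) = ((Real.log ρ : ℝ) : ℂ) + (ψ:ℂ) * Complex.I := by
  apply Complex.ext
  · rw [Complex.log_re, Complex.norm_eq_abs, abs_ray hρ]; simp
  · simp [Complex.log_im, arg_ray hρ hψ]

lemma cpow_ray {ρ : ℝ} (hρ : 0 < ρ) {ψ : ℝ} (hψ : |ψ| < Real.pi) (c : ℝ) :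
    ((ρ:ℂ) * E ψ) ^ ((c:ℝ) : ℂ) = ((ρ ^ c : ℝ) : ℂ) * E (c * ψ) := by
  rw [Complex.cpow_def_of_ne_zero (ray_ne_zero hρ ψ), log_ray hρ hψ]
  rw [add_mul, Complex.exp_add, Real.rpow_def_of_pos hρ]
  congr 1
  · exact_mod_cast (Complex.ofReal_exp (Real.log ρ * c)).symm
  · rw [E]; push_cast; ring_nf

lemma den_ne_zero {b μ βv ρ ψ : ℝ} (hb : 0 < b) (hμ : 0 < μ) (hρ : 0 < ρ)
    (hβ0 : 0 ≤ βv) (hβψ : |βv * ψ| < Real.pi) (hψ : |ψ| < Real.pi) :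
    ((μ:ℂ) * (1 + (b:ℂ) * (((ρ:ℂ) * E ψ) ^ ((βv:ℝ):ℂ)))) ≠ 0 := by
  rw [cpow_ray hρ hψ βv]
  apply mul_ne_zero (by exact_mod_cast hμ.ne')
  have hcomb : (b:ℂ) * (((ρ ^ βv : ℝ):ℂ) * E (βv * ψ)) = ((b * ρ ^ βv : ℝ):ℂ) * E (βv * ψ) := by
    push_cast; ring
  rw [hcomb]
  intro h
  have him := congrArg Complex.im h
  have hre := congrArg Complex.re h
  rw [Complex.add_im, im_termE] at him
  rw [Complex.add_re, re_termE] at hre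
  simp only [Complex.one_im, Complex.one_re, Complex.zero_im, Complex.zero_re] at him hre
  have hbρ : 0 < b * ρ ^ βv := by positivity
  have hsin : Real.sin (βv * ψ) = 0 := by
    rcases mul_eq_zero.mp (by linarith : (b * ρ ^ βv) * Real.sin (βv * ψ) = 0) with h' | h'
    · exact absurd h' hbρ.ne'
    · exact h'
  have hzero : βv * ψ = 0 :=
    (Real.sin_eq_zero_iff_of_lt_of_lt (abs_lt.mp hβψ).1 (abs_lt.mp hβψ).2).mp hsin
  rw [hzero, Real.cos_zero, mul_one] at hre
  linarith





lemma symbol_sector {α βv a b μ θ ρ ψ : ℝ}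
    (hα : 0 < α) (hβ0 : 0 < βv) (hβ1 : βv < 1) (ha : 0 < a) (hb : 0 < b) (hμ : 0 < μ)
    (hθ0 : 0 < θ) (hγπ : (1 + α) * θ ≤ Real.pi)
    (hs : 0 < Real.sin ((1 + α) * θ)) (hc : Real.cos ((1 + α) * θ) ≤ 0)
    (hρ : 0 < ρ) (hψ : |ψ| ≤ θ) :
    Real.cos ((1 + α) * θ) * Complex.abs (oldroydSymbol a b μ α βv ((ρ:ℂ) * E ψ))
      ≤ (oldroydSymbol a b μ α βv ((ρ:ℂ) * E ψ)).re := by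
  have hθπ : θ < Real.pi := by nlinarith
  have hψπ : |ψ| < Real.pi := lt_of_le_of_lt hψ hθπ
  have hβψ : |βv * ψ| < Real.pi := by
    rw [abs_mul, abs_of_pos hβ0]
    nlinarith [abs_nonneg ψ]
  have hD : ((μ:ℂ) * (1 + (b:ℂ) * (((ρ:ℂ) * E ψ) ^ ((βv:ℝ):ℂ)))) ≠ 0 :=
    den_ne_zero hb hμ hρ hβ0.le hβψ hψπ
  rw [oldroydSymbol]
  apply sector_div hD
  set N := (ρ:ℂ) * E ψ + (a:ℂ) * (((ρ:ℂ) * E ψ) ^ (((1 + α : ℝ)):ℂ)) with hN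
  set D := (μ:ℂ) * (1 + (b:ℂ) * (((ρ:ℂ) * E ψ) ^ ((βv:ℝ):ℂ))) with hDdef
  have hconjD : (starRingEnd ℂ) D = (μ:ℂ) * (1 + ((b * ρ ^ βv : ℝ):ℂ) * E (-(βv * ψ))) := by
    rw [hDdef, cpow_ray hρ hψπ βv, map_mul, map_add, map_mul, map_mul, conj_E,
      Complex.conj_ofReal, Complex.conj_ofReal, Complex.conj_ofReal, map_one]
    push_cast; ring
  have hprod : N * (starRingEnd ℂ) D
      = (μ:ℂ) * (((ρ:ℝ):ℂ) * E (1 * ψ) + ((a * ρ ^ (1 + α) : ℝ):ℂ) * E ((1 + α) * ψ)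
          + ((ρ * (b * ρ ^ βv) : ℝ):ℂ) * E ((1 - βv) * ψ)
          + ((a * ρ ^ (1 + α) * (b * ρ ^ βv) : ℝ):ℂ) * E ((1 + α - βv) * ψ)) := by
    rw [hN, hconjD, cpow_ray hρ hψπ (1 + α)]
    have e1 : E ψ * E (-(βv * ψ)) = E ((1 - βv) * ψ) := by
      rw [E_mul]; congr 1; ring
    have e2 : E ((1 + α) * ψ) * E (-(βv * ψ)) = E ((1 + α - βv) * ψ) := by
      rw [E_mul]; congr 1; ring
    have e0 : E ψ = E (1 * ψ) := by rw [one_mul]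
    calc ((ρ:ℂ) * E ψ + (a:ℂ) * (((ρ ^ (1+α) : ℝ):ℂ) * E ((1 + α) * ψ)))
          * ((μ:ℂ) * (1 + ((b * ρ ^ βv : ℝ):ℂ) * E (-(βv * ψ))))
        = (μ:ℂ) * (((ρ:ℝ):ℂ) * E ψ + ((a * ρ ^ (1 + α) : ℝ):ℂ) * E ((1 + α) * ψ)
            + ((ρ * (b * ρ ^ βv) : ℝ):ℂ) * (E ψ * E (-(βv * ψ)))
            + ((a * ρ ^ (1 + α) * (b * ρ ^ βv) : ℝ):ℂ) * (E ((1 + α) * ψ) * E (-(βv * ψ)))) := by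
          push_cast; ring
      _ = _ := by rw [e1, e2, e0]
  rw [hprod]
  have hsum := sum4_signed hγπ hs hc
    (le_of_lt hρ) (by positivity : (0:ℝ) ≤ a * ρ ^ (1 + α))
    (by positivity : (0:ℝ) ≤ ρ * (b * ρ ^ βv))
    (by positivity : (0:ℝ) ≤ a * ρ ^ (1 + α) * (b * ρ ^ βv))
    (by norm_num : (0:ℝ) ≤ 1) (by linarith : (0:ℝ) ≤ 1 + α)
    (by linarith : (0:ℝ) ≤ 1 - βv) (by linarith : (0:ℝ) ≤ 1 + α - βv)
    (ψ := ψ)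
    (by nlinarith [abs_nonneg ψ]) (by nlinarith [abs_nonneg ψ])
    (by nlinarith [abs_nonneg ψ]) (by nlinarith [abs_nonneg ψ])
  rw [map_mul, Complex.abs_ofReal, abs_of_pos hμ, Complex.re_ofReal_mul]
  nlinarith [hsum, Complex.abs.nonneg (((ρ:ℝ):ℂ) * E (1 * ψ) + ((a * ρ ^ (1 + α) : ℝ):ℂ) * E ((1 + α) * ψ)
          + ((ρ * (b * ρ ^ βv) : ℝ):ℂ) * E ((1 - βv) * ψ)
          + ((a * ρ ^ (1 + α) * (b * ρ ^ βv) : ℝ):ℂ) * E ((1 + α - βv) * ψ)), hμ]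





lemma kernel_bound {α βv a b μ θ ρ ψ lam : ℝ}
    (hα : 0 < α) (hβ0 : 0 < βv) (hβ1 : βv < 1) (ha : 0 < a) (hb : 0 < b) (hμ : 0 < μ)
    (hθ0 : 0 < θ) (hγπ : (1 + α) * θ < Real.pi)
    (hs : 0 < Real.sin ((1 + α) * θ)) (hc : Real.cos ((1 + α) * θ) ≤ 0)
    (hρ : 0 < ρ) (hψ : |ψ| ≤ θ) (hlam : 0 < lam) :
    Complex.abs (oldroydKernel a b μ α βv lam ((ρ:ℂ) * E ψ))
      ≤ Real.sqrt (1 / (1 + Real.cos ((1 + α) * θ))) / ρ := by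
  set K := Real.cos ((1 + α) * θ) with hK
  have hK0 : -1 < K := by
    have := Real.cos_lt_cos_of_nonneg_of_le_pi (by positivity) le_rfl hγπ
    rw [Real.cos_pi] at this; exact this
  set g := oldroydSymbol a b μ α βv ((ρ:ℂ) * E ψ) with hg
  have hsec : K * Complex.abs g ≤ g.re :=
    symbol_sector hα hβ0 hβ1 ha hb hμ hθ0 hγπ.le hs hc hρ hψ
  obtain ⟨hne, hbound⟩ := sector_resolvent hK0 hc hsec hlam
  set s := Real.sqrt (1 / (1 + K)) with hsdef
  have hs0 : 0 ≤ s := Real.sqrt_nonneg _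
  have hB : 0 < Complex.abs (g + (lam:ℂ)) := Complex.abs.pos hne
  rw [oldroydKernel, map_div₀, map_mul, abs_ray hρ]
  rw [div_le_div_iff₀ (by positivity) hρ]
  nlinarith [mul_le_mul_of_nonneg_right hbound hρ.le, Complex.abs.nonneg g]



lemma integral_exp_neg_mul_Ioi {bb aa : ℝ} (hb : 0 < bb) :
    ∫ x in Set.Ioi aa, Real.exp (-(bb * x)) = Real.exp (-(bb * aa)) / bb := by
  have h := MeasureTheory.integral_comp_mul_left_Ioi (fun x => Real.exp (-x)) aa hb
  simp only [smul_eq_mul] at h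
  rw [h, integral_exp_neg_Ioi]
  field_simp

lemma integrableOn_exp_neg_mul {bb aa : ℝ} (hb : 0 < bb) :
    IntegrableOn (fun x => Real.exp (-(bb * x))) (Set.Ioi aa) := by
  have := exp_neg_integrableOn_Ioi aa hb
  simpa [neg_mul] using this

lemma pow_le_exp_aux {x d : ℝ} (hx : 0 ≤ x) (hd : 0 < d) (m : ℕ) :
    x ^ m ≤ (m.factorial / d ^ m) * Real.exp (d * x) := by
  have h := Real.pow_div_factorial_le_exp (x := d * x) (mul_nonneg hd.le hx) m
  have hdm : 0 < (d:ℝ) ^ m := by positivity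
  have hm : 0 < (m.factorial : ℝ) := by exact_mod_cast m.factorial_pos
  rw [div_le_iff₀ hm] at h
  rw [mul_pow] at h
  calc x ^ m = (d ^ m * x ^ m) / d ^ m := by field_simp
    _ ≤ (Real.exp (d * x) * m.factorial) / d ^ m := by gcongr
    _ = (m.factorial / d ^ m) * Real.exp (d * x) := by ring



lemma E_def (φ : ℝ) : Complex.exp ((φ:ℂ) * Complex.I) = E φ := rfl

lemma ray_mem_slitPlane {ρ ψ : ℝ} (hρ : 0 < ρ) (hψ : |ψ| < Real.pi) :
    ((ρ:ℂ) * E ψ) ∈ Complex.slitPlane := by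
  rw [Complex.mem_slitPlane_iff]
  rcases eq_or_ne ψ 0 with h | h
  · left
    subst h
    rw [re_termE, Real.cos_zero, mul_one]
    exact hρ
  · right
    rw [im_termE]
    intro h0
    rcases mul_eq_zero.mp h0 with h' | h'
    · exact hρ.ne' h'
    · exact h ((Real.sin_eq_zero_iff_of_lt_of_lt (abs_lt.mp hψ).1 (abs_lt.mp hψ).2).mp h')

lemma kernel_continuousAt {α βv a b μ θ ρ ψ lam : ℝ}
    (hα : 0 < α) (hβ0 : 0 < βv) (hβ1 : βv < 1) (ha : 0 < a) (hb : 0 < b) (hμ : 0 < μ)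
    (hθ0 : 0 < θ) (hγπ : (1 + α) * θ < Real.pi)
    (hs : 0 < Real.sin ((1 + α) * θ)) (hc : Real.cos ((1 + α) * θ) ≤ 0)
    (hρ : 0 < ρ) (hψ : |ψ| ≤ θ) (hlam : 0 < lam) :
    ContinuousAt (oldroydKernel a b μ α βv lam) ((ρ:ℂ) * E ψ) := by
  have hθπ : θ < Real.pi := by nlinarith
  have hψπ : |ψ| < Real.pi := lt_of_le_of_lt hψ hθπ
  have hβψ : |βv * ψ| < Real.pi := by
    rw [abs_mul, abs_of_pos hβ0]; nlinarith [abs_nonneg ψ]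
  have hz := ray_ne_zero hρ ψ
  have hslit := ray_mem_slitPlane hρ hψπ
  have hD := den_ne_zero hb hμ hρ hβ0.le hβψ hψπ
  have hK0 : -1 < Real.cos ((1 + α) * θ) := by
    have := Real.cos_lt_cos_of_nonneg_of_le_pi (by positivity) le_rfl hγπ
    rw [Real.cos_pi] at this; exact this
  have hglam := (sector_resolvent hK0 hc
    (symbol_sector hα hβ0 hβ1 ha hb hμ hθ0 hγπ.le hs hc hρ hψ) hlam).1
  have hgcont : ContinuousAt (oldroydSymbol a b μ α βv) ((ρ:ℂ) * E ψ) := by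
    show ContinuousAt (fun z : ℂ =>
      (z + (a:ℂ) * z ^ ((1 + α : ℝ) : ℂ)) / ((μ:ℂ) * (1 + (b:ℂ) * z ^ ((βv:ℝ):ℂ)))) _
    exact ContinuousAt.div
      (continuousAt_id.add (continuousAt_const.mul (continuousAt_cpow_const hslit)))
      (continuousAt_const.mul (continuousAt_const.add
        (continuousAt_const.mul (continuousAt_cpow_const hslit)))) hD
  show ContinuousAt (fun z : ℂ => oldroydSymbol a b μ α βv z /
    (z * (oldroydSymbol a b μ α βv z + (lam:ℂ)))) _
  exact ContinuousAt.div hgcont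
    (continuousAt_id.mul (hgcont.add continuousAt_const))
    (mul_ne_zero hz hglam)

lemma abs_rayIntegrand {a b μ α βv lam : ℝ} (m : ℕ) {t θ' ρ : ℝ} (hρ : 0 < ρ) :
    Complex.abs (rayIntegrand a b μ α βv lam m t θ' ρ)
      = ρ ^ m * Real.exp (t * ρ * Real.cos θ')
        * Complex.abs (oldroydKernel a b μ α βv lam ((ρ:ℂ) * E θ')) := by
  rw [rayIntegrand, E_def, map_mul, map_mul, map_pow, abs_ray hρ]
  congr 2
  have h1 : (t:ℂ) * (ρ:ℂ) * E θ' = ((t * ρ : ℝ):ℂ) * E θ' := by push_cast; ring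
  rw [h1, Complex.abs_exp, re_termE]

lemma ray_estimate {α βv a b μ θ lam t : ℝ} (m : ℕ)
    (hα : 0 < α) (hβ0 : 0 < βv) (hβ1 : βv < 1) (ha : 0 < a) (hb : 0 < b) (hμ : 0 < μ)
    (hθ0 : 0 < θ) (hγπ : (1 + α) * θ < Real.pi)
    (hs : 0 < Real.sin ((1 + α) * θ)) (hc : Real.cos ((1 + α) * θ) ≤ 0)
    (hcθ : Real.cos θ < 0)
    (hlam : 0 < lam) (ht : 0 < t) {θ' : ℝ} (hθ' : |θ'| ≤ θ)
    (hcos : Real.cos θ' = Real.cos θ) :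
    IntegrableOn (fun ρ => rayIntegrand a b μ α βv lam m t θ' ρ) (Set.Ioi (1/t)) ∧
    ‖∫ ρ in Set.Ioi (1/t), rayIntegrand a b μ α βv lam m t θ' ρ‖
      ≤ (Real.sqrt (1 / (1 + Real.cos ((1+α)*θ))) * (m.factorial : ℝ)
          / (-Real.cos θ / 2) ^ (m+1)) * ((t:ℝ) ^ m)⁻¹ := by
  set s := Real.sqrt (1 / (1 + Real.cos ((1+α)*θ))) with hsdef
  have hs0 : 0 ≤ s := Real.sqrt_nonneg _
  set d := -Real.cos θ / 2 with hd
  have hd0 : 0 < d := by rw [hd]; linarith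
  have htd : 0 < t * d := mul_pos ht hd0
  set P := s * t * ((m.factorial : ℝ) / (t*d) ^ m) with hP
  have hP0 : 0 ≤ P := by positivity
  have hpt : ∀ ρ ∈ Set.Ioi (1/t), ‖rayIntegrand a b μ α βv lam m t θ' ρ‖
      ≤ P * Real.exp (-(t * d * ρ)) := by
    intro ρ hρmem
    have hρ : 0 < ρ := lt_trans (by positivity) hρmem
    have h1tρ : 1 ≤ t * ρ := by
      have h' : 1/t < ρ := hρmem
      calc (1:ℝ) = t * (1/t) := by field_simp
        _ ≤ t * ρ := by apply mul_le_mul_of_nonneg_left h'.le ht.le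
    have hsdivρ : s/ρ ≤ s*t := by
      rw [div_le_iff₀ hρ]
      calc s = s * 1 := (mul_one s).symm
        _ ≤ s * (t * ρ) := by apply mul_le_mul_of_nonneg_left h1tρ hs0
        _ = s * t * ρ := by ring
    have hker := kernel_bound hα hβ0 hβ1 ha hb hμ hθ0 hγπ hs hc hρ hθ' hlam
    have hpow := pow_le_exp_aux hρ.le htd m
    have hexp : Real.exp (t*ρ*Real.cos θ) = Real.exp (-(t*d*ρ)) * Real.exp (-(t*d*ρ)) := by
      rw [← Real.exp_add]; congr 1; rw [hd]; ring
    rw [Complex.norm_eq_abs, abs_rayIntegrand m hρ, hcos]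
    calc ρ^m * Real.exp (t*ρ*Real.cos θ)
          * Complex.abs (oldroydKernel a b μ α βv lam ((ρ:ℂ) * E θ'))
        ≤ ρ^m * Real.exp (t*ρ*Real.cos θ) * (s/ρ) := by
          apply mul_le_mul_of_nonneg_left hker (by positivity)
      _ = (ρ^m * (s/ρ)) * (Real.exp (-(t*d*ρ)) * Real.exp (-(t*d*ρ))) := by
          rw [hexp]; ring
      _ ≤ (((m.factorial : ℝ)/(t*d)^m * Real.exp ((t*d)*ρ)) * (s*t))
            * (Real.exp (-(t*d*ρ)) * Real.exp (-(t*d*ρ))) := by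
          apply mul_le_mul_of_nonneg_right _ (by positivity)
          exact mul_le_mul hpow hsdivρ (by positivity) (by positivity)
      _ = P * (Real.exp ((t*d)*ρ) * Real.exp (-(t*d*ρ))) * Real.exp (-(t*d*ρ)) := by
          rw [hP]; ring
      _ = P * Real.exp (-(t*d*ρ)) := by
          rw [← Real.exp_add]
          norm_num
  have hcont : ContinuousOn (fun ρ => rayIntegrand a b μ α βv lam m t θ' ρ)
      (Set.Ioi (1/t)) := by
    intro ρ hρmem
    have hρ : 0 < ρ := lt_trans (by positivity) hρmem
    apply ContinuousAt.continuousWithinAt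
    have hmap : ContinuousAt (fun x : ℝ => (x:ℂ) * E θ') ρ :=
      (Complex.continuous_ofReal.mul continuous_const).continuousAt
    have hker := kernel_continuousAt hα hβ0 hβ1 ha hb hμ hθ0 hγπ hs hc hρ hθ' hlam
    show ContinuousAt (fun x : ℝ => ((x:ℂ) * E θ')^m
      * Complex.exp ((t:ℂ) * (x:ℂ) * E θ')
      * oldroydKernel a b μ α βv lam ((x:ℂ) * E θ')) ρ
    apply ContinuousAt.mul
    · apply ContinuousAt.mul
      · exact hmap.pow m
      · exact (Complex.continuous_exp.comp
          ((continuous_const.mul Complex.continuous_ofReal).mul continuous_const)).continuousAt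
    · exact ContinuousAt.comp (f := fun x : ℝ => (x:ℂ) * E θ') (g := oldroydKernel a b μ α βv lam) hker hmap
  have hmeas : AEStronglyMeasurable (fun ρ => rayIntegrand a b μ α βv lam m t θ' ρ)
      (volume.restrict (Set.Ioi (1/t))) := hcont.aestronglyMeasurable measurableSet_Ioi
  have hgint : IntegrableOn (fun x => P * Real.exp (-(t*d*x))) (Set.Ioi (1/t)) :=
    (integrableOn_exp_neg_mul htd).const_mul P
  have hint : IntegrableOn (fun ρ => rayIntegrand a b μ α βv lam m t θ' ρ)
      (Set.Ioi (1/t)) := by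
    apply Integrable.mono' hgint hmeas
    exact (ae_restrict_iff' measurableSet_Ioi).mpr (Filter.Eventually.of_forall hpt)
  refine ⟨hint, ?_⟩
  have hnorm := MeasureTheory.norm_integral_le_of_norm_le hgint
    ((ae_restrict_iff' measurableSet_Ioi).mpr (Filter.Eventually.of_forall hpt))
  have hval : ∫ x in Set.Ioi (1/t), P * Real.exp (-(t*d*x))
      = P * (Real.exp (-(t*d*(1/t))) / (t*d)) := by
    rw [MeasureTheory.integral_const_mul, integral_exp_neg_mul_Ioi htd]
  have hfinal : P * (Real.exp (-(t*d*(1/t))) / (t*d))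
      ≤ (s * (m.factorial : ℝ) / d^(m+1)) * ((t:ℝ)^m)⁻¹ := by
    have hexp1 : Real.exp (-(t*d*(1/t))) ≤ 1 := by
      rw [Real.exp_le_one_iff]
      have : 0 < t*d*(1/t) := by positivity
      linarith
    calc P * (Real.exp (-(t*d*(1/t))) / (t*d)) ≤ P * (1 / (t*d)) := by
          exact mul_le_mul_of_nonneg_left ((div_le_div_iff_of_pos_right htd).mpr hexp1) hP0
      _ = (s * (m.factorial : ℝ) / d^(m+1)) * ((t:ℝ)^m)⁻¹ := by
          rw [hP]
          field_simp
          ring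
  calc ‖∫ ρ in Set.Ioi (1/t), rayIntegrand a b μ α βv lam m t θ' ρ‖
      ≤ ∫ x in Set.Ioi (1/t), P * Real.exp (-(t*d*x)) := hnorm
    _ = P * (Real.exp (-(t*d*(1/t))) / (t*d)) := hval
    _ ≤ _ := hfinal


lemma arc_estimate {α βv a b μ θ lam t : ℝ} (m : ℕ)
    (hα : 0 < α) (hβ0 : 0 < βv) (hβ1 : βv < 1) (ha : 0 < a) (hb : 0 < b) (hμ : 0 < μ)
    (hθ0 : 0 < θ) (hγπ : (1 + α) * θ < Real.pi)
    (hs : 0 < Real.sin ((1 + α) * θ)) (hc : Real.cos ((1 + α) * θ) ≤ 0)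
    (hlam : 0 < lam) (ht : 0 < t) :
    IntervalIntegrable (fun ψ => arcIntegrand a b μ α βv lam m t ψ) volume (-θ) θ ∧
    ‖∫ ψ in (-θ)..θ, arcIntegrand a b μ α βv lam m t ψ‖
      ≤ ((1/t)^m * Real.exp 1
          * (Real.sqrt (1 / (1 + Real.cos ((1+α)*θ))) * t)) * (2*θ) := by
  set s := Real.sqrt (1 / (1 + Real.cos ((1+α)*θ))) with hsdef
  have hs0 : 0 ≤ s := Real.sqrt_nonneg _
  have h1t : 0 < 1/t := by positivity
  have hpt : ∀ ψ : ℝ, |ψ| ≤ θ → ‖arcIntegrand a b μ α βv lam m t ψ‖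
      ≤ (1/t)^m * Real.exp 1 * (s * t) := by
    intro ψ hψ
    have hker := kernel_bound hα hβ0 hβ1 ha hb hμ hθ0 hγπ hs hc h1t hψ hlam
    have hkst : Complex.abs (oldroydKernel a b μ α βv lam (((1/t:ℝ):ℂ) * E ψ)) ≤ s * t := by
      calc Complex.abs (oldroydKernel a b μ α βv lam (((1/t:ℝ):ℂ) * E ψ))
          ≤ s / (1/t) := hker
        _ = s * t := by field_simp
    rw [Complex.norm_eq_abs, arcIntegrand, E_def, map_mul, map_mul, map_mul, map_pow,
      E_abs, abs_ray h1t, Complex.abs_exp, E_re, one_mul]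
    have h1 : Real.exp (Real.cos ψ) ≤ Real.exp 1 := Real.exp_le_exp.mpr (Real.cos_le_one ψ)
    apply mul_le_mul (mul_le_mul le_rfl h1 (by positivity) (by positivity)) hkst
      (Complex.abs.nonneg _) (by positivity)
  have huIcc : Set.uIcc (-θ) θ = Set.Icc (-θ) θ := Set.uIcc_of_le (by linarith)
  have hEcont : Continuous (fun x : ℝ => E x) :=
    Complex.continuous_exp.comp (Complex.continuous_ofReal.mul continuous_const)
  have hcont : ContinuousOn (fun ψ => arcIntegrand a b μ α βv lam m t ψ)
      (Set.uIcc (-θ) θ) := by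
    rw [huIcc]
    intro ψ hψmem
    have hψ : |ψ| ≤ θ := abs_le.mpr ⟨hψmem.1, hψmem.2⟩
    apply ContinuousAt.continuousWithinAt
    have hmap : ContinuousAt (fun x : ℝ => ((1/t:ℝ):ℂ) * E x) ψ :=
      (continuous_const.mul hEcont).continuousAt
    have hker := kernel_continuousAt hα hβ0 hβ1 ha hb hμ hθ0 hγπ hs hc h1t hψ hlam
    show ContinuousAt (fun x : ℝ => E x * (((1/t:ℝ):ℂ) * E x)^m
      * Complex.exp (E x) * oldroydKernel a b μ α βv lam (((1/t:ℝ):ℂ) * E x)) ψ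
    apply ContinuousAt.mul
    apply ContinuousAt.mul
    apply ContinuousAt.mul
    · exact hEcont.continuousAt
    · exact hmap.pow m
    · exact (Complex.continuous_exp.comp hEcont).continuousAt
    · exact ContinuousAt.comp (f := fun x : ℝ => ((1/t:ℝ):ℂ) * E x)
        (g := oldroydKernel a b μ α βv lam) hker hmap
  have hint : IntervalIntegrable (fun ψ => arcIntegrand a b μ α βv lam m t ψ)
      volume (-θ) θ := hcont.intervalIntegrable
  refine ⟨hint, ?_⟩
  have hb' : ∀ x ∈ Set.uIoc (-θ) θ, ‖arcIntegrand a b μ α βv lam m t x‖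
      ≤ (1/t)^m * Real.exp 1 * (s*t) := by
    intro x hx
    rw [Set.uIoc_of_le (by linarith : -θ ≤ θ)] at hx
    exact hpt x (abs_le.mpr ⟨hx.1.le, hx.2⟩)
  have := intervalIntegral.norm_integral_le_of_norm_le_const hb'
  calc ‖∫ ψ in (-θ)..θ, arcIntegrand a b μ α βv lam m t ψ‖
      ≤ (1/t)^m * Real.exp 1 * (s*t) * |θ - (-θ)| := this
    _ = ((1/t)^m * Real.exp 1 * (s * t)) * (2*θ) := by
        rw [show θ - (-θ) = 2*θ by ring, abs_of_pos (by linarith : (0:ℝ) < 2*θ)]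

end OldroydAux

open OldroydAux

/-- Scalar form of estimate (2.11) with `ν = 0` in Theorem 2.1: the contour
integral `F_{m,λ}(t)` is well defined (all three integrals converge
absolutely) and `|F_{m,λ}(t)| ≤ C t^{-m}` uniformly in `λ > 0`. -/
theorem contourF_bound_nu_zero (α β a b μ θ : ℝ)
    (hα : α ∈ Set.Ioo (0 : ℝ) 1) (hβ : β ∈ Set.Ioo (0 : ℝ) 1)
    (ha : 0 < a) (hb : 0 < b) (hμ : 0 < μ)
    (hθ : Real.pi / 2 < θ) (hθ' : θ < Real.pi / (1 + α)) (m : ℕ) :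
    ∃ C > 0, ∀ lam > (0 : ℝ), ∀ t > (0 : ℝ),
      IntegrableOn (fun ρ => rayIntegrand a b μ α β lam m t θ ρ) (Set.Ioi (1 / t)) ∧
      IntegrableOn (fun ρ => rayIntegrand a b μ α β lam m t (-θ) ρ) (Set.Ioi (1 / t)) ∧
      IntervalIntegrable (fun ψ => arcIntegrand a b μ α β lam m t ψ) volume (-θ) θ ∧
      ‖contourF a b μ α β lam θ m t‖ ≤ C * t ^ (-(m : ℝ)) := by
  obtain ⟨hα0, hα1⟩ := hα
  obtain ⟨hβ0, hβ1⟩ := hβ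
  have hπ := Real.pi_pos
  have hθ0 : 0 < θ := lt_trans (by linarith) hθ
  have h1α : 0 < 1 + α := by linarith
  have hγπ : (1 + α) * θ < Real.pi := by
    have := (lt_div_iff₀ h1α).mp hθ'
    nlinarith
  have hγ2 : Real.pi/2 < (1 + α) * θ := by nlinarith
  have hs : 0 < Real.sin ((1 + α) * θ) :=
    Real.sin_pos_of_pos_of_lt_pi (by positivity) hγπ
  have hc : Real.cos ((1 + α) * θ) ≤ 0 :=
    Real.cos_nonpos_of_pi_div_two_le_of_le hγ2.le (by linarith)
  have hθπ : θ < Real.pi := by nlinarith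
  have hcθ : Real.cos θ < 0 := Real.cos_neg_of_pi_div_two_lt_of_lt hθ (by linarith)
  set s := Real.sqrt (1 / (1 + Real.cos ((1 + α) * θ))) with hsdef
  have hs0 : 0 ≤ s := Real.sqrt_nonneg _
  set d := -Real.cos θ / 2 with hd
  have hd0 : 0 < d := by rw [hd]; linarith
  set Cray := s * (m.factorial : ℝ) / d ^ (m + 1) with hCray
  have hCray0 : 0 ≤ Cray := by positivity
  refine ⟨(1/(2*Real.pi)) * (2*Cray + 2*θ*Real.exp 1 * s) + 1, by positivity, ?_⟩
  intro lam hlam t ht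
  obtain ⟨hint1, hbd1⟩ := ray_estimate m hα0 hβ0 hβ1 ha hb hμ hθ0 hγπ hs hc hcθ hlam ht
    (θ' := θ) (by rw [abs_of_pos hθ0]) rfl
  obtain ⟨hint2, hbd2⟩ := ray_estimate m hα0 hβ0 hβ1 ha hb hμ hθ0 hγπ hs hc hcθ hlam ht
    (θ' := -θ) (by rw [abs_neg, abs_of_pos hθ0]) (Real.cos_neg θ)
  obtain ⟨hint3, hbd3⟩ := arc_estimate m hα0 hβ0 hβ1 ha hb hμ hθ0 hγπ hs hc hlam ht
  refine ⟨hint1, hint2, hint3, ?_⟩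
  have htm : (0:ℝ) < t ^ m := by positivity
  have hrpow : t ^ (-(m:ℝ)) = ((t:ℝ) ^ m)⁻¹ := by
    rw [Real.rpow_neg ht.le, Real.rpow_natCast]
  rw [Complex.norm_eq_abs, contourF, hrpow, map_mul]
  have hpre : Complex.abs (1 / (2 * (Real.pi:ℂ) * Complex.I)) = 1/(2*Real.pi) := by
    rw [map_div₀, map_one, map_mul, map_mul, Complex.abs_I, Complex.abs_two,
      Complex.abs_ofReal, abs_of_pos Real.pi_pos, mul_one]
  rw [hpre]
  set IA := ∫ ρ in Set.Ioi (1/t), rayIntegrand a b μ α β lam m t θ ρ with hIA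
  set IB := ∫ ρ in Set.Ioi (1/t), rayIntegrand a b μ α β lam m t (-θ) ρ with hIB
  set IC := ∫ ψ in (-θ)..θ, arcIntegrand a b μ α β lam m t ψ with hIC
  have habs1 : Complex.abs (Complex.exp ((θ:ℂ)*Complex.I) * IA) ≤ Cray * (t^m)⁻¹ := by
    rw [map_mul, E_def, E_abs, one_mul]
    exact hbd1
  have habs2 : Complex.abs (Complex.exp ((-θ:ℂ)*Complex.I) * IB) ≤ Cray * (t^m)⁻¹ := by
    rw [map_mul]
    have h2 : Complex.abs (Complex.exp ((-θ:ℂ)*Complex.I)) = 1 := by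
      rw [show ((-θ:ℂ)) = ((-θ:ℝ):ℂ) by push_cast; ring, E_def, E_abs]
    rw [h2, one_mul]
    exact hbd2
  have habs3 : Complex.abs ((Complex.I / (t:ℂ)) * IC)
      ≤ (2*θ*Real.exp 1 * s) * (t^m)⁻¹ := by
    rw [map_mul, map_div₀, Complex.abs_I, Complex.abs_ofReal, abs_of_pos ht]
    have h3 : Complex.abs IC ≤ ((1/t)^m * Real.exp 1 * (s * t)) * (2*θ) := hbd3
    have h1tm : (1/t : ℝ)^m = (t^m)⁻¹ := by rw [one_div, inv_pow]
    calc 1/t * Complex.abs IC ≤ 1/t * (((1/t)^m * Real.exp 1 * (s * t)) * (2*θ)) := by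
          apply mul_le_mul_of_nonneg_left h3 (by positivity)
      _ = (2*θ*Real.exp 1 * s) * (t^m)⁻¹ := by
          rw [h1tm]
          field_simp
  have htri : Complex.abs (Complex.exp ((θ:ℂ)*Complex.I) * IA
      - Complex.exp ((-θ:ℂ)*Complex.I) * IB + (Complex.I / (t:ℂ)) * IC)
      ≤ (2*Cray + 2*θ*Real.exp 1 * s) * (t^m)⁻¹ := by
    calc Complex.abs (Complex.exp ((θ:ℂ)*Complex.I) * IA
        - Complex.exp ((-θ:ℂ)*Complex.I) * IB + (Complex.I / (t:ℂ)) * IC)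
        ≤ Complex.abs (Complex.exp ((θ:ℂ)*Complex.I) * IA
            - Complex.exp ((-θ:ℂ)*Complex.I) * IB)
          + Complex.abs ((Complex.I / (t:ℂ)) * IC) := Complex.abs.add_le _ _
      _ ≤ (Complex.abs (Complex.exp ((θ:ℂ)*Complex.I) * IA)
            + Complex.abs (Complex.exp ((-θ:ℂ)*Complex.I) * IB))
          + Complex.abs ((Complex.I / (t:ℂ)) * IC) := by
          gcongr
          simp only [← Complex.norm_eq_abs]
          exact norm_sub_le _ _
      _ ≤ (Cray * (t^m)⁻¹ + Cray * (t^m)⁻¹) + (2*θ*Real.exp 1 * s) * (t^m)⁻¹ := by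
          gcongr
      _ = (2*Cray + 2*θ*Real.exp 1 * s) * (t^m)⁻¹ := by ring
  calc 1/(2*Real.pi) * Complex.abs (Complex.exp ((θ:ℂ)*Complex.I) * IA
      - Complex.exp ((-θ:ℂ)*Complex.I) * IB + (Complex.I / (t:ℂ)) * IC)
      ≤ 1/(2*Real.pi) * ((2*Cray + 2*θ*Real.exp 1 * s) * (t^m)⁻¹) := by
        apply mul_le_mul_of_nonneg_left htri (by positivity)
    _ ≤ (1/(2*Real.pi) * (2*Cray + 2*θ*Real.exp 1 * s) + 1) * (t^m)⁻¹ := by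
        have h1 : (0:ℝ) ≤ (t^m)⁻¹ := by positivity
        nlinarith
end

section
/- Fix α, β ∈ (0,1), positive reals a, b, μ, T, θ ∈ (π/2, π/(1+α)), and a nonnegative integer m. There exists a constant C > 0 such that for every real λ > 0 and every t ∈ (0, T], the contour integral F_{m,λ}(t) (defined in the context) satisfies λ · |F_{m,λ}(t)| ≤ C · t^{−m−(α−β+1)}. -/
open MeasureTheory intervalIntegral


private lemma abs_eI (x : ℝ) : ‖Complex.exp ((x:ℂ) * Complex.I)‖ = 1 := by
  rw [Complex.norm_exp]; simp

private lemma eI_mul_eI (x y : ℝ) :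
    Complex.exp ((x:ℂ) * Complex.I) * Complex.exp ((y:ℂ) * Complex.I)
      = Complex.exp (((x + y : ℝ) : ℂ) * Complex.I) := by
  rw [← Complex.exp_add]; push_cast; ring_nf

private lemma re_coeff_eI (r x : ℝ) :
    (((r : ℝ) : ℂ) * Complex.exp ((x:ℂ) * Complex.I)).re = r * Real.cos x := by
  rw [Complex.re_ofReal_mul, Complex.exp_ofReal_mul_I_re]

private lemma polar_cpow (s ρ φ : ℝ) (hρ : 0 < ρ) (hφ : |φ| < Real.pi) :
    ((ρ:ℂ) * Complex.exp ((φ:ℂ) * Complex.I)) ^ ((s : ℝ) : ℂ)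
      = ((ρ ^ s : ℝ) : ℂ) * Complex.exp (((s * φ : ℝ) : ℂ) * Complex.I) := by
  have hρ' : (ρ:ℂ) ≠ 0 := by exact_mod_cast hρ.ne'
  have hz : (ρ:ℂ) * Complex.exp ((φ:ℂ) * Complex.I) ≠ 0 :=
    mul_ne_zero hρ' (Complex.exp_ne_zero _)
  have harg : Complex.arg ((ρ:ℂ) * Complex.exp ((φ:ℂ) * Complex.I)) = φ := by
    rw [Complex.exp_mul_I, ← Complex.ofReal_cos, ← Complex.ofReal_sin,
      Complex.arg_real_mul _ hρ]
    push_cast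
    exact Complex.arg_cos_add_sin_mul_I ⟨neg_lt_of_abs_lt hφ, le_of_abs_le hφ.le⟩
  have habs : ‖(ρ:ℂ) * Complex.exp ((φ:ℂ) * Complex.I)‖ = ρ := by
    rw [norm_mul, abs_eI, Complex.norm_real, Real.norm_eq_abs, abs_of_pos hρ, mul_one]
  have hlog : Complex.log ((ρ:ℂ) * Complex.exp ((φ:ℂ) * Complex.I))
      = ((Real.log ρ : ℝ) : ℂ) + (φ:ℂ) * Complex.I := by
    rw [Complex.log, harg, habs]
  rw [Complex.cpow_def_of_ne_zero hz, hlog, add_mul,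
    show (φ:ℂ) * Complex.I * (s:ℂ) = ((s * φ : ℝ) : ℂ) * Complex.I by push_cast; ring,
    Complex.exp_add, ← Complex.ofReal_mul, ← Complex.ofReal_exp,
    ← Real.rpow_def_of_pos hρ]

set_option maxHeartbeats 1000000 in
private lemma kernel_bound (α β a b μ T θ : ℝ)
    (hα : α ∈ Set.Ioo (0 : ℝ) 1) (hβ : β ∈ Set.Ioo (0 : ℝ) 1)
    (ha : 0 < a) (hb : 0 < b) (hμ : 0 < μ) (hT : 0 < T)
    (hθ : Real.pi / 2 < θ) (hθ' : θ < Real.pi / (1 + α))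
    (lam : ℝ) (hlam : 0 < lam) (ρ φ : ℝ) (hρ : 1 / T ≤ ρ) (hφ : |φ| ≤ θ) :
    lam * ‖oldroydKernel a b μ α β lam
        ((ρ:ℂ) * Complex.exp ((φ:ℂ) * Complex.I))‖
      ≤ (T ^ α + a) / (b * μ * Real.cos (β * θ / 2) * Real.cos ((1 + α) * θ / 2))
          * ρ ^ (α - β) := by
  obtain ⟨hα0, hα1⟩ := hα
  obtain ⟨hβ0, hβ1⟩ := hβ
  have hπ : (0:ℝ) < Real.pi := Real.pi_pos
  have hθ0 : 0 < θ := lt_trans (by positivity) hθ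
  have h1α : (0:ℝ) < 1 + α := by linarith
  have hωπ : (1 + α) * θ < Real.pi := by
    have := (lt_div_iff₀ h1α).mp hθ'
    linarith [this]
  have hθπ : θ < Real.pi := by nlinarith
  have hcω : 0 < Real.cos ((1 + α) * θ / 2) := by
    apply Real.cos_pos_of_mem_Ioo
    constructor
    · nlinarith
    · nlinarith
  have hcβ : 0 < Real.cos (β * θ / 2) := by
    apply Real.cos_pos_of_mem_Ioo
    constructor
    · nlinarith
    · nlinarith
  have hρ0 : 0 < ρ := lt_of_lt_of_le (by positivity) hρ
  have hφπ : |φ| < Real.pi := lt_of_le_of_lt hφ hθπ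
  set cω := Real.cos ((1 + α) * θ / 2) with hcωdef
  set cβ := Real.cos (β * θ / 2) with hcβdef
  -- angle lemma
  have hang : ∀ x c : ℝ, 0 ≤ c → c ≤ 1 + α → x = c * φ - (1 + α) * φ / 2 →
      cω ≤ Real.cos x := by
    intro x c hc0 hc1 hx
    have h1 : |x| ≤ (1 + α) * θ / 2 := by
      rw [hx, show c * φ - (1 + α) * φ / 2 = φ * (c - (1 + α) / 2) by ring, abs_mul]
      have h2 : |c - (1 + α) / 2| ≤ (1 + α) / 2 := abs_le.2 ⟨by linarith, by linarith⟩
      calc |φ| * |c - (1 + α) / 2| ≤ θ * ((1 + α) / 2) :=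
            mul_le_mul hφ h2 (abs_nonneg _) hθ0.le
        _ = (1 + α) * θ / 2 := by ring
    calc cω ≤ Real.cos |x| :=
          Real.cos_le_cos_of_nonneg_of_le_pi (abs_nonneg x) (by linarith) h1
      _ = Real.cos x := Real.cos_abs x
  have hang0 : ∀ x c : ℝ, 0 ≤ c → c ≤ 1 + α → x = c * φ - (1 + α) * φ / 2 →
      0 ≤ Real.cos x := fun x c h1 h2 h3 => le_trans hcω.le (hang x c h1 h2 h3)
  -- abbreviations
  set z : ℂ := (ρ:ℂ) * Complex.exp ((φ:ℂ) * Complex.I) with hzdef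
  have hp1 : z ^ (((1 + α : ℝ)) : ℂ)
      = (((ρ ^ (1 + α) : ℝ)) : ℂ) * Complex.exp ((((1 + α) * φ : ℝ) : ℂ) * Complex.I) :=
    polar_cpow _ _ _ hρ0 hφπ
  have hp2 : z ^ (((β : ℝ)) : ℂ)
      = (((ρ ^ β : ℝ)) : ℂ) * Complex.exp (((β * φ : ℝ) : ℂ) * Complex.I) :=
    polar_cpow _ _ _ hρ0 hφπ
  set N : ℂ := (ρ:ℂ) * Complex.exp ((φ:ℂ) * Complex.I)
      + (a:ℂ) * ((((ρ ^ (1 + α) : ℝ)) : ℂ) * Complex.exp ((((1 + α) * φ : ℝ) : ℂ) * Complex.I))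
    with hNdef
  set Dd : ℂ := 1 + (b:ℂ) * ((((ρ ^ β : ℝ)) : ℂ) * Complex.exp (((β * φ : ℝ) : ℂ) * Complex.I))
    with hDddef
  have hgN : oldroydSymbol a b μ α β z = N / ((μ:ℂ) * Dd) := by
    rw [oldroydSymbol, hp1, hp2]
  -- part (i) : lower bound on |Dd|
  have hDdmul : Dd * Complex.exp (((-(β * φ / 2) : ℝ) : ℂ) * Complex.I)
      = Complex.exp (((-(β * φ / 2) : ℝ) : ℂ) * Complex.I)
        + (((b * ρ ^ β : ℝ)) : ℂ)
            * Complex.exp (((β * φ + -(β * φ / 2) : ℝ) : ℂ) * Complex.I) := by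
    rw [hDddef, ← eI_mul_eI]
    push_cast
    ring
  have hDdre : (Dd * Complex.exp (((-(β * φ / 2) : ℝ) : ℂ) * Complex.I)).re
      = Real.cos (β * φ / 2) * (1 + b * ρ ^ β) := by
    rw [hDdmul, Complex.add_re, Complex.exp_ofReal_mul_I_re, re_coeff_eI,
      show β * φ + -(β * φ / 2) = β * φ / 2 by ring, Real.cos_neg]
    ring
  have hcosβφ : cβ ≤ Real.cos (β * φ / 2) := by
    have h1 : |β * φ / 2| ≤ β * θ / 2 := by
      rw [show β * φ / 2 = φ * (β / 2) by ring, abs_mul, abs_of_nonneg (by positivity : (0:ℝ) ≤ β / 2)]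
      calc |φ| * (β / 2) ≤ θ * (β / 2) := by
            apply mul_le_mul_of_nonneg_right hφ; positivity
        _ = β * θ / 2 := by ring
    calc cβ ≤ Real.cos |β * φ / 2| :=
          Real.cos_le_cos_of_nonneg_of_le_pi (abs_nonneg _) (by nlinarith) h1
      _ = Real.cos (β * φ / 2) := Real.cos_abs _
  have hDdabs : cβ * (1 + b * ρ ^ β) ≤ ‖Dd‖ := by
    have hrpowβ : (0:ℝ) < ρ ^ β := Real.rpow_pos_of_pos hρ0 β
    calc cβ * (1 + b * ρ ^ β) ≤ Real.cos (β * φ / 2) * (1 + b * ρ ^ β) := by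
          apply mul_le_mul_of_nonneg_right hcosβφ; nlinarith
      _ = (Dd * Complex.exp (((-(β * φ / 2) : ℝ) : ℂ) * Complex.I)).re := hDdre.symm
      _ ≤ ‖Dd * Complex.exp (((-(β * φ / 2) : ℝ) : ℂ) * Complex.I)‖ :=
          Complex.re_le_norm _
      _ = ‖Dd‖ := by rw [norm_mul, abs_eI, mul_one]
  have hrpowβ : (0:ℝ) < ρ ^ β := Real.rpow_pos_of_pos hρ0 β
  have hDdpos : 0 < ‖Dd‖ :=
    lt_of_lt_of_le (mul_pos hcβ (by nlinarith)) hDdabs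
  have hDd0 : Dd ≠ 0 := by
    intro h; rw [h] at hDdpos; simp at hDdpos
  have hμDd0 : (μ:ℂ) * Dd ≠ 0 :=
    mul_ne_zero (by exact_mod_cast hμ.ne') hDd0
  have hDdub : ‖Dd‖ ≤ 1 + b * ρ ^ β := by
    calc ‖Dd‖ ≤ ‖(1:ℂ)‖ + ‖(b:ℂ) *
          ((((ρ ^ β : ℝ)) : ℂ) * Complex.exp (((β * φ : ℝ) : ℂ) * Complex.I))‖ := by
          rw [hDddef]; exact norm_add_le _ _
      _ = 1 + b * ρ ^ β := by
          rw [norm_one, norm_mul, norm_mul, abs_eI, Complex.norm_real, Real.norm_eq_abs, Complex.norm_real, Real.norm_eq_abs,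
            abs_of_pos hb, abs_of_pos hrpowβ, mul_one]
  -- part (ii) : |g + lam| ≥ lam * cω
  set W : ℂ := N + (((lam * μ : ℝ)) : ℂ) * Dd with hWdef
  have hsum : oldroydSymbol a b μ α β z + (lam:ℂ) = W / ((μ:ℂ) * Dd) := by
    rw [hgN, hWdef, div_add' _ _ _ hμDd0]
    congr 1
    push_cast
    ring
  have hWmul : W * Complex.exp (((-((1 + α) * φ / 2) : ℝ) : ℂ) * Complex.I)
      = ((ρ : ℝ) : ℂ) * Complex.exp (((φ + -((1 + α) * φ / 2) : ℝ) : ℂ) * Complex.I)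
        + (((a * ρ ^ (1 + α) : ℝ)) : ℂ)
            * Complex.exp ((((1 + α) * φ + -((1 + α) * φ / 2) : ℝ) : ℂ) * Complex.I)
        + (((lam * μ : ℝ)) : ℂ)
            * Complex.exp (((-((1 + α) * φ / 2) : ℝ) : ℂ) * Complex.I)
        + (((lam * μ * (b * ρ ^ β) : ℝ)) : ℂ)
            * Complex.exp (((β * φ + -((1 + α) * φ / 2) : ℝ) : ℂ) * Complex.I) := by
    rw [hWdef, hNdef, hDddef, ← eI_mul_eI, ← eI_mul_eI, ← eI_mul_eI]
    push_cast
    ring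
  have hWre : lam * μ * cω * (1 + b * ρ ^ β)
      ≤ (W * Complex.exp (((-((1 + α) * φ / 2) : ℝ) : ℂ) * Complex.I)).re := by
    rw [hWmul]
    rw [Complex.add_re, Complex.add_re, Complex.add_re, re_coeff_eI, re_coeff_eI,
      re_coeff_eI, re_coeff_eI]
    have h1 : 0 ≤ Real.cos (φ + -((1 + α) * φ / 2)) :=
      hang0 _ 1 (by norm_num) (by linarith) (by ring)
    have h2 : 0 ≤ Real.cos ((1 + α) * φ + -((1 + α) * φ / 2)) :=
      hang0 _ (1 + α) (by linarith) le_rfl (by ring)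
    have h3 : cω ≤ Real.cos (-((1 + α) * φ / 2)) :=
      hang _ 0 le_rfl (by linarith) (by ring)
    have h4 : cω ≤ Real.cos (β * φ + -((1 + α) * φ / 2)) :=
      hang _ β hβ0.le (by linarith) (by ring)
    have hra : (0:ℝ) < ρ ^ (1 + α) := Real.rpow_pos_of_pos hρ0 _
    nlinarith [mul_nonneg hρ0.le h1, mul_nonneg (mul_nonneg ha.le hra.le) h2,
      mul_le_mul_of_nonneg_left h3 (by positivity : (0:ℝ) ≤ lam * μ),
      mul_le_mul_of_nonneg_left h4 (by positivity : (0:ℝ) ≤ lam * μ * (b * ρ ^ β))]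
  have hWabs : lam * μ * cω * (1 + b * ρ ^ β) ≤ ‖W‖ := by
    calc lam * μ * cω * (1 + b * ρ ^ β)
        ≤ (W * Complex.exp (((-((1 + α) * φ / 2) : ℝ) : ℂ) * Complex.I)).re := hWre
      _ ≤ ‖W * Complex.exp (((-((1 + α) * φ / 2) : ℝ) : ℂ) * Complex.I)‖ :=
          Complex.re_le_norm _
      _ = ‖W‖ := by rw [norm_mul, abs_eI, mul_one]
  have hGlam : lam * cω ≤ ‖oldroydSymbol a b μ α β z + (lam:ℂ)‖ := by
    rw [hsum, norm_div, norm_mul, Complex.norm_real, Real.norm_eq_abs, abs_of_pos hμ]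
    rw [le_div_iff₀ (by positivity)]
    calc lam * cω * (μ * ‖Dd‖) ≤ lam * cω * (μ * (1 + b * ρ ^ β)) := by
          apply mul_le_mul_of_nonneg_left _ (by positivity)
          exact mul_le_mul_of_nonneg_left hDdub hμ.le
      _ = lam * μ * cω * (1 + b * ρ ^ β) := by ring
      _ ≤ ‖W‖ := hWabs
  -- part (iii) : upper bound on |g|
  have hrpow1α : ρ ^ (1 + α) = ρ * ρ ^ α := by
    rw [Real.rpow_add hρ0, Real.rpow_one]
  have hNabs : ‖N‖ ≤ ρ * (1 + a * ρ ^ α) := by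
    calc ‖N‖ ≤ ‖(ρ:ℂ) * Complex.exp ((φ:ℂ) * Complex.I)‖
          + ‖(a:ℂ) * ((((ρ ^ (1 + α) : ℝ)) : ℂ)
              * Complex.exp ((((1 + α) * φ : ℝ) : ℂ) * Complex.I))‖ := by
          rw [hNdef]; exact norm_add_le _ _
      _ = ρ + a * ρ ^ (1 + α) := by
          rw [norm_mul, norm_mul, norm_mul, abs_eI, abs_eI, Complex.norm_real, Real.norm_eq_abs,
            Complex.norm_real, Real.norm_eq_abs, Complex.norm_real, Real.norm_eq_abs, abs_of_pos hρ0, abs_of_pos ha,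
            abs_of_pos (Real.rpow_pos_of_pos hρ0 _), mul_one, mul_one]
      _ = ρ * (1 + a * ρ ^ α) := by rw [hrpow1α]; ring
  have hgabs : ‖oldroydSymbol a b μ α β z‖ * (μ * cβ * (1 + b * ρ ^ β))
      ≤ ρ * (1 + a * ρ ^ α) := by
    rw [hgN, norm_div, norm_mul, Complex.norm_real, Real.norm_eq_abs, abs_of_pos hμ]
    rw [div_mul_eq_mul_div, div_le_iff₀ (by positivity)]
    calc ‖N‖ * (μ * cβ * (1 + b * ρ ^ β))
        ≤ (ρ * (1 + a * ρ ^ α)) * (μ * ‖Dd‖) := by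
          apply mul_le_mul hNabs _ (by positivity)
            (by positivity)
          calc μ * cβ * (1 + b * ρ ^ β) = μ * (cβ * (1 + b * ρ ^ β)) := by ring
            _ ≤ μ * ‖Dd‖ := mul_le_mul_of_nonneg_left hDdabs hμ.le
      _ = ρ * (1 + a * ρ ^ α) * (μ * ‖Dd‖) := by ring
  -- part (iv) : conclusion
  have habsz : ‖z‖ = ρ := by
    rw [hzdef, norm_mul, abs_eI, Complex.norm_real, Real.norm_eq_abs, abs_of_pos hρ0, mul_one]
  set A := ‖oldroydSymbol a b μ α β z‖ with hAdef
  set B := ‖oldroydSymbol a b μ α β z + (lam:ℂ)‖ with hBdef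
  have hA0 : 0 ≤ A := norm_nonneg _
  have hBpos : 0 < B := lt_of_lt_of_le (by positivity) hGlam
  have hkabs : ‖oldroydKernel a b μ α β lam z‖ = A / (ρ * B) := by
    rw [oldroydKernel, norm_div, norm_mul, habsz]
  have he1 : 1 ≤ T ^ α * ρ ^ α := by
    rw [← Real.mul_rpow hT.le hρ0.le]
    have hTρ : 1 ≤ T * ρ := by
      calc (1:ℝ) = T * (1 / T) := by field_simp
        _ ≤ T * ρ := mul_le_mul_of_nonneg_left hρ hT.le
    exact Real.one_le_rpow hTρ hα0.le
  have he2 : ρ ^ (α - β) * ρ ^ β = ρ ^ α := by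
    rw [← Real.rpow_add hρ0]; ring_nf
  have hrαβ : (0:ℝ) < ρ ^ (α - β) := Real.rpow_pos_of_pos hρ0 _
  have hrα : (0:ℝ) < ρ ^ α := Real.rpow_pos_of_pos hρ0 _
  -- step1
  have step1 : A * (b * μ * cβ) * ρ ^ β ≤ (T ^ α + a) * ρ ^ α * ρ := by
    calc A * (b * μ * cβ) * ρ ^ β = A * (μ * cβ) * (b * ρ ^ β) := by ring
      _ ≤ A * (μ * cβ) * (1 + b * ρ ^ β) := by
          apply mul_le_mul_of_nonneg_left (by linarith) (by positivity)
      _ = A * (μ * cβ * (1 + b * ρ ^ β)) := by ring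
      _ ≤ ρ * (1 + a * ρ ^ α) := hgabs
      _ ≤ ρ * (T ^ α * ρ ^ α + a * ρ ^ α) := by
          apply mul_le_mul_of_nonneg_left _ hρ0.le
          nlinarith
      _ = (T ^ α + a) * ρ ^ α * ρ := by ring
  have step2 : A * (b * μ * cβ) ≤ (T ^ α + a) * ρ ^ (α - β) * ρ := by
    rw [← mul_le_mul_iff_of_pos_right (Real.rpow_pos_of_pos hρ0 β)]
    calc A * (b * μ * cβ) * ρ ^ β ≤ (T ^ α + a) * ρ ^ α * ρ := step1
      _ = (T ^ α + a) * ρ ^ (α - β) * ρ * ρ ^ β := by rw [← he2]; ring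
  have step3 : lam * A * (b * μ * cβ * cω) ≤ (T ^ α + a) * ρ ^ (α - β) * ρ * B := by
    calc lam * A * (b * μ * cβ * cω) = (A * (b * μ * cβ)) * (lam * cω) := by ring
      _ ≤ ((T ^ α + a) * ρ ^ (α - β) * ρ) * B := by
          apply mul_le_mul step2 hGlam (by positivity) (by positivity)
  rw [hkabs, mul_div_assoc', div_le_iff₀ (by positivity)]
  rw [div_mul_eq_mul_div, div_mul_eq_mul_div, le_div_iff₀ (by positivity)]
  nlinarith [step3]


set_option maxHeartbeats 1600000

/-- Scalar form of estimate (2.11) with `ν = 1` in Theorem 2.1: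
`λ |F_{m,λ}(t)| ≤ C t^{-m-(α-β+1)}` uniformly for `λ > 0` and `t ∈ (0, T]`. -/
theorem contourF_bound_nu_one (α β a b μ T θ : ℝ)
    (hα : α ∈ Set.Ioo (0 : ℝ) 1) (hβ : β ∈ Set.Ioo (0 : ℝ) 1)
    (ha : 0 < a) (hb : 0 < b) (hμ : 0 < μ) (hT : 0 < T)
    (hθ : Real.pi / 2 < θ) (hθ' : θ < Real.pi / (1 + α)) (m : ℕ) :
    ∃ C > 0, ∀ lam > (0 : ℝ), ∀ t ∈ Set.Ioc (0 : ℝ) T,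
      lam * ‖contourF a b μ α β lam θ m t‖ ≤
        C * t ^ (-(m : ℝ) - (α - β + 1)) := by
  have hα0 := hα.1
  have hα1 := hα.2
  have hβ0 := hβ.1
  have hβ1 := hβ.2
  have hπ : (0:ℝ) < Real.pi := Real.pi_pos
  have hθ0 : 0 < θ := lt_trans (by positivity) hθ
  have h1α : (0:ℝ) < 1 + α := by linarith
  have hωπ : (1 + α) * θ < Real.pi := by
    have := (lt_div_iff₀ h1α).mp hθ'
    linarith
  have hθπ : θ < Real.pi := by nlinarith
  have hcω : 0 < Real.cos ((1 + α) * θ / 2) :=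
    Real.cos_pos_of_mem_Ioo ⟨by nlinarith, by nlinarith⟩
  have hcβ : 0 < Real.cos (β * θ / 2) :=
    Real.cos_pos_of_mem_Ioo ⟨by nlinarith, by nlinarith⟩
  have hTα : (0:ℝ) < T ^ α := Real.rpow_pos_of_pos hT α
  set K := (T ^ α + a) / (b * μ * Real.cos (β * θ / 2) * Real.cos ((1 + α) * θ / 2))
    with hKdef
  have hK : 0 < K := by
    apply div_pos (by linarith)
    exact mul_pos (mul_pos (mul_pos hb hμ) hcβ) hcω
  set c := -Real.cos θ with hcdef
  have hc : 0 < c := by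
    have : Real.cos θ < 0 := Real.cos_neg_of_pi_div_two_lt_of_lt hθ (by linarith)
    rw [hcdef]; linarith
  set p := (m:ℝ) + α - β with hpdef
  have hm0 : (0:ℝ) ≤ (m:ℝ) := Nat.cast_nonneg m
  have hp : (-1:ℝ) < p := by rw [hpdef]; linarith
  set J := ∫ s in Set.Ioi (1:ℝ), s ^ p * Real.exp (-(c * s)) with hJdef
  have hJ0 : 0 ≤ J := by
    rw [hJdef]
    apply setIntegral_nonneg measurableSet_Ioi
    intro s hs
    exact mul_nonneg (Real.rpow_nonneg (by linarith [Set.mem_Ioi.mp hs]) p)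
      (Real.exp_pos _).le
  have hexp1 : (0:ℝ) < Real.exp 1 := Real.exp_pos 1
  refine ⟨(2 * (K * J) + 2 * θ * (K * Real.exp 1)) / (2 * Real.pi), ?_, ?_⟩
  · apply div_pos _ (by positivity)
    nlinarith [mul_pos hK hexp1, mul_pos hθ0 (mul_pos hK hexp1), mul_nonneg hK.le hJ0]
  intro lam hlam t ht
  obtain ⟨ht0, htT⟩ := ht
  have h1t0 : (0:ℝ) < 1 / t := by positivity
  have h1tT : 1 / T ≤ 1 / t := one_div_le_one_div_of_le ht0 htT
  -- the ray estimate
  have hray : ∀ θ' : ℝ, |θ'| ≤ θ → Real.cos θ' = Real.cos θ →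
      lam * ‖∫ ρ in Set.Ioi (1 / t), rayIntegrand a b μ α β lam m t θ' ρ‖
        ≤ K * J * (t ^ (-p) * t⁻¹) := by
    intro θ' hθ'1 hθ'2
    have hct : 0 < c * t := mul_pos hc ht0
    have hint0 : IntegrableOn (fun x : ℝ => x ^ p * Real.exp (-(c * t) * x)) (Set.Ioi 0) := by
      have h := integrableOn_rpow_mul_exp_neg_mul_rpow hp zero_lt_one hct
      simpa [Real.rpow_one] using h
    have hGint : IntegrableOn (fun x : ℝ => K * (x ^ p * Real.exp (-(c * t) * x)))
        (Set.Ioi (1 / t)) :=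
      (hint0.mono_set (Set.Ioi_subset_Ioi h1t0.le)).const_mul K
    have hbd : ∀ᵐ ρ ∂(volume.restrict (Set.Ioi (1 / t))),
        ‖(lam:ℂ) * rayIntegrand a b μ α β lam m t θ' ρ‖
          ≤ K * (ρ ^ p * Real.exp (-(c * t) * ρ)) := by
      filter_upwards [ae_restrict_mem measurableSet_Ioi] with ρ hρmem
      have hρ1t : 1 / t < ρ := hρmem
      have hρ0 : 0 < ρ := lt_trans h1t0 hρ1t
      have hρT : 1 / T ≤ ρ := le_trans h1tT hρ1t.le
      have hknl := kernel_bound α β a b μ T θ hα hβ ha hb hμ hT hθ hθ' lam hlam ρ θ' hρT hθ'1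
      have habsz : ‖(ρ:ℂ) * Complex.exp ((θ':ℂ) * Complex.I)‖ = ρ := by
        rw [norm_mul, abs_eI, Complex.norm_real, Real.norm_eq_abs, abs_of_pos hρ0, mul_one]
      have hexp : ‖Complex.exp ((t:ℂ) * (ρ:ℂ) * Complex.exp ((θ':ℂ) * Complex.I))‖
          = Real.exp (t * ρ * Real.cos θ') := by
        rw [Complex.norm_exp]
        congr 1
        rw [show (t:ℂ) * (ρ:ℂ) * Complex.exp ((θ':ℂ) * Complex.I)
            = ((t * ρ : ℝ):ℂ) * Complex.exp ((θ':ℂ) * Complex.I) by push_cast; ring,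
          re_coeff_eI]
      have hnorm1 : ‖(lam:ℂ) * rayIntegrand a b μ α β lam m t θ' ρ‖
          = lam * (ρ ^ m * Real.exp (t * ρ * Real.cos θ')
              * ‖oldroydKernel a b μ α β lam
                  ((ρ:ℂ) * Complex.exp ((θ':ℂ) * Complex.I))‖) := by
        rw [rayIntegrand, norm_mul, Complex.norm_real, Real.norm_eq_abs, abs_of_pos hlam, norm_mul, norm_mul, norm_pow, habsz, hexp]
      have h2 : ρ ^ m * ρ ^ (α - β) = ρ ^ p := by
        rw [← Real.rpow_natCast ρ m, ← Real.rpow_add hρ0]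
        congr 1
        rw [hpdef]; ring
      have hcosθ' : t * ρ * Real.cos θ' = -(c * t) * ρ := by
        rw [hθ'2, hcdef]; ring
      rw [hnorm1]
      calc lam * (ρ ^ m * Real.exp (t * ρ * Real.cos θ')
              * ‖oldroydKernel a b μ α β lam
                  ((ρ:ℂ) * Complex.exp ((θ':ℂ) * Complex.I))‖)
          = (ρ ^ m * Real.exp (t * ρ * Real.cos θ'))
            * (lam * ‖oldroydKernel a b μ α β lam
                  ((ρ:ℂ) * Complex.exp ((θ':ℂ) * Complex.I))‖) := by ring
        _ ≤ (ρ ^ m * Real.exp (t * ρ * Real.cos θ')) * (K * ρ ^ (α - β)) := by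
            apply mul_le_mul_of_nonneg_left hknl (by positivity)
        _ = K * ((ρ ^ m * ρ ^ (α - β)) * Real.exp (t * ρ * Real.cos θ')) := by ring
        _ = K * (ρ ^ p * Real.exp (-(c * t) * ρ)) := by rw [h2, hcosθ']
    have hnorm := norm_integral_le_of_norm_le hGint hbd
    have hval : (∫ ρ in Set.Ioi (1 / t), K * (ρ ^ p * Real.exp (-(c * t) * ρ)))
        = K * (t ^ (-p) * (t⁻¹ * J)) := by
      rw [MeasureTheory.integral_const_mul]
      congr 1
      have hcong : ∀ ρ ∈ Set.Ioi (1 / t), ρ ^ p * Real.exp (-(c * t) * ρ)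
          = t ^ (-p) • ((fun s => s ^ p * Real.exp (-(c * s))) (t * ρ)) := by
        intro ρ hρmem
        have hρ0 : 0 < ρ := lt_trans h1t0 hρmem
        simp only [smul_eq_mul]
        rw [Real.mul_rpow ht0.le hρ0.le, show -(c * (t * ρ)) = -(c * t) * ρ by ring,
          ← mul_assoc, ← mul_assoc, ← Real.rpow_add ht0]
        norm_num
      rw [setIntegral_congr_fun measurableSet_Ioi hcong, MeasureTheory.integral_smul,
        MeasureTheory.integral_comp_mul_left_Ioi (fun s => s ^ p * Real.exp (-(c * s)))
          (1 / t) ht0, mul_one_div_cancel ht0.ne']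
      simp only [smul_eq_mul, ← hJdef]
      try ring
    have hlamnorm : lam * ‖∫ ρ in Set.Ioi (1 / t),
          rayIntegrand a b μ α β lam m t θ' ρ‖
        = ‖∫ ρ in Set.Ioi (1 / t), (lam:ℂ) * rayIntegrand a b μ α β lam m t θ' ρ‖ := by
      rw [MeasureTheory.integral_const_mul, norm_mul, Complex.norm_real, Real.norm_eq_abs, abs_of_pos hlam]
    rw [hlamnorm]
    refine le_trans hnorm (le_of_eq ?_)
    rw [hval]; ring
  -- the arc estimate
  have harc : lam * ‖∫ ψ in (-θ)..θ, arcIntegrand a b μ α β lam m t ψ‖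
      ≤ K * Real.exp 1 * ((1 / t) ^ m * (1 / t) ^ (α - β)) * (2 * θ) := by
    have hM : ∀ ψ ∈ Set.uIoc (-θ) θ, ‖(lam:ℂ) * arcIntegrand a b μ α β lam m t ψ‖
        ≤ K * Real.exp 1 * ((1 / t) ^ m * (1 / t) ^ (α - β)) := by
      intro ψ hψ
      rw [Set.uIoc_of_le (by linarith)] at hψ
      have hψa : |ψ| ≤ θ := abs_le.2 ⟨hψ.1.le, hψ.2⟩
      have hknl := kernel_bound α β a b μ T θ hα hβ ha hb hμ hT hθ hθ' lam hlam (1 / t) ψ h1tT hψa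
      have habsz : ‖((1 / t : ℝ):ℂ) * Complex.exp ((ψ:ℂ) * Complex.I)‖ = 1 / t := by
        rw [norm_mul, abs_eI, Complex.norm_real, Real.norm_eq_abs, abs_of_pos h1t0, mul_one]
      have hexp : ‖Complex.exp (Complex.exp ((ψ:ℂ) * Complex.I))‖
          = Real.exp (Real.cos ψ) := by
        rw [Complex.norm_exp, Complex.exp_ofReal_mul_I_re]
      have hnorm2 : ‖(lam:ℂ) * arcIntegrand a b μ α β lam m t ψ‖
          = lam * (1 * (1 / t) ^ m * Real.exp (Real.cos ψ)
              * ‖oldroydKernel a b μ α β lam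
                  (((1 / t : ℝ):ℂ) * Complex.exp ((ψ:ℂ) * Complex.I))‖) := by
        rw [arcIntegrand, norm_mul, Complex.norm_real, Real.norm_eq_abs, abs_of_pos hlam, norm_mul, norm_mul, norm_mul, norm_pow,
          abs_eI, habsz, hexp]
      rw [hnorm2]
      have hexpcos : Real.exp (Real.cos ψ) ≤ Real.exp 1 :=
        Real.exp_le_exp.2 (Real.cos_le_one ψ)
      have h1tm : (0:ℝ) < (1 / t) ^ m := by positivity
      calc lam * (1 * (1 / t) ^ m * Real.exp (Real.cos ψ)
              * ‖oldroydKernel a b μ α β lam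
                  (((1 / t : ℝ):ℂ) * Complex.exp ((ψ:ℂ) * Complex.I))‖)
          = ((1 / t) ^ m * Real.exp (Real.cos ψ))
            * (lam * ‖oldroydKernel a b μ α β lam
                  (((1 / t : ℝ):ℂ) * Complex.exp ((ψ:ℂ) * Complex.I))‖) := by ring
        _ ≤ ((1 / t) ^ m * Real.exp (Real.cos ψ)) * (K * (1 / t) ^ (α - β)) := by
            apply mul_le_mul_of_nonneg_left hknl (by positivity)
        _ ≤ ((1 / t) ^ m * Real.exp 1) * (K * (1 / t) ^ (α - β)) := by
            apply mul_le_mul_of_nonneg_right _ (by positivity)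
            exact mul_le_mul_of_nonneg_left hexpcos h1tm.le
        _ = K * Real.exp 1 * ((1 / t) ^ m * (1 / t) ^ (α - β)) := by ring
    have hle := intervalIntegral.norm_integral_le_of_norm_le_const hM
    rw [intervalIntegral.integral_const_mul, norm_mul, Complex.norm_real, Real.norm_eq_abs, abs_of_pos hlam] at hle
    calc lam * ‖∫ ψ in (-θ)..θ, arcIntegrand a b μ α β lam m t ψ‖
        ≤ K * Real.exp 1 * ((1 / t) ^ m * (1 / t) ^ (α - β)) * |θ - -θ| := hle
      _ = K * Real.exp 1 * ((1 / t) ^ m * (1 / t) ^ (α - β)) * (2 * θ) := by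
          rw [show θ - -θ = 2 * θ by ring, abs_of_pos (by linarith)]
  -- assembling the contour
  have habspref : ‖1 / (2 * (Real.pi : ℂ) * Complex.I)‖ = 1 / (2 * Real.pi) := by
    rw [norm_div, norm_one, norm_mul, norm_mul, Complex.norm_I, Complex.norm_real, Real.norm_eq_abs,
      Complex.norm_two, abs_of_pos hπ, mul_one]
  have habsIt : ‖Complex.I / (t:ℂ)‖ = 1 / t := by
    rw [norm_div, Complex.norm_I, Complex.norm_real, Real.norm_eq_abs, abs_of_pos ht0]
  set X := ∫ ρ in Set.Ioi (1 / t), rayIntegrand a b μ α β lam m t θ ρ with hXdef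
  set Y := ∫ ρ in Set.Ioi (1 / t), rayIntegrand a b μ α β lam m t (-θ) ρ with hYdef
  set Z := ∫ ψ in (-θ)..θ, arcIntegrand a b μ α β lam m t ψ with hZdef
  have htri : ‖Complex.exp ((θ:ℂ) * Complex.I) * X
        - Complex.exp ((-θ:ℂ) * Complex.I) * Y + Complex.I / (t:ℂ) * Z‖
      ≤ ‖X‖ + ‖Y‖ + (1 / t) * ‖Z‖ := by
    have e1 : ‖Complex.exp ((θ:ℂ) * Complex.I) * X‖ = ‖X‖ := by
      rw [norm_mul, abs_eI, one_mul]
    have e2 : ‖Complex.exp ((-θ:ℂ) * Complex.I) * Y‖ = ‖Y‖ := by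
      rw [norm_mul, show -(θ:ℂ) * Complex.I = (((-θ:ℝ)):ℂ) * Complex.I by push_cast; ring,
        abs_eI, one_mul]
    have e3 : ‖Complex.I / (t:ℂ) * Z‖ = (1 / t) * ‖Z‖ := by
      rw [norm_mul, habsIt]
    calc ‖Complex.exp ((θ:ℂ) * Complex.I) * X
          - Complex.exp ((-θ:ℂ) * Complex.I) * Y + Complex.I / (t:ℂ) * Z‖
        ≤ ‖Complex.exp ((θ:ℂ) * Complex.I) * X
            - Complex.exp ((-θ:ℂ) * Complex.I) * Y‖ + ‖Complex.I / (t:ℂ) * Z‖ :=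
          norm_add_le _ _
      _ ≤ ‖Complex.exp ((θ:ℂ) * Complex.I) * X‖
            + ‖Complex.exp ((-θ:ℂ) * Complex.I) * Y‖
            + ‖Complex.I / (t:ℂ) * Z‖ := by
          have := norm_sub_le (Complex.exp ((θ:ℂ) * Complex.I) * X)
            (Complex.exp ((-θ:ℂ) * Complex.I) * Y)
          linarith
      _ = ‖X‖ + ‖Y‖ + (1 / t) * ‖Z‖ := by rw [e1, e2, e3]
  have hX := hray θ (by rw [abs_of_pos hθ0]) rfl
  have hY := hray (-θ) (by rw [abs_neg, abs_of_pos hθ0]) (by rw [Real.cos_neg])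
  rw [← hXdef] at hX
  rw [← hYdef] at hY
  have hsp : (1 / t) * (K * Real.exp 1 * ((1 / t) ^ m * (1 / t) ^ (α - β)) * (2 * θ))
      = 2 * θ * (K * Real.exp 1) * (t ^ (-p) * t⁻¹) := by
    have h1 : ((1:ℝ) / t) ^ m = (t ^ m)⁻¹ := by rw [one_div, inv_pow]
    have h2 : ((1:ℝ) / t) ^ (α - β) = (t ^ (α - β))⁻¹ := by
      rw [one_div, Real.inv_rpow ht0.le]
    have h3 : t ^ (-p) = (t ^ (m:ℕ))⁻¹ * (t ^ (α - β))⁻¹ := by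
      rw [show -p = (-(m:ℝ)) + (-(α - β)) by rw [hpdef]; ring, Real.rpow_add ht0,
        Real.rpow_neg ht0.le, Real.rpow_neg ht0.le, Real.rpow_natCast]
    rw [h1, h2, h3, one_div]
    ring
  have hfinal : t ^ (-p) * t⁻¹ = t ^ (-(m:ℝ) - (α - β + 1)) := by
    rw [← Real.rpow_neg_one t, ← Real.rpow_add ht0]
    congr 1
    rw [hpdef]; ring
  calc lam * ‖contourF a b μ α β lam θ m t‖
      = (1 / (2 * Real.pi)) * (lam * ‖Complex.exp ((θ:ℂ) * Complex.I) * X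
          - Complex.exp ((-θ:ℂ) * Complex.I) * Y + Complex.I / (t:ℂ) * Z‖) := by
        rw [contourF, norm_mul, habspref, ← hXdef, ← hYdef, ← hZdef]; ring
    _ ≤ (1 / (2 * Real.pi)) * (lam * (‖X‖ + ‖Y‖
          + (1 / t) * ‖Z‖)) := by
        apply mul_le_mul_of_nonneg_left _ (by positivity)
        exact mul_le_mul_of_nonneg_left htri hlam.le
    _ = (1 / (2 * Real.pi)) * ((lam * ‖X‖) + (lam * ‖Y‖)
          + (1 / t) * (lam * ‖Z‖)) := by ring
    _ ≤ (1 / (2 * Real.pi)) * (K * J * (t ^ (-p) * t⁻¹) + K * J * (t ^ (-p) * t⁻¹)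
          + (1 / t) * (K * Real.exp 1 * ((1 / t) ^ m * (1 / t) ^ (α - β)) * (2 * θ))) := by
        apply mul_le_mul_of_nonneg_left _ (by positivity)
        have hZ' : (1 / t) * (lam * ‖Z‖)
            ≤ (1 / t) * (K * Real.exp 1 * ((1 / t) ^ m * (1 / t) ^ (α - β)) * (2 * θ)) :=
          mul_le_mul_of_nonneg_left harc h1t0.le
        linarith
    _ = (2 * (K * J) + 2 * θ * (K * Real.exp 1)) / (2 * Real.pi) * (t ^ (-p) * t⁻¹) := by
        rw [hsp]; ring
    _ = (2 * (K * J) + 2 * θ * (K * Real.exp 1)) / (2 * Real.pi)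
          * t ^ (-(m:ℝ) - (α - β + 1)) := by rw [hfinal]
end
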